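/- arXiv:2203.00596 — 8 statements merged into one kernel-verified Lean document; each statement's English description precedes it below -/
import Mathlib

section
/- Let α > 0 and let {a_k} and {b_k} be sequences of positive real numbers indexed by integers N ≤ k ≤ M (with N, M possibly infinite). If {a_k} is strongly decreasing, i.e. sup{a_{k+1}/a_k : N < k < M} < 1, then the two quantities ∑_{k=N}^{M} a_k^α (∑_{i=N}^{k} b_i)^α and ∑_{k=N}^{M} a_k^α b_k^α are equivalent up to multiplicative constants depending only on α and the ratio bound (in particular, ∑_k a_k^α (∑_{i≤k} b_i)^α ≤ C ∑_k a_k^α b_k^α for some constant C depending only on α and sup a_{k+1}/a_k). -/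
open scoped ENNReal

/-- Strongly decreasing sequences: `∑ aₖ^α (∑_{i≤k} bᵢ)^α ≈ ∑ aₖ^α bₖ^α`,
with constants depending only on `α` and the strong-decrease constant `d`. -/
theorem stmt0 (α d : ℝ) (hα : 0 < α) (hd0 : 0 ≤ d) (hd1 : d < 1) :
    ∃ C : ℝ≥0∞, 0 < C ∧ C ≠ ⊤ ∧
      ∀ (S : Set ℤ) (a b : ℤ → ℝ≥0∞),
        (∀ ⦃j k l : ℤ⦄, j ∈ S → l ∈ S → j ≤ k → k ≤ l → k ∈ S) →
        (∀ k ∈ S, 0 < a k ∧ a k ≠ ⊤) →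
        (∀ k ∈ S, 0 < b k) →
        (∀ k : ℤ, k ∈ S → (k + 1) ∈ S → a (k + 1) ≤ ENNReal.ofReal d * a k) →
        (∑' k : S, a k.1 ^ α * (∑' i : {i : ℤ // i ∈ S ∧ i ≤ k.1}, b i.1) ^ α)
            ≤ C * ∑' k : S, a k.1 ^ α * b k.1 ^ α ∧
        (∑' k : S, a k.1 ^ α * b k.1 ^ α)
            ≤ C * ∑' k : S, a k.1 ^ α * (∑' i : {i : ℤ // i ∈ S ∧ i ≤ k.1}, b i.1) ^ α := by
  -- `t = √d`, `T = ofReal t`, `U = T ^ α`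
  classical
  set t : ℝ := Real.sqrt d with ht
  have ht0 : 0 ≤ t := Real.sqrt_nonneg d
  have ht1 : t < 1 := by
    rw [ht, show (1:ℝ) = Real.sqrt 1 by simp]
    exact Real.sqrt_lt_sqrt hd0 hd1
  set T : ℝ≥0∞ := ENNReal.ofReal t with hT
  have hT1 : T < 1 := by
    rw [hT]
    exact ENNReal.ofReal_lt_one.2 ht1
  have hTtop : T ≠ ⊤ := ENNReal.ofReal_ne_top
  set U : ℝ≥0∞ := T ^ α with hU
  have hU1 : U < 1 := by
    rw [hU]
    exact ENNReal.rpow_lt_one hT1 hα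
  -- the constant
  have hgT : (1 - T)⁻¹ ≠ ⊤ := by
    simp [tsub_eq_zero_iff_le, not_le, hT1]
  have hgT0 : (1 - T)⁻¹ ≠ 0 := by
    simp [ENNReal.sub_ne_top]
  have hgU : (1 - U)⁻¹ ≠ ⊤ := by
    simp [tsub_eq_zero_iff_le, not_le, hU1]
  have hgU0 : (1 - U)⁻¹ ≠ 0 := by
    simp [ENNReal.sub_ne_top]
  set C : ℝ≥0∞ := ((1 - T)⁻¹) ^ α * (1 - U)⁻¹ with hC
  have hC0 : 0 < C := by
    rw [hC]
    exact ENNReal.mul_pos (ENNReal.rpow_pos (pos_iff_ne_zero.2 hgT0) hgT).ne'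
      hgU0
  have hCtop : C ≠ ⊤ := by
    rw [hC]
    exact ENNReal.mul_ne_top (ENNReal.rpow_ne_top_of_nonneg hα.le hgT) hgU
  have hC1 : 1 ≤ C := by
    rw [hC]
    have h1 : (1:ℝ≥0∞) ≤ (1 - T)⁻¹ := ENNReal.one_le_inv.2 tsub_le_self
    have h2 : (1:ℝ≥0∞) ≤ (1 - U)⁻¹ := ENNReal.one_le_inv.2 tsub_le_self
    calc (1:ℝ≥0∞) = 1 ^ α * 1 := by simp
    _ ≤ ((1 - T)⁻¹) ^ α * (1 - U)⁻¹ :=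
      mul_le_mul' (ENNReal.rpow_le_rpow h1 hα.le) h2
  refine ⟨C, hC0, hCtop, fun S a b hS ha hb hab => ?_⟩
  -- geometric decay of `a`
  have key : ∀ (n : ℕ) (i : ℤ), i ∈ S → (i + n) ∈ S →
      a (i + n) ≤ (T * T) ^ n * a i := by
    intro n
    induction n with
    | zero => intro i hi _; simp
    | succ n ih =>
      intro i hi hin
      have hmem : (i + n) ∈ S := hS hi hin (by linarith [Int.natCast_nonneg n]) (by push_cast; linarith)
      have h1 : a (i + n + 1) ≤ ENNReal.ofReal d * a (i + n) := hab _ hmem (by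
        have : (i + n : ℤ) + 1 = i + (n + 1 : ℕ) := by push_cast; ring
        rw [this]; exact hin)
      have hTT : ENNReal.ofReal d = T * T := by
        rw [hT, ← ENNReal.ofReal_mul ht0, ht, Real.mul_self_sqrt hd0]
      calc a (i + (n + 1 : ℕ)) = a (i + n + 1) := by norm_num; ring_nf
      _ ≤ ENNReal.ofReal d * a (i + n) := h1
      _ ≤ (T * T) * ((T * T) ^ n * a i) := by
          rw [hTT]; exact mul_le_mul_right (ih i hi hmem) _
      _ = (T * T) ^ (n + 1) * a i := by ring
  have key' : ∀ i k : ℤ, i ∈ S → k ∈ S → i ≤ k →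
      a k ≤ T ^ (k - i).toNat * (T ^ (k - i).toNat * a i) := by
    intro i k hi hk hik
    have hn : k = i + ((k - i).toNat : ℤ) := by
      rw [Int.toNat_of_nonneg (by linarith)]; ring
    have := key (k - i).toNat i hi (by rw [← hn]; exact hk)
    rw [← hn] at this
    calc a k ≤ (T * T) ^ (k - i).toNat * a i := this
    _ = T ^ (k - i).toNat * (T ^ (k - i).toNat * a i) := by
      rw [mul_pow]; ring
  -- geometric sums over the index sets
  have geomT : ∀ (k : ℤ), (∑' i : {i : ℤ // i ∈ S ∧ i ≤ k}, T ^ (k - i.1).toNat)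
      ≤ (1 - T)⁻¹ := by
    intro k
    have hinj : Function.Injective
        (fun i : {i : ℤ // i ∈ S ∧ i ≤ k} => (k - i.1).toNat) := by
      intro x y hxy
      have hx := x.2.2; have hy := y.2.2
      have : k - x.1 = k - y.1 := by
        have := congrArg (fun n : ℕ => (n : ℤ)) hxy
        simpa [Int.toNat_of_nonneg (by linarith : (0:ℤ) ≤ k - x.1),
          Int.toNat_of_nonneg (by linarith : (0:ℤ) ≤ k - y.1)] using this
      ext; linarith
    calc (∑' i : {i : ℤ // i ∈ S ∧ i ≤ k}, T ^ (k - i.1).toNat)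
        ≤ ∑' n : ℕ, T ^ n :=
      ENNReal.tsum_comp_le_tsum_of_injective hinj (fun n : ℕ => T ^ n)
    _ = (1 - T)⁻¹ := ENNReal.tsum_geometric T
  -- main pointwise bound: for `k ∈ S`,
  -- `(a k * ∑_{i ≤ k} b i) ^ α ≤ (1-T)⁻ᵅ * ∑_{i ≤ k} U^(k-i) (a i * b i)^α`
  have main : ∀ k : ℤ, k ∈ S →
      a k ^ α * (∑' i : {i : ℤ // i ∈ S ∧ i ≤ k}, b i.1) ^ α ≤
      ((1 - T)⁻¹) ^ α *
        ∑' i : {i : ℤ // i ∈ S ∧ i ≤ k}, U ^ (k - i.1).toNat * (a i.1 * b i.1) ^ α := by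
    intro k hk
    set M : ℝ≥0∞ := ⨆ i : {i : ℤ // i ∈ S ∧ i ≤ k}, T ^ (k - i.1).toNat * (a i.1 * b i.1)
      with hM
    have step1 : a k * (∑' i : {i : ℤ // i ∈ S ∧ i ≤ k}, b i.1) ≤ (1 - T)⁻¹ * M := by
      rw [← ENNReal.tsum_mul_left]
      calc (∑' i : {i : ℤ // i ∈ S ∧ i ≤ k}, a k * b i.1)
          ≤ ∑' i : {i : ℤ // i ∈ S ∧ i ≤ k}, T ^ (k - i.1).toNat * M := by
            refine ENNReal.tsum_le_tsum fun i => ?_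
            calc a k * b i.1
                ≤ (T ^ (k - i.1).toNat * (T ^ (k - i.1).toNat * a i.1)) * b i.1 :=
                  mul_le_mul_left (key' i.1 k i.2.1 hk i.2.2) _
            _ = T ^ (k - i.1).toNat * (T ^ (k - i.1).toNat * (a i.1 * b i.1)) := by ring
            _ ≤ T ^ (k - i.1).toNat * M :=
                  mul_le_mul_right (le_iSup (fun j : {i : ℤ // i ∈ S ∧ i ≤ k} =>
                    T ^ (k - j.1).toNat * (a j.1 * b j.1)) i) _
      _ = (∑' i : {i : ℤ // i ∈ S ∧ i ≤ k}, T ^ (k - i.1).toNat) * M :=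
            ENNReal.tsum_mul_right
      _ ≤ (1 - T)⁻¹ * M := mul_le_mul_left (geomT k) _
    have step2 : M ^ α ≤
        ∑' i : {i : ℤ // i ∈ S ∧ i ≤ k}, U ^ (k - i.1).toNat * (a i.1 * b i.1) ^ α := by
      have hMα : M ^ α = ⨆ i : {i : ℤ // i ∈ S ∧ i ≤ k},
          (T ^ (k - i.1).toNat * (a i.1 * b i.1)) ^ α := by
        rw [hM]
        exact (ENNReal.orderIsoRpow α hα).map_iSup _
      rw [hMα]
      refine iSup_le fun i => ?_
      have : (T ^ (k - i.1).toNat * (a i.1 * b i.1)) ^ α =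
          U ^ (k - i.1).toNat * (a i.1 * b i.1) ^ α := by
        rw [ENNReal.mul_rpow_of_nonneg _ _ hα.le, hU, ← ENNReal.rpow_natCast T,
          ← ENNReal.rpow_natCast (T ^ α), ← ENNReal.rpow_mul, ← ENNReal.rpow_mul,
          mul_comm α (((k - i.1).toNat : ℕ) : ℝ)]
      rw [this]
      exact ENNReal.le_tsum i
    calc a k ^ α * (∑' i : {i : ℤ // i ∈ S ∧ i ≤ k}, b i.1) ^ α
        = (a k * ∑' i : {i : ℤ // i ∈ S ∧ i ≤ k}, b i.1) ^ α :=
          (ENNReal.mul_rpow_of_nonneg _ _ hα.le).symm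
    _ ≤ ((1 - T)⁻¹ * M) ^ α := ENNReal.rpow_le_rpow step1 hα.le
    _ = ((1 - T)⁻¹) ^ α * M ^ α := ENNReal.mul_rpow_of_nonneg _ _ hα.le
    _ ≤ _ := mul_le_mul_right step2 _
  -- the double-sum / Fubini bound
  set F : ℤ → ℤ → ℝ≥0∞ := fun k i =>
    if k ∈ S ∧ i ∈ S ∧ i ≤ k then U ^ (k - i).toNat * (a i * b i) ^ α else 0 with hF
  have fub : (∑' k : S, ∑' i : {i : ℤ // i ∈ S ∧ i ≤ k.1},
      U ^ (k.1 - i.1).toNat * (a i.1 * b i.1) ^ α) ≤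
      (1 - U)⁻¹ * ∑' i : S, a i.1 ^ α * b i.1 ^ α := by
    have h1 : ∀ k : S, (∑' i : {i : ℤ // i ∈ S ∧ i ≤ k.1},
        U ^ (k.1 - i.1).toNat * (a i.1 * b i.1) ^ α) = ∑' i : ℤ, F k.1 i := by
      intro k
      refine (tsum_subtype {j : ℤ | j ∈ S ∧ j ≤ k.1}
        fun i => U ^ (k.1 - i).toNat * (a i * b i) ^ α).trans ?_
      refine tsum_congr fun i => ?_
      by_cases h : i ∈ S ∧ i ≤ k.1
      · simp [Set.indicator_of_mem (show i ∈ {j : ℤ | j ∈ S ∧ j ≤ k.1} from h), hF,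
          h.1, h.2, k.2]
      · simp [Set.indicator_of_notMem (show i ∉ {j : ℤ | j ∈ S ∧ j ≤ k.1} from h), hF, h]
    calc (∑' k : S, ∑' i : {i : ℤ // i ∈ S ∧ i ≤ k.1},
        U ^ (k.1 - i.1).toNat * (a i.1 * b i.1) ^ α)
        = ∑' k : S, ∑' i : ℤ, F k.1 i := tsum_congr h1
    _ ≤ ∑' k : ℤ, ∑' i : ℤ, F k i :=
        ENNReal.tsum_comp_le_tsum_of_injective Subtype.val_injective
          (fun k : ℤ => ∑' i : ℤ, F k i)
    _ = ∑' i : ℤ, ∑' k : ℤ, F k i := ENNReal.tsum_comm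
    _ ≤ ∑' i : ℤ, (if i ∈ S then (1 - U)⁻¹ * (a i ^ α * b i ^ α) else 0) := by
        refine ENNReal.tsum_le_tsum fun i => ?_
        by_cases hi : i ∈ S
        · simp only [hi, if_true]
          have h2 : ∀ k : ℤ, F k i ≤
              (fun k : ℤ => if i ≤ k then U ^ (k - i).toNat * (a i * b i) ^ α else 0) k := by
            intro k
            by_cases h : k ∈ S ∧ i ∈ S ∧ i ≤ k
            · simp [hF, h, h.2.2]
            · simp only [hF, h, if_neg h]
              exact zero_le
          calc (∑' k : ℤ, F k i)
              ≤ ∑' k : ℤ, (if i ≤ k then U ^ (k - i).toNat * (a i * b i) ^ α else 0) :=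
                ENNReal.tsum_le_tsum h2
          _ ≤ ∑' n : ℕ, U ^ n * (a i * b i) ^ α := by
              rw [← tsum_subtype_eq_of_support_subset
                (s := {k : ℤ | i ≤ k}) (by
                  intro k hk
                  simp only [Function.mem_support] at hk
                  by_contra hik
                  simp only [Set.mem_setOf_eq] at hik
                  exact hk (if_neg hik))]
              have hinj : Function.Injective
                  (fun k : {k : ℤ // k ∈ {j : ℤ | i ≤ j}} => (k.1 - i).toNat) := by
                intro x y hxy
                have hx := x.2; have hy := y.2
                simp only [Set.mem_setOf_eq] at hx hy
                have : x.1 - i = y.1 - i := by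
                  have := congrArg (fun n : ℕ => (n : ℤ)) hxy
                  simpa [Int.toNat_of_nonneg (by linarith : (0:ℤ) ≤ x.1 - i),
                    Int.toNat_of_nonneg (by linarith : (0:ℤ) ≤ y.1 - i)] using this
                ext; linarith
              calc (∑' k : {k : ℤ // k ∈ {j : ℤ | i ≤ j}},
                  (if i ≤ k.1 then U ^ (k.1 - i).toNat * (a i * b i) ^ α else 0))
                  = ∑' k : {k : ℤ // k ∈ {j : ℤ | i ≤ j}},
                    U ^ (k.1 - i).toNat * (a i * b i) ^ α := by
                    refine tsum_congr fun k => ?_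
                    have hk := k.2
                    simp only [Set.mem_setOf_eq] at hk
                    simp [hk]
              _ ≤ ∑' n : ℕ, U ^ n * (a i * b i) ^ α :=
                  ENNReal.tsum_comp_le_tsum_of_injective hinj
                    (fun n : ℕ => U ^ n * (a i * b i) ^ α)
          _ = (1 - U)⁻¹ * (a i ^ α * b i ^ α) := by
              rw [ENNReal.tsum_mul_right, ENNReal.tsum_geometric,
                ENNReal.mul_rpow_of_nonneg _ _ hα.le]
        · have : ∀ k : ℤ, F k i = 0 := fun k => by simp [hF, hi]
          simp [this, hi]
    _ = (1 - U)⁻¹ * ∑' i : S, a i.1 ^ α * b i.1 ^ α := by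
        rw [← ENNReal.tsum_mul_left]
        rw [tsum_subtype S (fun i => (1 - U)⁻¹ * (a i ^ α * b i ^ α))]
        refine tsum_congr fun i => ?_
        by_cases hi : i ∈ S <;> simp [hi]
  constructor
  · -- hard direction
    calc (∑' k : S, a k.1 ^ α * (∑' i : {i : ℤ // i ∈ S ∧ i ≤ k.1}, b i.1) ^ α)
        ≤ ∑' k : S, ((1 - T)⁻¹) ^ α *
          ∑' i : {i : ℤ // i ∈ S ∧ i ≤ k.1}, U ^ (k.1 - i.1).toNat * (a i.1 * b i.1) ^ α :=
          ENNReal.tsum_le_tsum fun k => main k.1 k.2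
    _ = ((1 - T)⁻¹) ^ α * ∑' k : S,
          ∑' i : {i : ℤ // i ∈ S ∧ i ≤ k.1}, U ^ (k.1 - i.1).toNat * (a i.1 * b i.1) ^ α :=
          ENNReal.tsum_mul_left
    _ ≤ ((1 - T)⁻¹) ^ α * ((1 - U)⁻¹ * ∑' i : S, a i.1 ^ α * b i.1 ^ α) :=
          mul_le_mul_right fub _
    _ = C * ∑' k : S, a k.1 ^ α * b k.1 ^ α := by rw [hC, mul_assoc]
  · -- easy direction
    calc (∑' k : S, a k.1 ^ α * b k.1 ^ α)
        ≤ ∑' k : S, a k.1 ^ α * (∑' i : {i : ℤ // i ∈ S ∧ i ≤ k.1}, b i.1) ^ α := by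
          refine ENNReal.tsum_le_tsum fun k => ?_
          refine mul_le_mul_right (ENNReal.rpow_le_rpow ?_ hα.le) _
          exact ENNReal.le_tsum (⟨k.1, k.2, le_refl k.1⟩ : {i : ℤ // i ∈ S ∧ i ≤ k.1})
    _ ≤ C * ∑' k : S, a k.1 ^ α * (∑' i : {i : ℤ // i ∈ S ∧ i ≤ k.1}, b i.1) ^ α :=
          le_mul_of_one_le_left zero_le hC1
end

section
/- Let α > 0 and let {a_k} and {b_k} be sequences of positive real numbers indexed by integers N ≤ k ≤ M. If {a_k} is strongly increasing, i.e. inf{a_{k+1}/a_k : N < k < M} > 1, then ∑_{k=N}^{M} a_k^α (∑_{i=k}^{M} b_i)^α is comparable (up to constants depending only on α and the strong-increase constant) to ∑_{k=N}^{M} a_k^α b_k^α. -/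
open scoped ENNReal Classical

namespace Stmt1Aux


lemma rpow_iSup {ι : Sort*} {α : ℝ} (hα : 0 < α) (f : ι → ℝ≥0∞) :
    (⨆ i, f i) ^ α = ⨆ i, (f i) ^ α := by
  have h := (ENNReal.orderIsoRpow α hα).map_iSup f
  simp only [ENNReal.orderIsoRpow_apply] at h
  exact h

lemma split {α : ℝ} (hα : 0 < α) {ε : ℝ} (hε : 0 < ε) (x y : ℝ≥0∞) :
    (x + y) ^ α ≤ ENNReal.ofReal ((1 + ε) ^ α) * x ^ α
      + ENNReal.ofReal ((1 + ε⁻¹) ^ α) * y ^ α := by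
  rcases le_or_gt y (ENNReal.ofReal ε * x) with h | h
  · have h1 : x + y ≤ ENNReal.ofReal (1 + ε) * x := by
      rw [ENNReal.ofReal_add zero_le_one hε.le, ENNReal.ofReal_one, add_mul, one_mul]
      exact add_le_add le_rfl h
    calc (x + y) ^ α ≤ (ENNReal.ofReal (1 + ε) * x) ^ α :=
          ENNReal.rpow_le_rpow h1 hα.le
      _ = ENNReal.ofReal ((1 + ε) ^ α) * x ^ α := by
          rw [ENNReal.mul_rpow_of_nonneg _ _ hα.le,
            ← ENNReal.ofReal_rpow_of_pos (show (0:ℝ) < 1 + ε by linarith)]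
      _ ≤ _ := le_add_right le_rfl
  · have hx : x ≤ ENNReal.ofReal ε⁻¹ * y := by
      rw [ENNReal.ofReal_inv_of_pos hε]
      calc x = (ENNReal.ofReal ε)⁻¹ * (ENNReal.ofReal ε * x) := by
            rw [← mul_assoc, ENNReal.inv_mul_cancel (by simpa using hε) ENNReal.ofReal_ne_top,
              one_mul]
        _ ≤ (ENNReal.ofReal ε)⁻¹ * y := mul_le_mul_right h.le _
    have h1 : x + y ≤ ENNReal.ofReal (1 + ε⁻¹) * y := by
      rw [ENNReal.ofReal_add zero_le_one (by positivity), ENNReal.ofReal_one, add_mul, one_mul,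
        add_comm x y]
      exact add_le_add le_rfl hx
    calc (x + y) ^ α ≤ (ENNReal.ofReal (1 + ε⁻¹) * y) ^ α :=
          ENNReal.rpow_le_rpow h1 hα.le
      _ = ENNReal.ofReal ((1 + ε⁻¹) ^ α) * y ^ α := by
          rw [ENNReal.mul_rpow_of_nonneg _ _ hα.le,
            ← ENNReal.ofReal_rpow_of_pos (show (0:ℝ) < 1 + ε⁻¹ by positivity)]
      _ ≤ _ := le_add_left le_rfl

lemma sum_filter_le_tsum (p : ℤ → Prop) [DecidablePred p] (f : ℤ → ℝ≥0∞) (G : Finset ℤ) :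
    ∑ i ∈ G.filter p, f i ≤ ∑' i : {i : ℤ // p i}, f i.1 := by
  classical
  calc ∑ i ∈ G.filter p, f i
      = ∑ i ∈ (G.filter p).attach, f i.1 := (Finset.sum_attach _ _).symm
    _ = ∑ j ∈ (G.filter p).attach.image
          (fun x => (⟨x.1, (Finset.mem_filter.mp x.2).2⟩ : {i : ℤ // p i})), f j.1 := by
        rw [Finset.sum_image]
        intro x _ y _ hxy
        exact Subtype.ext (by simpa using hxy)
    _ ≤ ∑' j : {i : ℤ // p i}, f j.1 := ENNReal.sum_le_tsum _




noncomputable def th (α d : ℝ) : ℝ := ((d + 1) / (2 * d)) ^ α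
noncomputable def cc (α d : ℝ) : ℝ := th α d / (1 - th α d)
noncomputable def Kc (α d : ℝ) : ℝ := (1 + ((d - 1) / 2)⁻¹) ^ α
noncomputable def C0 (α d : ℝ) : ℝ := (1 + cc α d) * Kc α d

variable {α d : ℝ}

lemma th_pos (hα : 0 < α) (hd1 : 1 < d) : 0 < th α d :=
  Real.rpow_pos_of_pos (by positivity) _

lemma th_lt_one (hα : 0 < α) (hd1 : 1 < d) : th α d < 1 := by
  have h : (d + 1) / (2 * d) < 1 := by
    rw [div_lt_one (by linarith)]; linarith
  exact Real.rpow_lt_one (by positivity) h hα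

lemma cc_nonneg (hα : 0 < α) (hd1 : 1 < d) : 0 ≤ cc α d :=
  div_nonneg (th_pos hα hd1).le (by linarith [th_lt_one hα hd1])

lemma Kc_one_le (hα : 0 < α) (hd1 : 1 < d) : 1 ≤ Kc α d := by
  have : (1:ℝ) = 1 ^ α := (Real.one_rpow α).symm
  rw [this]
  exact Real.rpow_le_rpow zero_le_one (by nlinarith [inv_pos.mpr (show (0:ℝ) < (d-1)/2 by linarith)]) hα.le

lemma one_add_cc_le_C0 (hα : 0 < α) (hd1 : 1 < d) : 1 + cc α d ≤ C0 α d := by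
  have h1 : 0 ≤ 1 + cc α d := by linarith [cc_nonneg hα hd1]
  calc 1 + cc α d = (1 + cc α d) * 1 := by ring
    _ ≤ C0 α d := by unfold C0; exact mul_le_mul_of_nonneg_left (Kc_one_le hα hd1) h1

lemma absorb_eq (hα : 0 < α) (hd1 : 1 < d) :
    (1 + cc α d) * (((d + 1) / 2) ^ α * (1 / d) ^ α) = cc α d := by
  have h1 : ((d + 1) / 2 : ℝ) ^ α * (1 / d) ^ α = th α d := by
    rw [← Real.mul_rpow (by linarith) (by positivity)]
    unfold th
    congr 1
    field_simp
  rw [h1]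
  have h2 : 1 - th α d ≠ 0 := by linarith [th_lt_one hα hd1]
  unfold cc
  field_simp
  ring

-- chain
lemma chain (S : Set ℤ) (a : ℤ → ℝ≥0∞)
    (hS : ∀ ⦃j k l : ℤ⦄, j ∈ S → l ∈ S → j ≤ k → k ≤ l → k ∈ S)
    (hstep : ∀ k : ℤ, k ∈ S → (k + 1) ∈ S → ENNReal.ofReal d * a k ≤ a (k + 1)) :
    ∀ (n : ℕ) (j : ℤ), j ∈ S → (j + n) ∈ S → ENNReal.ofReal d ^ n * a j ≤ a (j + n) := by
  intro n
  induction n with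
  | zero => intro j hj _; simp
  | succ n ih =>
    intro j hj hjn
    have hn1 : j + (n + 1 : ℕ) = (j + n) + 1 := by push_cast; ring
    have h1 : (j + n : ℤ) ∈ S := hS hj (hn1 ▸ hjn) (by omega) (by omega)
    have h2 : ((j + n : ℤ) + 1) ∈ S := hn1 ▸ hjn
    calc ENNReal.ofReal d ^ (n + 1) * a j
        = ENNReal.ofReal d * (ENNReal.ofReal d ^ n * a j) := by ring
      _ ≤ ENNReal.ofReal d * a (j + n) := mul_le_mul_right (ih j hj h1) _
      _ ≤ a ((j + n) + 1) := hstep _ h1 h2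
      _ = a (j + (n + 1 : ℕ)) := by rw [hn1]

lemma step_lt (hd1 : 1 < d) (S : Set ℤ) (a : ℤ → ℝ≥0∞)
    (hS : ∀ ⦃j k l : ℤ⦄, j ∈ S → l ∈ S → j ≤ k → k ≤ l → k ∈ S)
    (hstep : ∀ k : ℤ, k ∈ S → (k + 1) ∈ S → ENNReal.ofReal d * a k ≤ a (k + 1))
    {j k : ℤ} (hj : j ∈ S) (hk : k ∈ S) (hjk : j < k) :
    ENNReal.ofReal d * a j ≤ a k := by
  have hn : k = j + ((k - j).toNat : ℤ) := by omega
  have hne : (k - j).toNat ≠ 0 := by omega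
  have h1 : ENNReal.ofReal d ≤ ENNReal.ofReal d ^ (k - j).toNat :=
    le_self_pow₀ (by simpa using hd1.le) hne
  calc ENNReal.ofReal d * a j ≤ ENNReal.ofReal d ^ (k - j).toNat * a j :=
        mul_le_mul_left h1 _
    _ ≤ a (j + ((k - j).toNat : ℤ)) := chain S a hS hstep _ j hj (hn ▸ hk)
    _ = a k := by rw [← hn]




lemma core_aux (hα : 0 < α) (hd1 : 1 < d) (S : Set ℤ) (a b : ℤ → ℝ≥0∞)
    (hS : ∀ ⦃j k l : ℤ⦄, j ∈ S → l ∈ S → j ≤ k → k ≤ l → k ∈ S)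
    (hstep : ∀ k : ℤ, k ∈ S → (k + 1) ∈ S → ENNReal.ofReal d * a k ≤ a (k + 1)) :
    ∀ (n : ℕ) (H : Finset ℤ), H.card = n → ↑H ⊆ S → ∀ (hne : H.Nonempty),
      (∑ k ∈ H, a k ^ α * (∑ i ∈ H.filter (k ≤ ·), b i) ^ α)
        + ENNReal.ofReal (cc α d) * (a (H.min' hne) ^ α * (∑ i ∈ H, b i) ^ α)
      ≤ ENNReal.ofReal (C0 α d) * ∑ k ∈ H, a k ^ α * b k ^ α := by
  intro n
  induction n using Nat.strong_induction_on with
  | _ n ih =>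
  intro H hcard hHS hne
  set m := H.min' hne with hm_def
  have hmH : m ∈ H := H.min'_mem hne
  have hmin : ∀ k ∈ H, m ≤ k := fun k hk => H.min'_le k hk
  have hfiltH : H.filter (m ≤ ·) = H := Finset.filter_true_of_mem (fun k hk => hmin k hk)
  have hfilt' : ∀ k ∈ H.erase m, H.filter (k ≤ ·) = (H.erase m).filter (k ≤ ·) := by
    intro k hk
    have hkm : ¬ (k ≤ m) := by
      have h1 : m ≤ k := hmin k (Finset.mem_of_mem_erase hk)
      have h2 : k ≠ m := Finset.ne_of_mem_erase hk
      omega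
    have : (H.erase m).filter (k ≤ ·) = H.filter (k ≤ ·) := by
      rw [Finset.filter_erase]
      exact Finset.erase_eq_of_notMem (by simp [hkm])
    exact this.symm
  have e1 : ∑ k ∈ H, a k ^ α * (∑ i ∈ H.filter (k ≤ ·), b i) ^ α
      = a m ^ α * (∑ i ∈ H, b i) ^ α
        + ∑ k ∈ H.erase m, a k ^ α * (∑ i ∈ (H.erase m).filter (k ≤ ·), b i) ^ α := by
    rw [← Finset.add_sum_erase H _ hmH]
    congr 1
    · rw [hfiltH]
    · exact Finset.sum_congr rfl fun k hk => by rw [hfilt' k hk]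
  have e2 : ∑ k ∈ H, a k ^ α * b k ^ α
      = a m ^ α * b m ^ α + ∑ k ∈ H.erase m, a k ^ α * b k ^ α :=
    (Finset.add_sum_erase H _ hmH).symm
  have e3 : ∑ i ∈ H, b i = b m + ∑ i ∈ H.erase m, b i :=
    (Finset.add_sum_erase H _ hmH).symm
  rw [e1, e2]
  rcases Finset.eq_empty_or_nonempty (H.erase m) with he | hne'
  · -- singleton case
    rw [he] at e3 ⊢
    simp only [Finset.sum_empty, add_zero] at e3 ⊢
    rw [e3]
    have hco : (1 : ℝ≥0∞) + ENNReal.ofReal (cc α d) ≤ ENNReal.ofReal (C0 α d) := by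
      rw [← ENNReal.ofReal_one, ← ENNReal.ofReal_add zero_le_one (cc_nonneg hα hd1)]
      exact ENNReal.ofReal_le_ofReal (one_add_cc_le_C0 hα hd1)
    calc a m ^ α * b m ^ α + ENNReal.ofReal (cc α d) * (a m ^ α * b m ^ α)
        = (1 + ENNReal.ofReal (cc α d)) * (a m ^ α * b m ^ α) := by ring
      _ ≤ ENNReal.ofReal (C0 α d) * (a m ^ α * b m ^ α) := mul_le_mul_left hco _
  · -- inductive case
    set m' := (H.erase m).min' hne' with hm'_def
    have hm'H' : m' ∈ H.erase m := Finset.min'_mem _ hne'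
    have hm'H : m' ∈ H := Finset.mem_of_mem_erase hm'H'
    have hmm' : m < m' :=
      lt_of_le_of_ne (hmin m' hm'H) (Ne.symm (Finset.ne_of_mem_erase hm'H'))
    have hmS : m ∈ S := hHS hmH
    have hm'S : m' ∈ S := hHS hm'H
    have hstep' : ENNReal.ofReal d * a m ≤ a m' := step_lt hd1 S a hS hstep hmS hm'S hmm'
    have hd0 : (0:ℝ) < d := by linarith
    have ham : a m ^ α ≤ ENNReal.ofReal ((1/d) ^ α) * a m' ^ α := by
      have h2 : a m ≤ ENNReal.ofReal (1/d) * a m' := by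
        rw [one_div, ENNReal.ofReal_inv_of_pos hd0]
        calc a m = (ENNReal.ofReal d)⁻¹ * (ENNReal.ofReal d * a m) := by
              rw [← mul_assoc, ENNReal.inv_mul_cancel (by simpa using hd0) ENNReal.ofReal_ne_top,
                one_mul]
          _ ≤ (ENNReal.ofReal d)⁻¹ * a m' := mul_le_mul_right hstep' _
      calc a m ^ α ≤ (ENNReal.ofReal (1/d) * a m') ^ α := ENNReal.rpow_le_rpow h2 hα.le
        _ = ENNReal.ofReal ((1/d) ^ α) * a m' ^ α := by
          rw [ENNReal.mul_rpow_of_nonneg _ _ hα.le,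
            ← ENNReal.ofReal_rpow_of_pos (by positivity)]
    set ε : ℝ := (d - 1) / 2 with hε_def
    have hε : 0 < ε := by rw [hε_def]; linarith
    have h1ε : 1 + ε = (d + 1) / 2 := by rw [hε_def]; ring
    have hKc : ENNReal.ofReal ((1 + ε⁻¹) ^ α) = ENNReal.ofReal (Kc α d) := by
      rw [hε_def]; rfl
    have hsplit : (∑ i ∈ H, b i) ^ α
        ≤ ENNReal.ofReal ((1 + ε) ^ α) * (∑ i ∈ H.erase m, b i) ^ α
          + ENNReal.ofReal (Kc α d) * b m ^ α := by
      rw [e3, add_comm (b m), ← hKc]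
      exact split hα hε _ _
    -- coefficient identities
    have hccnn := cc_nonneg hα hd1
    have hco1 : (1 + ENNReal.ofReal (cc α d)) * ENNReal.ofReal ((1 + ε) ^ α)
        * ENNReal.ofReal ((1/d) ^ α) = ENNReal.ofReal (cc α d) := by
      rw [← ENNReal.ofReal_one, ← ENNReal.ofReal_add zero_le_one hccnn,
        ← ENNReal.ofReal_mul (by positivity), ← ENNReal.ofReal_mul (by positivity)]
      congr 1
      calc (1 + cc α d) * (1 + ε) ^ α * (1/d) ^ α
          = (1 + cc α d) * (((d + 1) / 2) ^ α * (1/d) ^ α) := by rw [h1ε]; ring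
        _ = cc α d := absorb_eq hα hd1
    have hco2 : (1 + ENNReal.ofReal (cc α d)) * ENNReal.ofReal (Kc α d)
        = ENNReal.ofReal (C0 α d) := by
      rw [← ENNReal.ofReal_one, ← ENNReal.ofReal_add zero_le_one hccnn,
        ← ENNReal.ofReal_mul (by linarith)]
      rfl
    -- the key inequality
    have KEY : a m ^ α * (∑ i ∈ H, b i) ^ α
          + ENNReal.ofReal (cc α d) * (a m ^ α * (∑ i ∈ H, b i) ^ α)
        ≤ ENNReal.ofReal (cc α d) * (a m' ^ α * (∑ i ∈ H.erase m, b i) ^ α)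
          + ENNReal.ofReal (C0 α d) * (a m ^ α * b m ^ α) := by
      calc a m ^ α * (∑ i ∈ H, b i) ^ α
            + ENNReal.ofReal (cc α d) * (a m ^ α * (∑ i ∈ H, b i) ^ α)
          = (1 + ENNReal.ofReal (cc α d)) * (a m ^ α * (∑ i ∈ H, b i) ^ α) := by ring
        _ ≤ (1 + ENNReal.ofReal (cc α d)) * (a m ^ α
              * (ENNReal.ofReal ((1 + ε) ^ α) * (∑ i ∈ H.erase m, b i) ^ α
                + ENNReal.ofReal (Kc α d) * b m ^ α)) :=
            mul_le_mul_right (mul_le_mul_right hsplit _) _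
        _ = (1 + ENNReal.ofReal (cc α d)) * ENNReal.ofReal ((1 + ε) ^ α)
              * (a m ^ α * (∑ i ∈ H.erase m, b i) ^ α)
            + (1 + ENNReal.ofReal (cc α d)) * ENNReal.ofReal (Kc α d)
              * (a m ^ α * b m ^ α) := by ring
        _ ≤ (1 + ENNReal.ofReal (cc α d)) * ENNReal.ofReal ((1 + ε) ^ α)
              * ((ENNReal.ofReal ((1/d) ^ α) * a m' ^ α) * (∑ i ∈ H.erase m, b i) ^ α)
            + (1 + ENNReal.ofReal (cc α d)) * ENNReal.ofReal (Kc α d)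
              * (a m ^ α * b m ^ α) := by
            gcongr
        _ = ((1 + ENNReal.ofReal (cc α d)) * ENNReal.ofReal ((1 + ε) ^ α)
              * ENNReal.ofReal ((1/d) ^ α)) * (a m' ^ α * (∑ i ∈ H.erase m, b i) ^ α)
            + ((1 + ENNReal.ofReal (cc α d)) * ENNReal.ofReal (Kc α d))
              * (a m ^ α * b m ^ α) := by ring
        _ = _ := by rw [hco1, hco2]
    -- apply induction hypothesis
    have hlt : (H.erase m).card < n := by rw [← hcard]; exact Finset.card_erase_lt_of_mem hmH
    have IH := ih (H.erase m).card hlt (H.erase m) rfl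
      (fun x hx => hHS (Finset.mem_coe.mpr (Finset.mem_of_mem_erase (Finset.mem_coe.mp hx)))) hne'
    rw [← hm'_def] at IH
    calc (a m ^ α * (∑ i ∈ H, b i) ^ α
            + ∑ k ∈ H.erase m, a k ^ α * (∑ i ∈ (H.erase m).filter (k ≤ ·), b i) ^ α)
          + ENNReal.ofReal (cc α d) * (a m ^ α * (∑ i ∈ H, b i) ^ α)
        = (a m ^ α * (∑ i ∈ H, b i) ^ α
            + ENNReal.ofReal (cc α d) * (a m ^ α * (∑ i ∈ H, b i) ^ α))
          + ∑ k ∈ H.erase m, a k ^ α * (∑ i ∈ (H.erase m).filter (k ≤ ·), b i) ^ α := by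
          ring
      _ ≤ (ENNReal.ofReal (cc α d) * (a m' ^ α * (∑ i ∈ H.erase m, b i) ^ α)
            + ENNReal.ofReal (C0 α d) * (a m ^ α * b m ^ α))
          + ∑ k ∈ H.erase m, a k ^ α * (∑ i ∈ (H.erase m).filter (k ≤ ·), b i) ^ α :=
          add_le_add KEY le_rfl
      _ = ((∑ k ∈ H.erase m, a k ^ α * (∑ i ∈ (H.erase m).filter (k ≤ ·), b i) ^ α)
            + ENNReal.ofReal (cc α d) * (a m' ^ α * (∑ i ∈ H.erase m, b i) ^ α))
          + ENNReal.ofReal (C0 α d) * (a m ^ α * b m ^ α) := by ring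
      _ ≤ ENNReal.ofReal (C0 α d) * (∑ k ∈ H.erase m, a k ^ α * b k ^ α)
          + ENNReal.ofReal (C0 α d) * (a m ^ α * b m ^ α) := add_le_add IH le_rfl
      _ = ENNReal.ofReal (C0 α d) * (a m ^ α * b m ^ α
            + ∑ k ∈ H.erase m, a k ^ α * b k ^ α) := by ring

lemma core (hα : 0 < α) (hd1 : 1 < d) (S : Set ℤ) (a b : ℤ → ℝ≥0∞)
    (hS : ∀ ⦃j k l : ℤ⦄, j ∈ S → l ∈ S → j ≤ k → k ≤ l → k ∈ S)
    (hstep : ∀ k : ℤ, k ∈ S → (k + 1) ∈ S → ENNReal.ofReal d * a k ≤ a (k + 1))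
    (H : Finset ℤ) (hHS : ↑H ⊆ S) :
    ∑ k ∈ H, a k ^ α * (∑ i ∈ H.filter (k ≤ ·), b i) ^ α
      ≤ ENNReal.ofReal (C0 α d) * ∑ k ∈ H, a k ^ α * b k ^ α := by
  rcases Finset.eq_empty_or_nonempty H with he | hne
  · simp [he]
  · exact le_trans (le_add_right le_rfl)
      (core_aux hα hd1 S a b hS hstep H.card H rfl hHS hne)


lemma forward (hα : 0 < α) (hd1 : 1 < d) (S : Set ℤ) (a b : ℤ → ℝ≥0∞)
    (hS : ∀ ⦃j k l : ℤ⦄, j ∈ S → l ∈ S → j ≤ k → k ≤ l → k ∈ S)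
    (hstep : ∀ k : ℤ, k ∈ S → (k + 1) ∈ S → ENNReal.ofReal d * a k ≤ a (k + 1)) :
    (∑' k : S, a k.1 ^ α * (∑' i : {i : ℤ // i ∈ S ∧ k.1 ≤ i}, b i.1) ^ α)
      ≤ ENNReal.ofReal (C0 α d) * ∑' k : S, a k.1 ^ α * b k.1 ^ α := by
  classical
  rw [ENNReal.tsum_eq_iSup_sum]
  apply iSup_le
  intro F
  set u : ↥S → Finset ℤ → ℝ≥0∞ :=
    fun k G => ∑ i ∈ G.filter (fun i => i ∈ S ∧ k.1 ≤ i), b i with hu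
  have hu_mono : ∀ k : ↥S, Monotone (u k) := by
    intro k G G' hGG'
    exact Finset.sum_le_sum_of_subset (Finset.filter_subset_filter _ hGG')
  have hT : ∀ k : ↥S, (∑' i : {i : ℤ // i ∈ S ∧ k.1 ≤ i}, b i.1) = ⨆ G : Finset ℤ, u k G := by
    intro k
    apply le_antisymm
    · rw [ENNReal.tsum_eq_iSup_sum]
      apply iSup_le
      intro G'
      refine le_iSup_of_le (G'.image Subtype.val) ?_
      have h1 : ∑ j ∈ G'.image Subtype.val, b j = ∑ i ∈ G', b i.1 :=
        Finset.sum_image (fun x _ y _ h => Subtype.ext h)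
      rw [← h1, hu]
      show ∑ j ∈ G'.image Subtype.val, b j
        ≤ ∑ i ∈ (G'.image Subtype.val).filter (fun i => i ∈ S ∧ k.1 ≤ i), b i
      apply Finset.sum_le_sum_of_subset
      intro x hx
      rw [Finset.mem_filter]
      obtain ⟨y, hy, rfl⟩ := Finset.mem_image.mp hx
      exact ⟨hx, y.2⟩
    · refine iSup_le fun G => ?_
      rw [hu]
      beta_reduce
      exact sum_filter_le_tsum (fun i => i ∈ S ∧ k.1 ≤ i) b G
  have hswap : ∑ k ∈ F, a k.1 ^ α * (∑' i : {i : ℤ // i ∈ S ∧ k.1 ≤ i}, b i.1) ^ α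
      = ⨆ G : Finset ℤ, ∑ k ∈ F, a k.1 ^ α * (u k G) ^ α := by
    have h2 : ∑ k ∈ F, a k.1 ^ α * (∑' i : {i : ℤ // i ∈ S ∧ k.1 ≤ i}, b i.1) ^ α
        = ∑ k ∈ F, ⨆ G : Finset ℤ, a k.1 ^ α * (u k G) ^ α := by
      refine Finset.sum_congr rfl fun k _ => ?_
      rw [hT k, rpow_iSup hα, ENNReal.mul_iSup]
    rw [h2]
    exact ENNReal.finsetSum_iSup_of_monotone
      (fun k G G' h => mul_le_mul_right (ENNReal.rpow_le_rpow (hu_mono k h) hα.le) _)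
  rw [hswap]
  apply iSup_le
  intro G
  set H : Finset ℤ := F.image Subtype.val ∪ G.filter (· ∈ S) with hH
  have hHS' : ↑H ⊆ S := by
    intro x hx
    rcases Finset.mem_union.mp (Finset.mem_coe.mp hx) with h | h
    · obtain ⟨y, _, rfl⟩ := Finset.mem_image.mp h; exact y.2
    · exact (Finset.mem_filter.mp h).2
  have step1 : ∀ k ∈ F, a k.1 ^ α * (u k G) ^ α
      ≤ a k.1 ^ α * (∑ i ∈ H.filter (k.1 ≤ ·), b i) ^ α := by
    intro k _
    apply mul_le_mul_right
    apply ENNReal.rpow_le_rpow _ hα.le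
    apply Finset.sum_le_sum_of_subset
    intro x hx
    rw [Finset.mem_filter] at hx ⊢
    exact ⟨Finset.mem_union.mpr (Or.inr (Finset.mem_filter.mpr ⟨hx.1, hx.2.1⟩)), hx.2.2⟩
  calc ∑ k ∈ F, a k.1 ^ α * (u k G) ^ α
      ≤ ∑ k ∈ F, a k.1 ^ α * (∑ i ∈ H.filter (k.1 ≤ ·), b i) ^ α :=
        Finset.sum_le_sum step1
    _ = ∑ k ∈ F.image Subtype.val, a k ^ α * (∑ i ∈ H.filter (k ≤ ·), b i) ^ α := by
        have h4 : ∑ k ∈ F.image Subtype.val, a k ^ α * (∑ i ∈ H.filter (k ≤ ·), b i) ^ α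
            = ∑ k ∈ F, a k.1 ^ α * (∑ i ∈ H.filter (k.1 ≤ ·), b i) ^ α :=
          Finset.sum_image (fun x _ y _ h => Subtype.ext h)
        rw [h4]
    _ ≤ ∑ k ∈ H, a k ^ α * (∑ i ∈ H.filter (k ≤ ·), b i) ^ α :=
        Finset.sum_le_sum_of_subset Finset.subset_union_left
    _ ≤ ENNReal.ofReal (C0 α d) * ∑ k ∈ H, a k ^ α * b k ^ α :=
        core hα hd1 S a b hS hstep H hHS'
    _ ≤ ENNReal.ofReal (C0 α d) * ∑' k : S, a k.1 ^ α * b k.1 ^ α := by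
        apply mul_le_mul_right
        have h3 : ∑ k ∈ H, a k ^ α * b k ^ α
            = ∑ k ∈ H.filter (· ∈ S), a k ^ α * b k ^ α := by
          rw [Finset.filter_true_of_mem (fun x hx => hHS' (Finset.mem_coe.mpr hx))]
        rw [h3]
        exact sum_filter_le_tsum (· ∈ S) (fun i => a i ^ α * b i ^ α) H


end Stmt1Aux

/-- Strongly increasing sequences: `∑ aₖ^α (∑_{i≥k} bᵢ)^α ≈ ∑ aₖ^α bₖ^α`,
with constants depending only on `α` and the strong-increase constant `d > 1`. -/
theorem stmt1 (α d : ℝ) (hα : 0 < α) (hd1 : 1 < d) :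
    ∃ C : ℝ≥0∞, 0 < C ∧ C ≠ ⊤ ∧
      ∀ (S : Set ℤ) (a b : ℤ → ℝ≥0∞),
        (∀ ⦃j k l : ℤ⦄, j ∈ S → l ∈ S → j ≤ k → k ≤ l → k ∈ S) →
        (∀ k ∈ S, 0 < a k ∧ a k ≠ ⊤) →
        (∀ k ∈ S, 0 < b k) →
        (∀ k : ℤ, k ∈ S → (k + 1) ∈ S → ENNReal.ofReal d * a k ≤ a (k + 1)) →
        (∑' k : S, a k.1 ^ α * (∑' i : {i : ℤ // i ∈ S ∧ k.1 ≤ i}, b i.1) ^ α)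
            ≤ C * ∑' k : S, a k.1 ^ α * b k.1 ^ α ∧
        (∑' k : S, a k.1 ^ α * b k.1 ^ α)
            ≤ C * ∑' k : S, a k.1 ^ α * (∑' i : {i : ℤ // i ∈ S ∧ k.1 ≤ i}, b i.1) ^ α := by
  refine ⟨ENNReal.ofReal (Stmt1Aux.C0 α d) + 1, ?_, ?_, ?_⟩
  · exact lt_of_lt_of_le one_pos le_add_self
  · exact ENNReal.add_ne_top.mpr ⟨ENNReal.ofReal_ne_top, ENNReal.one_ne_top⟩
  intro S a b hS ha hb hstep
  constructor
  · calc (∑' k : S, a k.1 ^ α * (∑' i : {i : ℤ // i ∈ S ∧ k.1 ≤ i}, b i.1) ^ α)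
        ≤ ENNReal.ofReal (Stmt1Aux.C0 α d) * ∑' k : S, a k.1 ^ α * b k.1 ^ α :=
          Stmt1Aux.forward hα hd1 S a b hS hstep
      _ ≤ (ENNReal.ofReal (Stmt1Aux.C0 α d) + 1) * ∑' k : S, a k.1 ^ α * b k.1 ^ α :=
          mul_le_mul_left le_self_add _
  · have h1 : ∀ k : S, a k.1 ^ α * b k.1 ^ α
        ≤ a k.1 ^ α * (∑' i : {i : ℤ // i ∈ S ∧ k.1 ≤ i}, b i.1) ^ α := by
      intro k
      apply mul_le_mul_right
      apply ENNReal.rpow_le_rpow _ hα.le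
      exact ENNReal.le_tsum (⟨k.1, k.2, le_rfl⟩ : {i : ℤ // i ∈ S ∧ k.1 ≤ i})
    calc (∑' k : S, a k.1 ^ α * b k.1 ^ α)
        ≤ ∑' k : S, a k.1 ^ α * (∑' i : {i : ℤ // i ∈ S ∧ k.1 ≤ i}, b i.1) ^ α :=
          ENNReal.tsum_le_tsum h1
      _ = 1 * _ := (one_mul _).symm
      _ ≤ (ENNReal.ofReal (Stmt1Aux.C0 α d) + 1) * _ := mul_le_mul_left le_add_self _
end

section
/- Let β > 0 and let {a_k}_{k=N}^{M} be a sequence of non-negative real numbers such that, in the case 0 < β < 1, one has 0 < ∑_{i=k}^{M} a_i < ∞ for every k. Then ∑_{k=N}^{M} a_k (∑_{j=k}^{M} a_j)^{β−1} is comparable, with constants depending only on β, to (∑_{k=N}^{M} a_k)^{β}. -/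
open scoped ENNReal

namespace Stmt3Aux

lemma real_lower {β X Y : ℝ} (hβ0 : 0 < β) (hβ1 : β ≤ 1) (hX : 0 ≤ X) (hXY : X ≤ Y) :
    β * ((Y - X) * Y ^ (β - 1)) ≤ Y ^ β - X ^ β := by
  rcases eq_or_lt_of_le (hX.trans hXY) with h0 | hY
  · have hX0 : X = 0 := le_antisymm (hXY.trans h0.symm.le) hX
    subst hX0
    rw [← h0, Real.zero_rpow hβ0.ne']
    simp
  · have hYne : Y ≠ 0 := hY.ne'
    have hB : (X / Y) ^ β ≤ 1 + β * (X / Y - 1) := by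
      have hs : (-1 : ℝ) ≤ X / Y - 1 := by
        have : 0 ≤ X / Y := div_nonneg hX hY.le
        linarith
      have := rpow_one_add_le_one_add_mul_self hs hβ0.le hβ1
      simpa using this
    have hP : (0 : ℝ) < Y ^ β := Real.rpow_pos_of_pos hY β
    have hXβ : X ^ β = (X / Y) ^ β * Y ^ β := by
      rw [Real.div_rpow hX hY.le]
      field_simp
    have hEq : Y ^ (β - 1) = Y ^ β / Y := by
      rw [Real.rpow_sub hY, Real.rpow_one]
    rw [hEq]
    have key : β * ((Y - X) * (Y ^ β / Y)) = β * (1 - X / Y) * Y ^ β := by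
      field_simp
    rw [key]
    have hB' : X ^ β ≤ (1 + β * (X / Y - 1)) * Y ^ β := by
      rw [hXβ]
      exact mul_le_mul_of_nonneg_right hB hP.le
    nlinarith [hB']

lemma real_upper {β X Y : ℝ} (hβ0 : 0 < β) (hX : 0 ≤ X) (hXY : X ≤ Y) :
    Y ^ β - X ^ β ≤ (β + 2) * ((Y - X) * Y ^ (β - 1)) := by
  rcases eq_or_lt_of_le (hX.trans hXY) with h0 | hY
  · have hX0 : X = 0 := le_antisymm (hXY.trans h0.symm.le) hX
    subst hX0
    rw [← h0, Real.zero_rpow hβ0.ne']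
    simp
  · have hYne : Y ≠ 0 := hY.ne'
    have hP : (0 : ℝ) < Y ^ β := Real.rpow_pos_of_pos hY β
    have hQ : (0 : ℝ) < Y ^ (β - 1) := Real.rpow_pos_of_pos hY (β - 1)
    have hEq : Y ^ (β - 1) = Y ^ β / Y := by
      rw [Real.rpow_sub hY, Real.rpow_one]
    rcases le_or_gt 1 β with hβ1 | hβ1
    · -- convex case: Y^β - X^β ≤ β (Y-X) Y^{β-1}
      have hs : (-1 : ℝ) ≤ X / Y - 1 := by
        have : 0 ≤ X / Y := div_nonneg hX hY.le
        linarith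
      have hB : 1 + β * (X / Y - 1) ≤ (X / Y) ^ β := by
        have := one_add_mul_self_le_rpow_one_add hs hβ1
        simpa using this
      have hXβ : X ^ β = (X / Y) ^ β * Y ^ β := by
        rw [Real.div_rpow hX hY.le]; field_simp
      have hB' : (1 + β * (X / Y - 1)) * Y ^ β ≤ X ^ β := by
        rw [hXβ]; exact mul_le_mul_of_nonneg_right hB hP.le
      rw [hEq]
      have key : (β + 2) * ((Y - X) * (Y ^ β / Y)) = (β + 2) * (1 - X / Y) * Y ^ β := by
        field_simp
      rw [key]
      have h1 : 0 ≤ (1 - X / Y) * Y ^ β := by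
        apply mul_nonneg _ hP.le
        have : X / Y ≤ 1 := (div_le_one hY).mpr hXY
        linarith
      nlinarith [hB']
    · -- concave case, β < 1
      rcases le_or_gt X (Y / 2) with hhalf | hhalf
      · -- X ≤ Y/2 : Y^β - X^β ≤ Y^β = Y·Y^{β-1} ≤ 2(Y-X)Y^{β-1}
        have h1 : Y ^ β - X ^ β ≤ Y ^ β := by
          have : 0 ≤ X ^ β := Real.rpow_nonneg hX β
          linarith
        have h2 : Y ^ β = Y * Y ^ (β - 1) := by
          rw [hEq]; field_simp
        have h3 : Y * Y ^ (β - 1) ≤ 2 * ((Y - X) * Y ^ (β - 1)) := by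
          have : Y ≤ 2 * (Y - X) := by linarith
          nlinarith [hQ]
        have h4 : 2 * ((Y - X) * Y ^ (β - 1)) ≤ (β + 2) * ((Y - X) * Y ^ (β - 1)) := by
          have : 0 ≤ (Y - X) * Y ^ (β - 1) := mul_nonneg (by linarith) hQ.le
          nlinarith
        linarith [h1, h3, h4, h2.le, h2.ge]
      · -- X > Y/2 > 0
        have hXpos : 0 < X := by linarith
        have hs : (0 : ℝ) ≤ Y / X - 1 := by
          have : (1:ℝ) ≤ Y / X := (one_le_div hXpos).mpr hXY
          linarith
        have hB : (Y / X) ^ β ≤ 1 + β * (Y / X - 1) := by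
          have := rpow_one_add_le_one_add_mul_self (by linarith : (-1:ℝ) ≤ Y / X - 1) hβ0.le hβ1.le
          simpa using this
        have hPX : (0 : ℝ) < X ^ β := Real.rpow_pos_of_pos hXpos β
        have hYβ : Y ^ β = (Y / X) ^ β * X ^ β := by
          rw [Real.div_rpow hY.le hXpos.le]; field_simp
        have hB' : Y ^ β ≤ (1 + β * (Y / X - 1)) * X ^ β := by
          rw [hYβ]; exact mul_le_mul_of_nonneg_right hB hPX.le
        -- Y^β - X^β ≤ β (Y/X - 1) X^β = β (Y - X) X^{β-1}
        have hEqX : X ^ (β - 1) = X ^ β / X := by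
          rw [Real.rpow_sub hXpos, Real.rpow_one]
        have h5 : Y ^ β - X ^ β ≤ β * ((Y - X) * X ^ (β - 1)) := by
          rw [hEqX]
          have key : β * ((Y - X) * (X ^ β / X)) = β * (Y / X - 1) * X ^ β := by
            field_simp
          rw [key]
          nlinarith [hB']
        -- X^{β-1} ≤ (Y/2)^{β-1} = 2^{1-β} Y^{β-1}
        have h6 : X ^ (β - 1) ≤ (Y / 2) ^ (β - 1) := by
          apply Real.rpow_le_rpow_of_nonpos (by linarith) (by linarith) (by linarith)
        have h7 : (Y / 2) ^ (β - 1) = 2 ^ (1 - β) * Y ^ (β - 1) := by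
          rw [Real.div_rpow hY.le (by norm_num : (0:ℝ) ≤ 2)]
          have h2e : (2:ℝ) ^ (1 - β) = ((2:ℝ) ^ (β - 1))⁻¹ := by
            rw [← Real.rpow_neg (by norm_num : (0:ℝ) ≤ 2)]
            ring_nf
          rw [h2e, div_eq_mul_inv, mul_comm]
        have h8 : β * 2 ^ (1 - β) ≤ 2 := by
          have h2b : (2:ℝ) ^ (1 - β) ≤ 2 ^ (1:ℝ) := by
            apply Real.rpow_le_rpow_of_exponent_le (by norm_num) (by linarith)
          rw [Real.rpow_one] at h2b
          nlinarith
        have hYX : 0 ≤ Y - X := by linarith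
        calc Y ^ β - X ^ β ≤ β * ((Y - X) * X ^ (β - 1)) := h5
          _ ≤ β * ((Y - X) * (2 ^ (1 - β) * Y ^ (β - 1))) := by
              rw [← h7]
              apply mul_le_mul_of_nonneg_left (mul_le_mul_of_nonneg_left h6 hYX) hβ0.le
          _ = (β * 2 ^ (1 - β)) * ((Y - X) * Y ^ (β - 1)) := by ring
          _ ≤ (β + 2) * ((Y - X) * Y ^ (β - 1)) := by
              apply mul_le_mul_of_nonneg_right _ (mul_nonneg hYX hQ.le)
              nlinarith [h8]


lemma P1 {β : ℝ} (hβ0 : 0 < β) (hβ1 : β ≤ 1) {x c y : ℝ≥0∞} (hy : y = c + x)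
    (hytop : y ≠ ⊤) :
    ENNReal.ofReal β * (c * y ^ (β - 1)) ≤ y ^ β - x ^ β := by
  by_cases hy0 : y = 0
  · have hc : c = 0 := by
      subst hy0
      exact (add_eq_zero.mp hy.symm).1
    simp [hc]
  · have hx_le : x ≤ y := by rw [hy]; exact le_add_self
    have hc_le : c ≤ y := by rw [hy]; exact le_self_add
    have hx_top : x ≠ ⊤ := fun h => hytop (top_le_iff.mp (h ▸ hx_le))
    have hc_top : c ≠ ⊤ := fun h => hytop (top_le_iff.mp (h ▸ hc_le))
    set Y := y.toReal with hY
    set X := x.toReal with hX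
    have hYpos : 0 < Y := ENNReal.toReal_pos hy0 hytop
    have hXnn : 0 ≤ X := ENNReal.toReal_nonneg
    have hXY : X ≤ Y := ENNReal.toReal_le_toReal hx_top hytop |>.mpr hx_le
    have hcY : c.toReal = Y - X := by
      have := congrArg ENNReal.toReal hy
      rw [ENNReal.toReal_add hc_top hx_top] at this
      simp only [← hY, ← hX] at this
      linarith
    have hyof : y = ENNReal.ofReal Y := (ENNReal.ofReal_toReal hytop).symm
    have hxof : x = ENNReal.ofReal X := (ENNReal.ofReal_toReal hx_top).symm
    have hcof : c = ENNReal.ofReal (Y - X) := by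
      rw [← hcY]; exact (ENNReal.ofReal_toReal hc_top).symm
    rw [hyof, hxof, hcof, ENNReal.ofReal_rpow_of_pos hYpos,
      ENNReal.ofReal_rpow_of_pos hYpos,
      ENNReal.ofReal_rpow_of_nonneg hXnn hβ0.le,
      ← ENNReal.ofReal_mul (by linarith : (0:ℝ) ≤ Y - X),
      ← ENNReal.ofReal_mul hβ0.le,
      ← ENNReal.ofReal_sub _ (Real.rpow_nonneg hXnn β)]
    exact ENNReal.ofReal_le_ofReal (real_lower hβ0 hβ1 hXnn hXY)

lemma P2 {β : ℝ} (hβ0 : 0 < β) {x c y : ℝ≥0∞} (hy : y = c + x)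
    (hytop : β < 1 → y ≠ ⊤) :
    y ^ β - x ^ β ≤ ENNReal.ofReal (β + 2) * (c * y ^ (β - 1)) := by
  by_cases hyt : y = ⊤
  · have hβ1 : 1 ≤ β := by
      by_contra h
      exact hytop (lt_of_not_ge h) hyt
    by_cases hx : x = ⊤
    · rw [hx]
      simp [ENNReal.top_rpow_of_pos hβ0]
    · have hc : c = ⊤ := by
        rcases ENNReal.add_eq_top.mp (hy ▸ hyt) with h | h
        · exact h
        · exact absurd h hx
      have hyp : y ^ (β - 1) ≠ 0 := by
        rw [hyt]
        rcases eq_or_lt_of_le hβ1 with h | h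
        · simp [← h]
        · rw [ENNReal.top_rpow_of_pos (by linarith)]
          simp
      have : c * y ^ (β - 1) = ⊤ := by
        rw [hc, ENNReal.top_mul hyp]
      rw [this, ENNReal.mul_top (by simp [ENNReal.ofReal_eq_zero]; linarith)]
      exact le_top
  · by_cases hy0 : y = 0
    · have hx0 : x = 0 := by
        have hx_le : x ≤ y := by rw [hy]; exact le_add_self
        exact le_antisymm (hy0 ▸ hx_le) (zero_le)
      rw [hy0, hx0]
      simp [ENNReal.zero_rpow_of_pos hβ0]
    · have hx_le : x ≤ y := by rw [hy]; exact le_add_self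
      have hc_le : c ≤ y := by rw [hy]; exact le_self_add
      have hx_top : x ≠ ⊤ := fun h => hyt (top_le_iff.mp (h ▸ hx_le))
      have hc_top : c ≠ ⊤ := fun h => hyt (top_le_iff.mp (h ▸ hc_le))
      set Y := y.toReal with hY
      set X := x.toReal with hX
      have hYpos : 0 < Y := ENNReal.toReal_pos hy0 hyt
      have hXnn : 0 ≤ X := ENNReal.toReal_nonneg
      have hXY : X ≤ Y := ENNReal.toReal_le_toReal hx_top hyt |>.mpr hx_le
      have hcY : c.toReal = Y - X := by
        have := congrArg ENNReal.toReal hy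
        rw [ENNReal.toReal_add hc_top hx_top] at this
        simp only [← hY, ← hX] at this
        linarith
      have hyof : y = ENNReal.ofReal Y := (ENNReal.ofReal_toReal hyt).symm
      have hxof : x = ENNReal.ofReal X := (ENNReal.ofReal_toReal hx_top).symm
      have hcof : c = ENNReal.ofReal (Y - X) := by
        rw [← hcY]; exact (ENNReal.ofReal_toReal hc_top).symm
      rw [hyof, hxof, hcof, ENNReal.ofReal_rpow_of_pos hYpos,
        ENNReal.ofReal_rpow_of_pos hYpos,
        ENNReal.ofReal_rpow_of_nonneg hXnn hβ0.le,
        ← ENNReal.ofReal_mul (by linarith : (0:ℝ) ≤ Y - X),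
        ← ENNReal.ofReal_mul (by linarith : (0:ℝ) ≤ β + 2),
        ← ENNReal.ofReal_sub _ (Real.rpow_nonneg hXnn β)]
      exact ENNReal.ofReal_le_ofReal (real_upper hβ0 hXnn hXY)


lemma sum_Ico_succ {n m : ℤ} (h : n ≤ m) {f : ℤ → ℝ≥0∞} :
    ∑ k ∈ Finset.Ico n (m + 1), f k = (∑ k ∈ Finset.Ico n m, f k) + f m := by
  have he : Finset.Ico n (m + 1) = insert m (Finset.Ico n m) := by
    ext i
    simp only [Finset.mem_Ico, Finset.mem_insert]
    omega
  rw [he, Finset.sum_insert (by simp [Finset.mem_Ico])]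
  exact add_comm _ _

section Tail

variable (S : Set ℤ) (a : ℤ → ℝ≥0∞)

noncomputable def tl (n : ℤ) : ℝ≥0∞ :=
  ∑' i : ℤ, Set.indicator {j : ℤ | j ∈ S ∧ n ≤ j} a i

lemma tl_eq (n : ℤ) : (∑' i : {i : ℤ // i ∈ S ∧ n ≤ i}, a i.1) = tl S a n :=
  tsum_subtype {j : ℤ | j ∈ S ∧ n ≤ j} a

lemma tl_anti : Antitone (tl S a) := by
  intro n m h
  apply ENNReal.tsum_le_tsum
  intro i
  refine Set.indicator_le_indicator_of_subset ?_ (fun _ => zero_le) i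
  intro j hj
  exact ⟨hj.1, h.trans hj.2⟩

lemma tl_step (n : ℤ) : tl S a n = S.indicator a n + tl S a (n + 1) := by
  have h : ∀ i : ℤ, Set.indicator {j : ℤ | j ∈ S ∧ n ≤ j} a i
      = Set.indicator {j : ℤ | j ∈ S ∧ n + 1 ≤ j} a i
        + Set.indicator ({n} : Set ℤ) (S.indicator a) i := by
    intro i
    classical
    simp only [Set.indicator_apply, Set.mem_setOf_eq, Set.mem_singleton_iff]
    by_cases hi : i = n
    · subst hi
      by_cases hS : i ∈ S <;> simp [hS, le_refl, (by omega : ¬ (i + 1 ≤ i))]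
    · have hiff : (n ≤ i) ↔ (n + 1 ≤ i) := by omega
      by_cases hS : i ∈ S <;> simp [hS, hi, hiff]
  calc tl S a n = ∑' i : ℤ, (Set.indicator {j : ℤ | j ∈ S ∧ n + 1 ≤ j} a i
        + Set.indicator ({n} : Set ℤ) (S.indicator a) i) := tsum_congr h
    _ = tl S a (n + 1) + ∑' i : ℤ, Set.indicator ({n} : Set ℤ) (S.indicator a) i :=
        ENNReal.tsum_add
    _ = tl S a (n + 1) + S.indicator a n := by
        congr 1
        have hsing : ∑' i : ℤ, Set.indicator ({n} : Set ℤ) (S.indicator a) i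
            = Set.indicator ({n} : Set ℤ) (S.indicator a) n :=
          tsum_eq_single n
            (fun b hb => Set.indicator_of_notMem (by simpa using hb) _)
        rw [hsing]
        exact Set.indicator_of_mem rfl _
    _ = S.indicator a n + tl S a (n + 1) := add_comm _ _

lemma tl_split (n : ℤ) : ∀ m, n ≤ m →
    tl S a n = (∑ i ∈ Finset.Ico n m, S.indicator a i) + tl S a m := by
  refine Int.le_induction ?_ ?_
  · simp
  · intro m hm ih
    rw [sum_Ico_succ hm, ih, tl_step S a m, ← add_assoc]

lemma tl_le_tot (n : ℤ) : tl S a n ≤ ∑' i : ℤ, S.indicator a i :=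
  ENNReal.tsum_le_tsum fun i =>
    Set.indicator_le_indicator_of_subset (fun j hj => hj.1) (fun _ => zero_le) i

lemma tot_le_sup : (∑' i : ℤ, S.indicator a i) ≤ ⨆ n, tl S a n := by
  rw [ENNReal.tsum_eq_iSup_sum]
  apply iSup_le; intro F
  rcases F.eq_empty_or_nonempty with rfl | hF
  · simp
  · have h1 : ∑ i ∈ F, S.indicator a i
        ≤ ∑ i ∈ F, Set.indicator {j : ℤ | j ∈ S ∧ F.min' hF ≤ j} a i := by
      apply Finset.sum_le_sum
      intro i hi
      by_cases hS : i ∈ S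
      · rw [Set.indicator_of_mem hS,
          Set.indicator_of_mem (by exact ⟨hS, F.min'_le i hi⟩)]
      · rw [Set.indicator_of_notMem hS]; exact zero_le
    exact (h1.trans (ENNReal.sum_le_tsum F)).trans
      (le_iSup (fun n => tl S a n) (F.min' hF))

lemma tl_le_iSup_head (n : ℤ) :
    tl S a n ≤ ⨆ m : ℤ, ∑ i ∈ Finset.Ico n m, S.indicator a i := by
  rw [tl, ENNReal.tsum_eq_iSup_sum]
  apply iSup_le; intro F
  rcases F.eq_empty_or_nonempty with rfl | hF
  · simp
  · set m := F.max' hF + 1 with hmdef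
    have e1 : ∑ i ∈ F, Set.indicator {j : ℤ | j ∈ S ∧ n ≤ j} a i
        = ∑ i ∈ F.filter (fun i => n ≤ i), Set.indicator {j : ℤ | j ∈ S ∧ n ≤ j} a i := by
      rw [Finset.sum_filter_of_ne]
      intro i _ hne
      exact (Set.mem_of_indicator_ne_zero hne).2
    have e2 : F.filter (fun i => n ≤ i) ⊆ Finset.Ico n m := by
      intro i hi
      rw [Finset.mem_filter] at hi
      rw [Finset.mem_Ico]
      have := F.le_max' i hi.1
      exact ⟨hi.2, by omega⟩
    have e3 : ∑ i ∈ F.filter (fun i => n ≤ i), Set.indicator {j : ℤ | j ∈ S ∧ n ≤ j} a i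
        ≤ ∑ i ∈ Finset.Ico n m, Set.indicator {j : ℤ | j ∈ S ∧ n ≤ j} a i :=
      Finset.sum_le_sum_of_subset e2
    have e4 : ∑ i ∈ Finset.Ico n m, Set.indicator {j : ℤ | j ∈ S ∧ n ≤ j} a i
        = ∑ i ∈ Finset.Ico n m, S.indicator a i := by
      apply Finset.sum_congr rfl
      intro i hi
      rw [Finset.mem_Ico] at hi
      by_cases hS : i ∈ S
      · rw [Set.indicator_of_mem (by exact ⟨hS, hi.1⟩), Set.indicator_of_mem hS]
      · rw [Set.indicator_of_notMem hS, Set.indicator_of_notMem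
          (fun h => hS h.1)]
    rw [e1]
    exact (e3.trans e4.le).trans
      (le_iSup (fun m => ∑ i ∈ Finset.Ico n m, S.indicator a i) m)

lemma exists_small (n : ℤ) (hfin : tl S a n ≠ ⊤) {ε : ℝ≥0∞} (hε : 0 < ε) :
    ∃ m, n ≤ m ∧ tl S a m ≤ ε := by
  by_cases h : tl S a n ≤ ε
  · exact ⟨n, le_rfl, h⟩
  push_neg at h
  have hpos : tl S a n ≠ 0 := fun h0 => by simp [h0] at h
  have h1 : tl S a n - ε < tl S a n := ENNReal.sub_lt_self hfin hpos hε.ne'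
  have h2 := h1.trans_le (tl_le_iSup_head S a n)
  rw [lt_iSup_iff] at h2
  obtain ⟨m0, hm0⟩ := h2
  have hmono : ∑ i ∈ Finset.Ico n m0, S.indicator a i
      ≤ ∑ i ∈ Finset.Ico n (max n m0), S.indicator a i :=
    Finset.sum_le_sum_of_subset (Finset.Ico_subset_Ico le_rfl (le_max_right n m0))
  refine ⟨max n m0, le_max_left _ _, ?_⟩
  by_contra hc
  push_neg at hc
  have hsplit := tl_split S a n (max n m0) (le_max_left _ _)
  have hcontra : tl S a n < tl S a n := by
    calc tl S a n = (tl S a n - ε) + ε := (tsub_add_cancel_of_le h.le).symm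
      _ < (∑ i ∈ Finset.Ico n (max n m0), S.indicator a i) + tl S a (max n m0) :=
          ENNReal.add_lt_add (hm0.trans_le hmono) hc
      _ = tl S a n := hsplit.symm
  exact lt_irrefl _ hcontra

end Tail

lemma tsub_aux {x y z : ℝ≥0∞} (hzy : z ≤ y) (hyx : y ≤ x) :
    (x - y) + (y - z) ≤ x - z := by
  by_cases hz : z = ⊤
  · have hy : y = ⊤ := top_le_iff.mp (hz ▸ hzy)
    have hx : x = ⊤ := top_le_iff.mp (hy ▸ hyx)
    simp [hx, hy, hz]
  · apply ENNReal.le_sub_of_add_le_right hz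
    rw [add_assoc, tsub_add_cancel_of_le hzy, tsub_add_cancel_of_le hyx]

lemma teleLE {b : ℤ → ℝ≥0∞} (hb : Antitone b) (n : ℤ) :
    ∀ m, n ≤ m → ∑ k ∈ Finset.Ico n m, (b k - b (k + 1)) ≤ b n - b m := by
  refine Int.le_induction ?_ ?_
  · simp
  · intro m hm ih
    rw [sum_Ico_succ hm]
    calc ∑ k ∈ Finset.Ico n m, (b k - b (k + 1)) + (b m - b (m + 1))
        ≤ (b n - b m) + (b m - b (m + 1)) := add_le_add_left ih _
      _ ≤ b n - b (m + 1) := tsub_aux (hb (by omega)) (hb hm)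

lemma teleGE {b : ℤ → ℝ≥0∞} (hb : Antitone b) (n : ℤ) :
    ∀ m, n ≤ m → b n ≤ (∑ k ∈ Finset.Ico n m, (b k - b (k + 1))) + b m := by
  refine Int.le_induction ?_ ?_
  · simp
  · intro m hm ih
    rw [sum_Ico_succ hm]
    calc b n ≤ (∑ k ∈ Finset.Ico n m, (b k - b (k + 1))) + b m := ih
      _ = (∑ k ∈ Finset.Ico n m, (b k - b (k + 1))) + ((b m - b (m + 1)) + b (m + 1)) := by
          rw [tsub_add_cancel_of_le (hb (by omega : m ≤ m + 1))]
      _ = (∑ k ∈ Finset.Ico n m, (b k - b (k + 1)) + (b m - b (m + 1))) + b (m + 1) := by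
          rw [add_assoc]
  

lemma tsum_diff_le {b : ℤ → ℝ≥0∞} (hb : Antitone b) :
    ∑' k : ℤ, (b k - b (k + 1)) ≤ ⨆ n, b n := by
  rw [ENNReal.tsum_eq_iSup_sum]
  apply iSup_le; intro F
  rcases F.eq_empty_or_nonempty with rfl | hF
  · simp
  · have hsub : F ⊆ Finset.Ico (F.min' hF) (F.max' hF + 1) := by
      intro i hi
      rw [Finset.mem_Ico]
      exact ⟨F.min'_le i hi, by have := F.le_max' i hi; omega⟩
    calc ∑ k ∈ F, (b k - b (k + 1))
        ≤ ∑ k ∈ Finset.Ico (F.min' hF) (F.max' hF + 1), (b k - b (k + 1)) :=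
          Finset.sum_le_sum_of_subset hsub
      _ ≤ b (F.min' hF) - b (F.max' hF + 1) :=
          teleLE hb _ _ (by have := F.min'_le _ (F.max'_mem hF); omega)
      _ ≤ b (F.min' hF) := tsub_le_self
      _ ≤ ⨆ n, b n := le_iSup _ _


lemma upper (β : ℝ) (hβ : 0 < β) (S : Set ℤ) (a : ℤ → ℝ≥0∞)
    (hpos : β < 1 → ∀ k ∈ S, 0 < tl S a k ∧ tl S a k ≠ ⊤) :
    (∑' k : ℤ, S.indicator a k * tl S a k ^ (β - 1))
      ≤ (ENNReal.ofReal (β + 2) + ENNReal.ofReal β⁻¹ + 1)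
          * (∑' i : ℤ, S.indicator a i) ^ β := by
  set C : ℝ≥0∞ := ENNReal.ofReal (β + 2) + ENNReal.ofReal β⁻¹ + 1 with hCdef
  have hC1le : (1 : ℝ≥0∞) ≤ C := le_add_self
  have hCne0 : C ≠ 0 := (lt_of_lt_of_le zero_lt_one hC1le).ne'
  have hc3 : ENNReal.ofReal β⁻¹ ≤ C := le_add_self.trans le_self_add
  rcases le_or_gt 1 β with hβ1 | hβ1
  · by_cases htop : (∑' i : ℤ, S.indicator a i) = ⊤
    · rw [htop, ENNReal.top_rpow_of_pos hβ, ENNReal.mul_top hCne0]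
      exact le_top
    by_cases h0 : (∑' i : ℤ, S.indicator a i) = 0
    · have hg0 : ∀ k, S.indicator a k = 0 :=
        fun k => le_antisymm ((ENNReal.le_tsum k).trans h0.le) (zero_le)
      have hP0 : (∑' k : ℤ, S.indicator a k * tl S a k ^ (β - 1)) = 0 :=
        ENNReal.tsum_eq_zero.mpr fun k => by rw [hg0 k, zero_mul]
      rw [hP0]
      exact zero_le
    · have h1 : (∑' k : ℤ, S.indicator a k * tl S a k ^ (β - 1))
          ≤ (∑' i : ℤ, S.indicator a i) * (∑' i : ℤ, S.indicator a i) ^ (β - 1) := by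
        calc (∑' k : ℤ, S.indicator a k * tl S a k ^ (β - 1))
            ≤ ∑' k : ℤ, S.indicator a k * (∑' i : ℤ, S.indicator a i) ^ (β - 1) :=
            ENNReal.tsum_le_tsum fun k =>
              mul_le_mul_right (ENNReal.rpow_le_rpow (tl_le_tot S a k) (by linarith)) _
          _ = (∑' i : ℤ, S.indicator a i) * (∑' i : ℤ, S.indicator a i) ^ (β - 1) := by
            rw [ENNReal.tsum_mul_right]
      have h2 : (∑' i : ℤ, S.indicator a i) * (∑' i : ℤ, S.indicator a i) ^ (β - 1)
          = (∑' i : ℤ, S.indicator a i) ^ β := by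
        have hadd := ENNReal.rpow_add 1 (β - 1) h0 htop
        rw [ENNReal.rpow_one] at hadd
        rw [← hadd]
        norm_num
      calc (∑' k : ℤ, S.indicator a k * tl S a k ^ (β - 1))
          ≤ (∑' i : ℤ, S.indicator a i) ^ β := h1.trans h2.le
        _ = 1 * (∑' i : ℤ, S.indicator a i) ^ β := (one_mul _).symm
        _ ≤ C * (∑' i : ℤ, S.indicator a i) ^ β := mul_le_mul_left hC1le _
  · -- β < 1
    have hkey : ∀ k : ℤ, ENNReal.ofReal β * (S.indicator a k * tl S a k ^ (β - 1))
        ≤ tl S a k ^ β - tl S a (k + 1) ^ β := by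
      intro k
      by_cases hk : k ∈ S
      · exact P1 hβ hβ1.le (tl_step S a k) (hpos hβ1 k hk).2
      · rw [Set.indicator_of_notMem hk, zero_mul, mul_zero]
        exact zero_le
    have hbanti : Antitone (fun k => tl S a k ^ β) :=
      fun n m h => ENNReal.rpow_le_rpow (tl_anti S a h) hβ.le
    have h5 : ENNReal.ofReal β * (∑' k : ℤ, S.indicator a k * tl S a k ^ (β - 1))
        ≤ (∑' i : ℤ, S.indicator a i) ^ β := by
      calc ENNReal.ofReal β * (∑' k : ℤ, S.indicator a k * tl S a k ^ (β - 1))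
          = ∑' k : ℤ, ENNReal.ofReal β * (S.indicator a k * tl S a k ^ (β - 1)) :=
          ENNReal.tsum_mul_left.symm
        _ ≤ ∑' k : ℤ, (tl S a k ^ β - tl S a (k + 1) ^ β) := ENNReal.tsum_le_tsum hkey
        _ ≤ ⨆ n, tl S a n ^ β := tsum_diff_le hbanti
        _ ≤ (∑' i : ℤ, S.indicator a i) ^ β :=
          iSup_le fun n => ENNReal.rpow_le_rpow (tl_le_tot S a n) hβ.le
    have hβne : ENNReal.ofReal β ≠ 0 := by
      simp only [ne_eq, ENNReal.ofReal_eq_zero, not_le]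
      exact hβ
    calc (∑' k : ℤ, S.indicator a k * tl S a k ^ (β - 1))
        = (ENNReal.ofReal β)⁻¹
            * (ENNReal.ofReal β * (∑' k : ℤ, S.indicator a k * tl S a k ^ (β - 1))) := by
          rw [← mul_assoc, ENNReal.inv_mul_cancel hβne ENNReal.ofReal_ne_top, one_mul]
      _ ≤ (ENNReal.ofReal β)⁻¹ * (∑' i : ℤ, S.indicator a i) ^ β := mul_le_mul_right h5 _
      _ = ENNReal.ofReal β⁻¹ * (∑' i : ℤ, S.indicator a i) ^ β := by
          rw [ENNReal.ofReal_inv_of_pos hβ]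
      _ ≤ C * (∑' i : ℤ, S.indicator a i) ^ β := mul_le_mul_left hc3 _

lemma lower (β : ℝ) (hβ : 0 < β) (S : Set ℤ) (a : ℤ → ℝ≥0∞)
    (ha : ∀ k ∈ S, a k ≠ ⊤)
    (hpos : β < 1 → ∀ k ∈ S, 0 < tl S a k ∧ tl S a k ≠ ⊤) :
    (∑' i : ℤ, S.indicator a i) ^ β
      ≤ (ENNReal.ofReal (β + 2) + ENNReal.ofReal β⁻¹ + 1)
          * ∑' k : ℤ, S.indicator a k * tl S a k ^ (β - 1) := by
  classical
  set C : ℝ≥0∞ := ENNReal.ofReal (β + 2) + ENNReal.ofReal β⁻¹ + 1 with hCdef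
  have hC1le : (1 : ℝ≥0∞) ≤ C := le_add_self
  have hCne0 : C ≠ 0 := (lt_of_lt_of_le zero_lt_one hC1le).ne'
  have hc2 : ENNReal.ofReal (β + 2) ≤ C := le_self_add.trans le_self_add
  by_cases hTtop : ∃ n, tl S a n = ⊤
  · obtain ⟨n₀, hn₀⟩ := hTtop
    have hβ1 : 1 ≤ β := by
      by_contra hcon
      push_neg at hcon
      have hne : ∃ z, z ∈ S ∧ n₀ ≤ z := by
        by_contra hne
        push_neg at hne
        have hzero : tl S a n₀ = 0 := by
          apply ENNReal.tsum_eq_zero.mpr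
          intro i
          apply Set.indicator_of_notMem
          intro hi
          exact absurd hi.2 (not_le.mpr (hne i hi.1))
        rw [hzero] at hn₀
        exact ENNReal.zero_ne_top hn₀
      obtain ⟨m, ⟨hmS, hm0⟩, hmin⟩ :=
        Int.exists_least_of_bdd (P := fun z => z ∈ S ∧ n₀ ≤ z)
          ⟨n₀, fun z hz => hz.2⟩ hne
      have hhead : ∑ i ∈ Finset.Ico n₀ m, S.indicator a i = 0 := by
        apply Finset.sum_eq_zero
        intro i hi
        rw [Finset.mem_Ico] at hi
        apply Set.indicator_of_notMem
        intro hiS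
        have := hmin i ⟨hiS, hi.1⟩
        omega
      have hsplit := tl_split S a n₀ m hm0
      rw [hhead, zero_add] at hsplit
      exact (hpos hcon m hmS).2 (hsplit ▸ hn₀)
    have hall : ∀ m : ℤ, tl S a m = ⊤ := by
      intro m
      rcases le_or_gt m n₀ with h | h
      · exact top_le_iff.mp (hn₀ ▸ tl_anti S a h)
      · have hsplit := tl_split S a n₀ m h.le
        have hhead : ∑ i ∈ Finset.Ico n₀ m, S.indicator a i ≠ ⊤ := by
          apply ENNReal.sum_ne_top.mpr
          intro i _
          by_cases hiS : i ∈ S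
          · rw [Set.indicator_of_mem hiS]
            exact ha i hiS
          · rw [Set.indicator_of_notMem hiS]
            exact ENNReal.zero_ne_top
        rcases ENNReal.add_eq_top.mp (hsplit ▸ hn₀) with h' | h'
        · exact absurd h' hhead
        · exact h'
    have h1le : ∀ k : ℤ, (1 : ℝ≥0∞) ≤ tl S a k ^ (β - 1) := by
      intro k
      rw [hall k]
      rcases eq_or_lt_of_le hβ1 with h | h
      · rw [← h]
        norm_num
      · rw [ENNReal.top_rpow_of_pos (by linarith)]
        exact le_top
    have hge : (∑' i : ℤ, S.indicator a i)
        ≤ ∑' k : ℤ, S.indicator a k * tl S a k ^ (β - 1) :=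
      ENNReal.tsum_le_tsum fun k => by
        calc S.indicator a k = S.indicator a k * 1 := (mul_one _).symm
          _ ≤ S.indicator a k * tl S a k ^ (β - 1) := mul_le_mul_right (h1le k) _
    have htotT : (∑' i : ℤ, S.indicator a i) = ⊤ :=
      top_le_iff.mp (hn₀ ▸ tl_le_tot S a n₀)
    have hPtop : (∑' k : ℤ, S.indicator a k * tl S a k ^ (β - 1)) = ⊤ :=
      top_le_iff.mp (htotT ▸ hge)
    rw [hPtop, ENNReal.mul_top hCne0]
    exact le_top
  · push_neg at hTtop
    have claimA : ∀ n : ℤ, tl S a n ^ β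
        ≤ ENNReal.ofReal (β + 2) * ∑' k : ℤ, S.indicator a k * tl S a k ^ (β - 1) := by
      intro n
      apply ENNReal.le_of_forall_pos_le_add
      intro ε hε _
      have hεpos : (0 : ℝ≥0∞) < (ε : ℝ≥0∞) ^ β⁻¹ :=
        ENNReal.rpow_pos (by exact_mod_cast hε) ENNReal.coe_ne_top
      obtain ⟨m, hnm, hm⟩ := exists_small S a n (hTtop n) hεpos
      have hbm : tl S a m ^ β ≤ ε := by
        calc tl S a m ^ β ≤ ((ε : ℝ≥0∞) ^ β⁻¹) ^ β := ENNReal.rpow_le_rpow hm hβ.le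
          _ = ε := by rw [← ENNReal.rpow_mul, inv_mul_cancel₀ hβ.ne', ENNReal.rpow_one]
      have hdiff : ∀ k ∈ Finset.Ico n m, tl S a k ^ β - tl S a (k + 1) ^ β
          ≤ ENNReal.ofReal (β + 2) * (S.indicator a k * tl S a k ^ (β - 1)) := by
        intro k _
        by_cases hk : k ∈ S
        · exact P2 hβ (tl_step S a k) (fun _ => hTtop k)
        · have hg0 : S.indicator a k = 0 := Set.indicator_of_notMem hk a
          have hsame : tl S a k = tl S a (k + 1) := by
            rw [tl_step S a k, hg0, zero_add]
          rw [hsame, tsub_self]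
          exact zero_le
      calc tl S a n ^ β
          ≤ (∑ k ∈ Finset.Ico n m, (tl S a k ^ β - tl S a (k + 1) ^ β)) + tl S a m ^ β :=
            teleGE (fun i j h => ENNReal.rpow_le_rpow (tl_anti S a h) hβ.le) n m hnm
        _ ≤ (∑ k ∈ Finset.Ico n m,
              ENNReal.ofReal (β + 2) * (S.indicator a k * tl S a k ^ (β - 1))) + ε :=
            add_le_add (Finset.sum_le_sum hdiff) hbm
        _ = ENNReal.ofReal (β + 2)
              * (∑ k ∈ Finset.Ico n m, S.indicator a k * tl S a k ^ (β - 1)) + ε := by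
            rw [Finset.mul_sum]
        _ ≤ ENNReal.ofReal (β + 2)
              * (∑' k : ℤ, S.indicator a k * tl S a k ^ (β - 1)) + ε :=
            add_le_add_left (mul_le_mul_right (ENNReal.sum_le_tsum _) _) _
    have h2 : (∑' i : ℤ, S.indicator a i)
        ≤ (ENNReal.ofReal (β + 2) * ∑' k : ℤ, S.indicator a k * tl S a k ^ (β - 1)) ^ β⁻¹ := by
      apply (tot_le_sup S a).trans
      apply iSup_le
      intro n
      calc tl S a n = (tl S a n ^ β) ^ β⁻¹ := by
            rw [← ENNReal.rpow_mul, mul_inv_cancel₀ hβ.ne', ENNReal.rpow_one]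
        _ ≤ (ENNReal.ofReal (β + 2) * ∑' k : ℤ, S.indicator a k * tl S a k ^ (β - 1)) ^ β⁻¹ :=
            ENNReal.rpow_le_rpow (claimA n) (by positivity)
    calc (∑' i : ℤ, S.indicator a i) ^ β
        ≤ ((ENNReal.ofReal (β + 2)
            * ∑' k : ℤ, S.indicator a k * tl S a k ^ (β - 1)) ^ β⁻¹) ^ β :=
          ENNReal.rpow_le_rpow h2 hβ.le
      _ = ENNReal.ofReal (β + 2) * ∑' k : ℤ, S.indicator a k * tl S a k ^ (β - 1) := by
          rw [← ENNReal.rpow_mul, inv_mul_cancel₀ hβ.ne', ENNReal.rpow_one]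
      _ ≤ C * ∑' k : ℤ, S.indicator a k * tl S a k ^ (β - 1) := mul_le_mul_left hc2 _

end Stmt3Aux

/-- Power rule for tails: for `β > 0`,
`∑_k aₖ (∑_{j≥k} aⱼ)^{β−1} ≈ (∑_k aₖ)^β`, with constants depending only on `β`;
when `0 < β < 1` one assumes all the tails are positive and finite. -/
theorem stmt3 (β : ℝ) (hβ : 0 < β) :
    ∃ C : ℝ≥0∞, 0 < C ∧ C ≠ ⊤ ∧
      ∀ (S : Set ℤ) (a : ℤ → ℝ≥0∞),
        (∀ ⦃j k l : ℤ⦄, j ∈ S → l ∈ S → j ≤ k → k ≤ l → k ∈ S) →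
        (∀ k ∈ S, a k ≠ ⊤) →
        (β < 1 → ∀ k ∈ S,
          0 < (∑' i : {i : ℤ // i ∈ S ∧ k ≤ i}, a i.1) ∧
          (∑' i : {i : ℤ // i ∈ S ∧ k ≤ i}, a i.1) ≠ ⊤) →
        (∑' k : S, a k.1 * (∑' i : {i : ℤ // i ∈ S ∧ k.1 ≤ i}, a i.1) ^ (β - 1))
            ≤ C * (∑' k : S, a k.1) ^ β ∧
        (∑' k : S, a k.1) ^ β
            ≤ C * ∑' k : S, a k.1 * (∑' i : {i : ℤ // i ∈ S ∧ k.1 ≤ i}, a i.1) ^ (β - 1) := by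
  classical
  refine ⟨ENNReal.ofReal (β + 2) + ENNReal.ofReal β⁻¹ + 1,
    lt_of_lt_of_le zero_lt_one le_add_self, ?_, ?_⟩
  · exact ENNReal.add_ne_top.mpr
      ⟨ENNReal.add_ne_top.mpr ⟨ENNReal.ofReal_ne_top, ENNReal.ofReal_ne_top⟩, ENNReal.one_ne_top⟩
  intro S a _ ha hpos
  have hT : ∀ n : ℤ, (∑' i : {i : ℤ // i ∈ S ∧ n ≤ i}, a i.1) = Stmt3Aux.tl S a n :=
    fun n => Stmt3Aux.tl_eq S a n
  have hpos' : β < 1 → ∀ k ∈ S, 0 < Stmt3Aux.tl S a k ∧ Stmt3Aux.tl S a k ≠ ⊤ := by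
    intro h k hk
    rw [← hT]
    exact hpos h k hk
  have htotg : (∑' k : S, a k.1) = ∑' i : ℤ, S.indicator a i := tsum_subtype S a
  have hout : (∑' k : S, a k.1 * (∑' i : {i : ℤ // i ∈ S ∧ k.1 ≤ i}, a i.1) ^ (β - 1))
      = ∑' k : ℤ, S.indicator a k * Stmt3Aux.tl S a k ^ (β - 1) := by
    calc (∑' k : S, a k.1 * (∑' i : {i : ℤ // i ∈ S ∧ k.1 ≤ i}, a i.1) ^ (β - 1))
        = ∑' k : S, a k.1 * Stmt3Aux.tl S a k.1 ^ (β - 1) := by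
          apply tsum_congr
          intro k
          rw [hT]
      _ = ∑' k : ℤ, S.indicator (fun k => a k * Stmt3Aux.tl S a k ^ (β - 1)) k :=
          tsum_subtype S (fun k => a k * Stmt3Aux.tl S a k ^ (β - 1))
      _ = ∑' k : ℤ, S.indicator a k * Stmt3Aux.tl S a k ^ (β - 1) := by
          apply tsum_congr
          intro k
          by_cases hk : k ∈ S
          · rw [Set.indicator_of_mem hk, Set.indicator_of_mem hk]
          · rw [Set.indicator_of_notMem hk, Set.indicator_of_notMem hk, zero_mul]
  rw [hout, htotg]
  exact ⟨Stmt3Aux.upper β hβ S a hpos', Stmt3Aux.lower β hβ S a ha hpos'⟩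
end

section
/- Let s > 0, let {a_k}_{k=N}^{M} be non-negative reals and {b_k}_{k=N}^{M} a non-decreasing sequence of non-negative reals (with b_N := lim_{k→−∞} b_k when N = −∞). Then ∑_{k=N}^{M} a_k (∑_{i=k}^{M} a_i)^{s} b_k is comparable, with constants depending only on s, to ∑_{k=N+1}^{M} (b_k − b_{k−1}) (∑_{i=k}^{M} a_i)^{s+1} + (∑_{k=N}^{M} a_k)^{s+1} b_N. -/
open scoped ENNReal

open Set

namespace Stmt5Aux

noncomputable def tl (S : Set ℤ) (a : ℤ → ℝ≥0∞) (k : ℤ) : ℝ≥0∞ :=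
  ∑' i : {i : ℤ // i ∈ S ∧ k ≤ i}, a i

lemma tl_eq (S : Set ℤ) (a : ℤ → ℝ≥0∞) (k : ℤ) :
    tl S a k = ∑' i : ℤ, Set.indicator {i | i ∈ S ∧ k ≤ i} a i :=
  tsum_subtype _ _

lemma tl_anti (S : Set ℤ) (a : ℤ → ℝ≥0∞) {j k : ℤ} (h : j ≤ k) :
    tl S a k ≤ tl S a j := by
  rw [tl_eq, tl_eq]
  have hsub : {i : ℤ | i ∈ S ∧ k ≤ i} ⊆ {i : ℤ | i ∈ S ∧ j ≤ i} :=
    fun i hi => ⟨hi.1, h.trans hi.2⟩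
  exact ENNReal.tsum_le_tsum fun i =>
    Set.indicator_le_indicator_of_subset hsub (fun _ => zero_le) i

lemma tl_le_total (S : Set ℤ) (a : ℤ → ℝ≥0∞) (k : ℤ) :
    tl S a k ≤ ∑' i : S, a i := by
  rw [tl_eq, tsum_subtype]
  have hsub : {i : ℤ | i ∈ S ∧ k ≤ i} ⊆ S := fun i hi => hi.1
  exact ENNReal.tsum_le_tsum fun i =>
    Set.indicator_le_indicator_of_subset hsub (fun _ => zero_le) i

lemma tl_succ (S : Set ℤ) (a : ℤ → ℝ≥0∞) {k : ℤ} (hk : k ∈ S) :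
    tl S a k = a k + tl S a (k + 1) := by
  rw [tl_eq, tl_eq]
  have hset : {i : ℤ | i ∈ S ∧ k ≤ i} = {k} ∪ {i : ℤ | i ∈ S ∧ k + 1 ≤ i} := by
    ext i
    simp only [Set.mem_setOf_eq, Set.mem_union, Set.mem_singleton_iff]
    constructor
    · rintro ⟨hiS, hki⟩
      rcases eq_or_lt_of_le hki with h | h
      · exact Or.inl h.symm
      · exact Or.inr ⟨hiS, h⟩
    · rintro (rfl | ⟨hiS, hki⟩)
      · exact ⟨hk, le_refl _⟩
      · exact ⟨hiS, (by omega)⟩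
  rw [hset]
  have hdisj : Disjoint ({k} : Set ℤ) {i : ℤ | i ∈ S ∧ k + 1 ≤ i} := by
    simp only [Set.disjoint_singleton_left, Set.mem_setOf_eq]
    omega
  rw [← tsum_subtype, ← tsum_subtype]
  rw [ENNReal.summable.tsum_union_disjoint hdisj ENNReal.summable, tsum_singleton]

lemma tl_zero (S : Set ℤ) (a : ℤ → ℝ≥0∞)
    (hconv : ∀ ⦃j k l : ℤ⦄, j ∈ S → l ∈ S → j ≤ k → k ≤ l → k ∈ S)
    {j k : ℤ} (hj : j ∈ S) (hjk : j ≤ k) (hk : k ∉ S) : tl S a k = 0 := by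
  rw [tl_eq]
  refine ENNReal.summable.tsum_eq_zero_iff.2 fun i => ?_
  refine Set.indicator_of_notMem ?_ _
  rintro ⟨hiS, hki⟩
  exact hk (hconv hj hiS hjk hki)


lemma upper_power (S : Set ℤ) (a : ℤ → ℝ≥0∞) {s : ℝ} (hs : 0 < s) (j : ℤ) :
    ∑' k : {k : ℤ // k ∈ S ∧ j ≤ k}, a k * tl S a k ^ s ≤ tl S a j ^ (s + 1) := by
  have h1 : ∀ k : {k : ℤ // k ∈ S ∧ j ≤ k}, a k.1 * tl S a k.1 ^ s ≤ a k.1 * tl S a j ^ s :=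
    fun k => mul_le_mul_right (ENNReal.rpow_le_rpow (tl_anti S a k.2.2) hs.le) _
  refine (ENNReal.tsum_le_tsum h1).trans ?_
  rw [ENNReal.tsum_mul_right]
  have : (∑' k : {k : ℤ // k ∈ S ∧ j ≤ k}, a k.1) = tl S a j := rfl
  rw [this, add_comm, ENNReal.rpow_add_of_nonneg 1 s zero_le_one hs.le, ENNReal.rpow_one]

lemma upper_total (S : Set ℤ) (a : ℤ → ℝ≥0∞) {s : ℝ} (hs : 0 < s) :
    ∑' k : S, a k.1 * tl S a k.1 ^ s ≤ (∑' k : S, a k.1) ^ (s + 1) := by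
  have h1 : ∀ k : S, a k.1 * tl S a k.1 ^ s ≤ a k.1 * (∑' k : S, a k.1) ^ s :=
    fun k => mul_le_mul_right (ENNReal.rpow_le_rpow (tl_le_total S a k.1) hs.le) _
  refine (ENNReal.tsum_le_tsum h1).trans ?_
  rw [ENNReal.tsum_mul_right]
  rw [add_comm, ENNReal.rpow_add_of_nonneg 1 s zero_le_one hs.le, ENNReal.rpow_one]

lemma bern_real {s : ℝ} (hs : 0 < s) {X Y : ℝ} (hY : 0 ≤ Y) (hXY : Y ≤ X) :
    X ^ (s + 1) ≤ (s + 1) * (X - Y) * X ^ s + Y ^ (s + 1) := by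
  have hX : 0 ≤ X := hY.trans hXY
  rcases eq_or_lt_of_le hX with h0 | h0
  · have hX0 : X = 0 := h0.symm
    have hY0 : Y = 0 := by linarith
    rw [hX0, hY0]
    rw [Real.zero_rpow (by positivity)]
    simp
  · -- X > 0
    set t : ℝ := Y / X with ht
    have ht0 : 0 ≤ t := div_nonneg hY hX
    have ht1 : t ≤ 1 := (div_le_one h0).2 hXY
    have hb : 1 + (s + 1) * (t - 1) ≤ t ^ (s + 1) := by
      have := one_add_mul_self_le_rpow_one_add (s := t - 1) (by linarith) (p := s + 1) (by linarith)
      simpa using this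
    have hXs : (0:ℝ) < X ^ (s + 1) := Real.rpow_pos_of_pos h0 _
    have hmul : (1 + (s + 1) * (t - 1)) * X ^ (s + 1) ≤ t ^ (s + 1) * X ^ (s + 1) :=
      mul_le_mul_of_nonneg_right hb hXs.le
    have htX : t ^ (s + 1) * X ^ (s + 1) = Y ^ (s + 1) := by
      rw [← Real.mul_rpow ht0 hX, ht, div_mul_cancel₀ _ (ne_of_gt h0)]
    rw [htX] at hmul
    have hexp : X ^ (s + 1) = X * X ^ s := by
      rw [add_comm, Real.rpow_add h0, Real.rpow_one]
    have h1 : (1 - t) * X ^ (s + 1) = (X - Y) * X ^ s := by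
      rw [hexp, ht]
      field_simp
    nlinarith [hmul, h1]

lemma bern_ennreal {s : ℝ} (hs : 0 < s) {x y : ℝ≥0∞} (hyx : y ≤ x) (hx : x ≠ ⊤) :
    x ^ (s + 1) ≤ ENNReal.ofReal (s + 1) * ((x - y) * x ^ s) + y ^ (s + 1) := by
  have hy : y ≠ ⊤ := ne_top_of_le_ne_top hx hyx
  set X := x.toReal with hX
  set Y := y.toReal with hYdef
  have hY0 : 0 ≤ Y := ENNReal.toReal_nonneg
  have hYX : Y ≤ X := ENNReal.toReal_le_toReal hy hx |>.2 hyx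
  have hX0 : 0 ≤ X := ENNReal.toReal_nonneg
  have hxX : x = ENNReal.ofReal X := (ENNReal.ofReal_toReal hx).symm
  have hyY : y = ENNReal.ofReal Y := (ENNReal.ofReal_toReal hy).symm
  rw [hxX, hyY]
  rw [ENNReal.ofReal_rpow_of_nonneg hX0 (by linarith : (0:ℝ) ≤ s + 1), ENNReal.ofReal_rpow_of_nonneg hX0 hs.le,
    ENNReal.ofReal_rpow_of_nonneg hY0 (by linarith : (0:ℝ) ≤ s + 1), ← ENNReal.ofReal_sub _ hY0,
    ← ENNReal.ofReal_mul (by linarith : (0:ℝ) ≤ X - Y), ← ENNReal.ofReal_mul (by linarith : (0:ℝ) ≤ s + 1),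
    ← ENNReal.ofReal_add (mul_nonneg (by linarith) (mul_nonneg (by linarith) (Real.rpow_nonneg hX0 s))) (Real.rpow_nonneg hY0 _)]
  exact ENNReal.ofReal_le_ofReal (by simpa [mul_assoc] using bern_real hs hY0 hYX)

/-- prefix decomposition -/
lemma tl_prefix (S : Set ℤ) (a : ℤ → ℝ≥0∞)
    (hconv : ∀ ⦃j k l : ℤ⦄, j ∈ S → l ∈ S → j ≤ k → k ≤ l → k ∈ S)
    {j : ℤ} (hj : j ∈ S) :
    ∀ n, j ≤ n → tl S a j =
      (∑ m ∈ Finset.Ico j n, Set.indicator {i : ℤ | i ∈ S ∧ j ≤ i} a m) + tl S a n := by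
  refine Int.le_induction ?_ ?_
  · simp
  · intro n hn ih
    have hins : Finset.Ico j (n + 1) = insert n (Finset.Ico j n) := by
      ext m
      simp only [Finset.mem_Ico, Finset.mem_insert]
      omega
    have hnm : n ∉ Finset.Ico j n := by simp
    rw [hins, Finset.sum_insert hnm]
    by_cases hnS : n ∈ S
    · have hind : Set.indicator {i : ℤ | i ∈ S ∧ j ≤ i} a n = a n :=
        Set.indicator_of_mem (show n ∈ {i : ℤ | i ∈ S ∧ j ≤ i} from ⟨hnS, hn⟩) a
      rw [hind, ih, tl_succ S a hnS]
      ring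
    · have h1 : tl S a n = 0 := tl_zero S a hconv hj hn hnS
      have h2 : tl S a (n + 1) = 0 :=
        le_antisymm (h1 ▸ tl_anti S a (by omega)) zero_le
      have hind : Set.indicator {i : ℤ | i ∈ S ∧ j ≤ i} a n = 0 :=
        Set.indicator_of_notMem (fun h => hnS (Set.mem_setOf_eq ▸ h).1) a
      rw [hind, ih, h1, h2]
      ring

lemma lower_power (S : Set ℤ) (a : ℤ → ℝ≥0∞) {s : ℝ} (hs : 0 < s)
    (hconv : ∀ ⦃j k l : ℤ⦄, j ∈ S → l ∈ S → j ≤ k → k ≤ l → k ∈ S)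
    (ha : ∀ k ∈ S, a k ≠ ⊤) {j : ℤ} (hj : j ∈ S) :
    tl S a j ^ (s + 1) ≤ ENNReal.ofReal (s + 1) *
      ∑' k : {k : ℤ // k ∈ S ∧ j ≤ k}, a k.1 * tl S a k.1 ^ s := by
  set c := ENNReal.ofReal (s + 1) with hc
  have hc0 : c ≠ 0 := (ENNReal.ofReal_pos.2 (by linarith)).ne'
  set G := ∑' k : {k : ℤ // k ∈ S ∧ j ≤ k}, a k.1 * tl S a k.1 ^ s with hG
  by_cases htop : tl S a j = ⊤
  · have hall : ∀ k, k ∈ S → j ≤ k → tl S a k = ⊤ := by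
      intro k hkS hjk
      by_contra hfin
      have hdec := tl_prefix S a hconv hj k hjk
      have hP : (∑ m ∈ Finset.Ico j k, Set.indicator {i : ℤ | i ∈ S ∧ j ≤ i} a m) ≠ ⊤ := by
        refine LT.lt.ne ?_
        refine ENNReal.sum_lt_top.2 fun m _ => ?_
        by_cases hm : m ∈ {i : ℤ | i ∈ S ∧ j ≤ i}
        · rw [Set.indicator_of_mem hm]
          exact (ha m hm.1).lt_top
        · rw [Set.indicator_of_notMem hm]
          exact ENNReal.zero_lt_top
      exact (ENNReal.add_ne_top.2 ⟨hP, hfin⟩) (hdec ▸ htop)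
    have hex : ∃ k, k ∈ S ∧ j ≤ k ∧ a k ≠ 0 := by
      by_contra hno
      push_neg at hno
      have hz : tl S a j = 0 := by
        rw [tl_eq]
        refine ENNReal.summable.tsum_eq_zero_iff.2 fun i => ?_
        by_cases hi : i ∈ {i : ℤ | i ∈ S ∧ j ≤ i}
        · rw [Set.indicator_of_mem hi]; exact hno i hi.1 hi.2
        · exact Set.indicator_of_notMem hi a
      rw [hz] at htop
      exact ENNReal.zero_ne_top htop
    obtain ⟨k, hkS, hjk, hk0⟩ := hex
    have hterm : a k * tl S a k ^ s = ⊤ := by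
      rw [hall k hkS hjk, ENNReal.top_rpow_of_pos hs, ENNReal.mul_top hk0]
    have hGtop : G = ⊤ :=
      top_le_iff.1 (hterm ▸ ENNReal.le_tsum (⟨k, hkS, hjk⟩ : {k : ℤ // k ∈ S ∧ j ≤ k}))
    rw [hGtop, ENNReal.mul_top hc0]
    exact le_top
  · -- finite case
    have key : ∀ n, j ≤ n → tl S a j ^ (s + 1) ≤
        c * (∑ m ∈ Finset.Ico j n, Set.indicator S (fun m => a m * tl S a m ^ s) m)
          + tl S a n ^ (s + 1) := by
      refine Int.le_induction ?_ ?_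
      · simp
      · intro n hn ih
        have hstep : tl S a n ^ (s + 1) ≤
            c * Set.indicator S (fun m => a m * tl S a m ^ s) n + tl S a (n + 1) ^ (s + 1) := by
          by_cases hnS : n ∈ S
          · have hfn : tl S a n ≠ ⊤ := fun h => htop (top_le_iff.1 (h ▸ tl_anti S a hn))
            have hfn1 : tl S a (n + 1) ≠ ⊤ :=
              fun h => hfn (top_le_iff.1 (h ▸ tl_anti S a (by omega : n ≤ n + 1)))
            have hsub : tl S a n - tl S a (n + 1) = a n := by
              rw [tl_succ S a hnS]
              exact ENNReal.add_sub_cancel_right hfn1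
            have hb := bern_ennreal hs (tl_anti S a (by omega : n ≤ n + 1)) hfn
            rw [hsub] at hb
            rwa [Set.indicator_of_mem hnS]
          · have h1 : tl S a n = 0 := tl_zero S a hconv hj hn hnS
            rw [h1, ENNReal.zero_rpow_of_pos (by linarith)]
            exact zero_le
        have hins : Finset.Ico j (n + 1) = insert n (Finset.Ico j n) := by
          ext m
          simp only [Finset.mem_Ico, Finset.mem_insert]
          omega
        have hnm : n ∉ Finset.Ico j n := by simp
        calc tl S a j ^ (s + 1)
            ≤ c * (∑ m ∈ Finset.Ico j n, Set.indicator S (fun m => a m * tl S a m ^ s) m)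
              + tl S a n ^ (s + 1) := ih
          _ ≤ c * (∑ m ∈ Finset.Ico j n, Set.indicator S (fun m => a m * tl S a m ^ s) m)
              + (c * Set.indicator S (fun m => a m * tl S a m ^ s) n
                + tl S a (n + 1) ^ (s + 1)) := add_le_add_right hstep _
          _ = c * (∑ m ∈ Finset.Ico j (n + 1), Set.indicator S (fun m => a m * tl S a m ^ s) m)
              + tl S a (n + 1) ^ (s + 1) := by
                rw [hins, Finset.sum_insert hnm]
                ring
    have hQG : ∀ n, (∑ m ∈ Finset.Ico j n, Set.indicator S (fun m => a m * tl S a m ^ s) m) ≤ G := by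
      intro n
      have heq : ∀ m ∈ Finset.Ico j n, Set.indicator S (fun m => a m * tl S a m ^ s) m =
          Set.indicator {k : ℤ | k ∈ S ∧ j ≤ k} (fun m => a m * tl S a m ^ s) m := by
        intro m hm
        rw [Finset.mem_Ico] at hm
        by_cases hmS : m ∈ S
        · rw [Set.indicator_of_mem hmS, Set.indicator_of_mem (show m ∈ {k : ℤ | k ∈ S ∧ j ≤ k} from ⟨hmS, hm.1⟩)]
        · rw [Set.indicator_of_notMem hmS,
            Set.indicator_of_notMem (fun h => hmS (Set.mem_setOf_eq ▸ h).1)]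
      have hGi0 : (∑' k : {k : ℤ // k ∈ S ∧ j ≤ k}, a k.1 * tl S a k.1 ^ s) =
          ∑' m : ℤ, Set.indicator {k : ℤ | k ∈ S ∧ j ≤ k} (fun m => a m * tl S a m ^ s) m :=
        tsum_subtype {k : ℤ | k ∈ S ∧ j ≤ k} (fun m => a m * tl S a m ^ s)
      rw [Finset.sum_congr rfl heq, hG, hGi0]
      exact ENNReal.sum_le_tsum _
    have hmain : ∀ n, j ≤ n → tl S a j ^ (s + 1) ≤ c * G + tl S a n ^ (s + 1) :=
      fun n hn => (key n hn).trans (add_le_add_left (mul_le_mul_right (hQG n) c) _)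
    by_cases hR : c * G = ⊤
    · rw [hR]; exact le_top
    refine ENNReal.le_of_forall_pos_le_add fun ε hε _ => ?_
    set η : ℝ≥0∞ := min 1 (ε : ℝ≥0∞) with hη
    have hη0 : η ≠ 0 := (lt_min one_pos (by exact_mod_cast hε)).ne'
    have hηtop : η ≠ ⊤ := ne_top_of_le_ne_top ENNReal.one_ne_top (min_le_left _ _)
    obtain ⟨n, hn, hτ⟩ : ∃ n, j ≤ n ∧ tl S a n ≤ η := by
      by_cases hle : tl S a j ≤ η
      · exact ⟨j, le_refl j, hle⟩
      push_neg at hle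
      have htl0 : tl S a j ≠ 0 := fun h => (not_lt_of_ge (zero_le : (0:ℝ≥0∞) ≤ η)) (h ▸ hle)
      have hlt' : tl S a j - η < ⨆ t : Finset ℤ, ∑ m ∈ t, Set.indicator {i : ℤ | i ∈ S ∧ j ≤ i} a m := by
        rw [← ENNReal.tsum_eq_iSup_sum, ← tl_eq]
        exact ENNReal.sub_lt_self htop htl0 hη0
      obtain ⟨t, ht⟩ := lt_iSup_iff.1 hlt'
      set M := (insert j t).max' (Finset.insert_nonempty _ _) with hMdef
      set n := max j (1 + M) with hndef
      refine ⟨n, le_max_left _ _, ?_⟩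
      have hmem : ∀ m ∈ t, Set.indicator {i : ℤ | i ∈ S ∧ j ≤ i} a m ≠ 0 → m ∈ Finset.Ico j n := by
        intro m hm h0
        have hmset : m ∈ {i : ℤ | i ∈ S ∧ j ≤ i} := by
          by_contra hx
          exact h0 (Set.indicator_of_notMem hx a)
        have hmM : m ≤ M := Finset.le_max' _ m (Finset.mem_insert_of_mem hm)
        have hMn : 1 + M ≤ n := le_max_right _ _
        exact Finset.mem_Ico.2 ⟨hmset.2, by omega⟩
      have hsum_le : (∑ m ∈ t, Set.indicator {i : ℤ | i ∈ S ∧ j ≤ i} a m) ≤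
          ∑ m ∈ Finset.Ico j n, Set.indicator {i : ℤ | i ∈ S ∧ j ≤ i} a m := by
        rw [← Finset.sum_filter_of_ne hmem]
        exact Finset.sum_le_sum_of_subset (fun m hm => (Finset.mem_filter.1 hm).2)
      have hP_le_tl : (∑ m ∈ Finset.Ico j n, Set.indicator {i : ℤ | i ∈ S ∧ j ≤ i} a m) ≤ tl S a j := by
        rw [tl_eq]
        exact ENNReal.sum_le_tsum _
      have hPfin : (∑ m ∈ Finset.Ico j n, Set.indicator {i : ℤ | i ∈ S ∧ j ≤ i} a m) ≠ ⊤ :=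
        ne_top_of_le_ne_top htop hP_le_tl
      have hdec := tl_prefix S a hconv hj n (le_max_left _ _)
      have hlt2 : tl S a j < (∑ m ∈ Finset.Ico j n, Set.indicator {i : ℤ | i ∈ S ∧ j ≤ i} a m) + η := by
        calc tl S a j = (tl S a j - η) + η := (tsub_add_cancel_of_le hle.le).symm
          _ < (∑ m ∈ t, Set.indicator {i : ℤ | i ∈ S ∧ j ≤ i} a m) + η :=
              ENNReal.add_lt_add_right hηtop ht
          _ ≤ _ := add_le_add_left hsum_le _
      rw [hdec] at hlt2
      exact le_of_lt ((ENNReal.add_lt_add_iff_left hPfin).1 hlt2)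
    have hτp : tl S a n ^ (s + 1) ≤ (ε : ℝ≥0∞) :=
      calc tl S a n ^ (s + 1) ≤ η ^ (s + 1) := ENNReal.rpow_le_rpow hτ (by linarith)
        _ ≤ η ^ (1 : ℝ) := ENNReal.rpow_le_rpow_of_exponent_ge (min_le_left _ _) (by linarith)
        _ = η := ENNReal.rpow_one η
        _ ≤ (ε : ℝ≥0∞) := min_le_right _ _
    exact (hmain n hn).trans (add_le_add_right hτp _)
  
lemma G_le_total (S : Set ℤ) (a : ℤ → ℝ≥0∞) (s : ℝ) (j : ℤ) :
    (∑' k : {k : ℤ // k ∈ S ∧ j ≤ k}, a k.1 * tl S a k.1 ^ s) ≤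
      ∑' k : S, a k.1 * tl S a k.1 ^ s := by
  have h1 : (∑' k : {k : ℤ // k ∈ S ∧ j ≤ k}, a k.1 * tl S a k.1 ^ s) =
      ∑' m : ℤ, Set.indicator {k : ℤ | k ∈ S ∧ j ≤ k} (fun m => a m * tl S a m ^ s) m :=
    tsum_subtype {k : ℤ | k ∈ S ∧ j ≤ k} (fun m => a m * tl S a m ^ s)
  have h2 : (∑' k : S, a k.1 * tl S a k.1 ^ s) =
      ∑' m : ℤ, Set.indicator S (fun m => a m * tl S a m ^ s) m :=
    tsum_subtype S (fun m => a m * tl S a m ^ s)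
  rw [h1, h2]
  have hsub : {k : ℤ | k ∈ S ∧ j ≤ k} ⊆ S := fun k hk => hk.1
  exact ENNReal.tsum_le_tsum fun m =>
    Set.indicator_le_indicator_of_subset hsub (fun _ => zero_le) m

lemma lower_total (S : Set ℤ) (a : ℤ → ℝ≥0∞) {s : ℝ} (hs : 0 < s)
    (hconv : ∀ ⦃j k l : ℤ⦄, j ∈ S → l ∈ S → j ≤ k → k ≤ l → k ∈ S)
    (ha : ∀ k ∈ S, a k ≠ ⊤) :
    (∑' k : S, a k.1) ^ (s + 1) ≤
      ENNReal.ofReal (s + 1) * ∑' k : S, a k.1 * tl S a k.1 ^ s := by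
  classical
  set c := ENNReal.ofReal (s + 1) with hc
  set Gt := ∑' k : S, a k.1 * tl S a k.1 ^ s with hGt
  by_cases hR : c * Gt = ⊤
  · rw [hR]; exact le_top
  by_contra hcon
  push_neg at hcon
  set r := (c * Gt) ^ (s + 1)⁻¹ with hr
  have hrp : r ^ (s + 1) = c * Gt := ENNReal.rpow_inv_rpow (by linarith) _
  have hrA : r < ∑' k : S, a k.1 := by
    have h := hcon
    rw [← hrp] at h
    exact (ENNReal.rpow_lt_rpow_iff (by linarith : (0:ℝ) < s + 1)).1 h
  have hA : (∑' k : S, a k.1) = ∑' m : ℤ, Set.indicator S a m := tsum_subtype _ _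
  rw [hA, ENNReal.tsum_eq_iSup_sum] at hrA
  obtain ⟨t, ht⟩ := lt_iSup_iff.1 hrA
  have hne : ∃ m ∈ t, Set.indicator S a m ≠ 0 := by
    by_contra hno
    push_neg at hno
    rw [Finset.sum_eq_zero hno] at ht
    exact (not_lt_of_ge (zero_le : (0:ℝ≥0∞) ≤ r)) ht
  obtain ⟨m₀, hm₀t, hm₀⟩ := hne
  have hm₀S : m₀ ∈ S := by
    by_contra hx
    exact hm₀ (Set.indicator_of_notMem hx a)
  set tf := t.filter (· ∈ S) with htf
  have htfne : tf.Nonempty := ⟨m₀, Finset.mem_filter.2 ⟨hm₀t, hm₀S⟩⟩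
  set j := tf.min' htfne with hjdef
  have hjS : j ∈ S := (Finset.mem_filter.1 (tf.min'_mem htfne)).2
  have hsum : (∑ m ∈ t, Set.indicator S a m) ≤ tl S a j := by
    rw [tl_eq]
    refine le_trans (Finset.sum_le_sum fun m hm => ?_) (ENNReal.sum_le_tsum t)
    by_cases hmS : m ∈ S
    · have hjm : j ≤ m := tf.min'_le m (Finset.mem_filter.2 ⟨hm, hmS⟩)
      rw [Set.indicator_of_mem hmS,
        Set.indicator_of_mem (show m ∈ {i : ℤ | i ∈ S ∧ j ≤ i} from ⟨hmS, hjm⟩) a]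
    · rw [Set.indicator_of_notMem hmS]
      exact zero_le
  have hrtl : r < tl S a j := ht.trans_le hsum
  have h2 : c * Gt < tl S a j ^ (s + 1) := by
    rw [← hrp]
    exact ENNReal.rpow_lt_rpow hrtl (by linarith)
  have h3 : tl S a j ^ (s + 1) ≤ c * Gt :=
    (lower_power S a hs hconv ha hjS).trans (mul_le_mul_right (G_le_total S a s j) c)
  exact lt_irrefl _ (h2.trans_le h3)

lemma b_teles (S : Set ℤ) (b : ℤ → ℝ≥0∞)
    (hconv : ∀ ⦃j k l : ℤ⦄, j ∈ S → l ∈ S → j ≤ k → k ≤ l → k ∈ S)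
    (hmono : ∀ j ∈ S, ∀ k ∈ S, j ≤ k → b j ≤ b k)
    {m : ℤ} (hm : m ∈ S) :
    ∀ k, m ≤ k → k ∈ S → (∑ j ∈ Finset.Ioc m k, (b j - b (j - 1))) = b k - b m := by
  refine Int.le_induction ?_ ?_
  · intro _
    rw [Finset.Ioc_self, Finset.sum_empty, tsub_self]
  · intro n hn ih hn1
    have hnS : n ∈ S := hconv hm hn1 hn (by omega)
    have hins : Finset.Ioc m (n + 1) = insert (n + 1) (Finset.Ioc m n) := by
      ext x
      simp only [Finset.mem_Ioc, Finset.mem_insert]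
      omega
    have hnm : n + 1 ∉ Finset.Ioc m n := by simp
    rw [hins, Finset.sum_insert hnm, ih hnS, show n + 1 - 1 = n by omega]
    exact tsub_add_tsub_cancel (hmono n hnS (n + 1) hn1 (by omega)) (hmono m hm n hnS hn)

/-- the sum of increments up to `k` is at most `b k - β` -/
lemma D_le (S : Set ℤ) (b : ℤ → ℝ≥0∞)
    (hconv : ∀ ⦃j k l : ℤ⦄, j ∈ S → l ∈ S → j ≤ k → k ≤ l → k ∈ S)
    (hmono : ∀ j ∈ S, ∀ k ∈ S, j ≤ k → b j ≤ b k)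
    {k : ℤ} (hk : k ∈ S) :
    (∑' j : ℤ, Set.indicator {j : ℤ | (j ∈ S ∧ j - 1 ∈ S) ∧ j ≤ k} (fun j => b j - b (j - 1)) j)
      ≤ b k := by
  rw [ENNReal.tsum_eq_iSup_sum]
  refine iSup_le fun t => ?_
  classical
  set e := Set.indicator {j : ℤ | (j ∈ S ∧ j - 1 ∈ S) ∧ j ≤ k} (fun j => b j - b (j - 1)) with he
  by_cases hne : ∃ x ∈ t, e x ≠ 0
  · obtain ⟨x₀, hx₀t, hx₀⟩ := hne
    have hx₀mem : x₀ ∈ {j : ℤ | (j ∈ S ∧ j - 1 ∈ S) ∧ j ≤ k} := by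
      by_contra hx
      exact hx₀ (Set.indicator_of_notMem hx _)
    set tf := t.filter (fun x => x ∈ {j : ℤ | (j ∈ S ∧ j - 1 ∈ S) ∧ j ≤ k}) with htf
    have htfne : tf.Nonempty := ⟨x₀, Finset.mem_filter.2 ⟨hx₀t, hx₀mem⟩⟩
    set m := tf.min' htfne - 1 with hmdef
    have hminmem : tf.min' htfne ∈ {j : ℤ | (j ∈ S ∧ j - 1 ∈ S) ∧ j ≤ k} :=
      (Finset.mem_filter.1 (tf.min'_mem htfne)).2
    have hmS : m ∈ S := hminmem.1.2
    have hmk : m ≤ k := by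
      have := hminmem.2
      omega
    have hstep1 : (∑ x ∈ t, e x) = ∑ x ∈ tf, e x := by
      rw [htf, Finset.sum_filter_of_ne]
      intro x hx h0
      by_contra hxmem
      exact h0 (Set.indicator_of_notMem hxmem _)
    have hsub : tf ⊆ Finset.Ioc m k := by
      intro x hx
      have hxmem := (Finset.mem_filter.1 hx).2
      have hge : tf.min' htfne ≤ x := tf.min'_le x hx
      exact Finset.mem_Ioc.2 ⟨by omega, hxmem.2⟩
    have hstep2 : (∑ x ∈ tf, e x) ≤ ∑ x ∈ Finset.Ioc m k, e x :=
      Finset.sum_le_sum_of_subset hsub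
    have hstep3 : (∑ x ∈ Finset.Ioc m k, e x) ≤ ∑ j ∈ Finset.Ioc m k, (b j - b (j - 1)) :=
      Finset.sum_le_sum fun j _ => Set.indicator_apply_le (fun _ => le_refl _)
    have hstep4 := b_teles S b hconv hmono hmS k hmk hk
    calc (∑ x ∈ t, e x) = ∑ x ∈ tf, e x := hstep1
      _ ≤ ∑ x ∈ Finset.Ioc m k, e x := hstep2
      _ ≤ ∑ j ∈ Finset.Ioc m k, (b j - b (j - 1)) := hstep3
      _ = b k - b m := hstep4
      _ ≤ b k := tsub_le_self
  · push_neg at hne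
    rw [Finset.sum_eq_zero hne]
    exact zero_le

/-- upper decomposition of `b k` -/
lemma b_le (S : Set ℤ) (b : ℤ → ℝ≥0∞)
    (hconv : ∀ ⦃j k l : ℤ⦄, j ∈ S → l ∈ S → j ≤ k → k ≤ l → k ∈ S)
    (hb : ∀ k ∈ S, b k ≠ ⊤)
    (hmono : ∀ j ∈ S, ∀ k ∈ S, j ≤ k → b j ≤ b k)
    {k : ℤ} (hk : k ∈ S) :
    b k ≤ (∑' j : ℤ, Set.indicator {j : ℤ | (j ∈ S ∧ j - 1 ∈ S) ∧ j ≤ k}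
        (fun j => b j - b (j - 1)) j) + ⨅ m : S, b m.1 := by
  set β := ⨅ m : S, b m.1 with hβ
  have hβle : β ≤ b k := iInf_le (fun m : S => b m.1) (⟨k, hk⟩ : S)
  have hsub : b k - β ≤ ∑' j : ℤ, Set.indicator {j : ℤ | (j ∈ S ∧ j - 1 ∈ S) ∧ j ≤ k}
      (fun j => b j - b (j - 1)) j := by
    rw [hβ, ENNReal.sub_iInf]
    refine iSup_le fun m => ?_
    by_cases hmk : k ≤ m.1
    · have : b k ≤ b m.1 := hmono k hk m.1 m.2 hmk
      rw [tsub_eq_zero_of_le this]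
      exact zero_le
    · push_neg at hmk
      have hteles := b_teles S b hconv hmono m.2 k (by omega) hk
      rw [← hteles]
      refine le_trans (Finset.sum_le_sum fun j hj => ?_) (ENNReal.sum_le_tsum _)
      rw [Finset.mem_Ioc] at hj
      have hjS : j ∈ S := hconv m.2 hk (by omega) hj.2
      have hj1S : j - 1 ∈ S := hconv m.2 hk (by omega) (by omega)
      rw [Set.indicator_of_mem (show j ∈ {j : ℤ | (j ∈ S ∧ j - 1 ∈ S) ∧ j ≤ k} from
        ⟨⟨hjS, hj1S⟩, hj.2⟩)]
  calc b k = (b k - β) + β := (tsub_add_cancel_of_le hβle).symm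
    _ ≤ _ := add_le_add_left hsub _

lemma swap_core (S : Set ℤ) (a b : ℤ → ℝ≥0∞) (s : ℝ) :
    (∑' k : ℤ, Set.indicator S (fun k => a k * tl S a k ^ s) k *
      ∑' j : ℤ, Set.indicator {j : ℤ | (j ∈ S ∧ j - 1 ∈ S) ∧ j ≤ k} (fun j => b j - b (j - 1)) j)
    = ∑' j : ℤ, Set.indicator {j : ℤ | j ∈ S ∧ j - 1 ∈ S} (fun j => b j - b (j - 1)) j *
        ∑' k : ℤ, Set.indicator {i : ℤ | i ∈ S ∧ j ≤ i} (fun k => a k * tl S a k ^ s) k := by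
  classical
  set f : ℤ → ℝ≥0∞ := fun k => a k * tl S a k ^ s with hf
  set F : ℤ → ℤ → ℝ≥0∞ := fun k j => Set.indicator S f k *
    Set.indicator {j : ℤ | (j ∈ S ∧ j - 1 ∈ S) ∧ j ≤ k} (fun j => b j - b (j - 1)) j with hF
  have h1 : ∀ k : ℤ, (Set.indicator S f k *
      ∑' j : ℤ, Set.indicator {j : ℤ | (j ∈ S ∧ j - 1 ∈ S) ∧ j ≤ k} (fun j => b j - b (j - 1)) j)
      = ∑' j : ℤ, F k j := fun k => ENNReal.tsum_mul_left.symm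
  have hFeq : ∀ k j : ℤ, F k j =
      Set.indicator {j : ℤ | j ∈ S ∧ j - 1 ∈ S} (fun j => b j - b (j - 1)) j *
        Set.indicator {i : ℤ | i ∈ S ∧ j ≤ i} f k := by
    intro k j
    simp only [hF, Set.indicator_apply, Set.mem_setOf_eq]
    split_ifs <;> first | tauto | ring
  have h2 : ∀ j : ℤ, (∑' k : ℤ, F k j) =
      Set.indicator {j : ℤ | j ∈ S ∧ j - 1 ∈ S} (fun j => b j - b (j - 1)) j *
        ∑' k : ℤ, Set.indicator {i : ℤ | i ∈ S ∧ j ≤ i} f k := by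
    intro j
    rw [tsum_congr (fun k => hFeq k j), ENNReal.tsum_mul_left]
  rw [tsum_congr h1, ENNReal.tsum_comm, tsum_congr h2]

end Stmt5Aux

open Stmt5Aux in
/-- For `s > 0`, non-negative `a` and a non-decreasing non-negative `b`,
`∑_k aₖ (∑_{i≥k} aᵢ)^s bₖ ≈ ∑_{k} (bₖ − b_{k−1}) (∑_{i≥k} aᵢ)^{s+1} + (∑_k aₖ)^{s+1} b_N`,
with constants depending only on `s` (here `b_N` is the infimum of `b` over the index set). -/
theorem stmt5 (s : ℝ) (hs : 0 < s) :
    ∃ C : ℝ≥0∞, 0 < C ∧ C ≠ ⊤ ∧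
      ∀ (S : Set ℤ) (a b : ℤ → ℝ≥0∞),
        (∀ ⦃j k l : ℤ⦄, j ∈ S → l ∈ S → j ≤ k → k ≤ l → k ∈ S) →
        (∀ k ∈ S, a k ≠ ⊤) →
        (∀ k ∈ S, b k ≠ ⊤) →
        (∀ j ∈ S, ∀ k ∈ S, j ≤ k → b j ≤ b k) →
        (∑' k : S, a k.1 * (∑' i : {i : ℤ // i ∈ S ∧ k.1 ≤ i}, a i.1) ^ s * b k.1)
            ≤ C * ((∑' k : {k : ℤ // k ∈ S ∧ k - 1 ∈ S},
                (b k.1 - b (k.1 - 1)) * (∑' i : {i : ℤ // i ∈ S ∧ k.1 ≤ i}, a i.1) ^ (s + 1))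
              + (∑' k : S, a k.1) ^ (s + 1) * ⨅ k : S, b k.1) ∧
        ((∑' k : {k : ℤ // k ∈ S ∧ k - 1 ∈ S},
            (b k.1 - b (k.1 - 1)) * (∑' i : {i : ℤ // i ∈ S ∧ k.1 ≤ i}, a i.1) ^ (s + 1))
          + (∑' k : S, a k.1) ^ (s + 1) * ⨅ k : S, b k.1)
            ≤ C * ∑' k : S, a k.1 * (∑' i : {i : ℤ // i ∈ S ∧ k.1 ≤ i}, a i.1) ^ s * b k.1 := by
  classical
  have hc0 : (0:ℝ≥0∞) < ENNReal.ofReal (s + 1) := ENNReal.ofReal_pos.2 (by linarith)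
  have hc1 : (1:ℝ≥0∞) ≤ ENNReal.ofReal (s + 1) := by
    rw [← ENNReal.ofReal_one]
    exact ENNReal.ofReal_le_ofReal (by linarith)
  refine ⟨2 * ENNReal.ofReal (s + 1), ENNReal.mul_pos (by norm_num) hc0.ne', 
    ENNReal.mul_ne_top (by norm_num) ENNReal.ofReal_ne_top, ?_⟩
  intro S a b hconv ha hb hmono
  set c := ENNReal.ofReal (s + 1) with hcdef
  -- basic objects
  set f : ℤ → ℝ≥0∞ := fun k => a k * tl S a k ^ s with hf
  set β := ⨅ k : S, b k.1 with hβ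
  set A := ∑' k : S, a k.1 with hA
  set L := ∑' k : S, a k.1 * tl S a k.1 ^ s * b k.1 with hL
  set R1 := ∑' k : {k : ℤ // k ∈ S ∧ k - 1 ∈ S}, (b k.1 - b (k.1 - 1)) * tl S a k.1 ^ (s + 1)
    with hR1
  set D : ℤ → ℝ≥0∞ := fun k => ∑' j : ℤ,
    Set.indicator {j : ℤ | (j ∈ S ∧ j - 1 ∈ S) ∧ j ≤ k} (fun j => b j - b (j - 1)) j with hD
  set δ : ℤ → ℝ≥0∞ := fun j =>
    Set.indicator {j : ℤ | j ∈ S ∧ j - 1 ∈ S} (fun j => b j - b (j - 1)) j with hδ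
  set Gz : ℤ → ℝ≥0∞ := fun j => ∑' k : ℤ, Set.indicator {i : ℤ | i ∈ S ∧ j ≤ i} f k with hGz
  have hGzeq : ∀ j : ℤ, Gz j = ∑' k : {k : ℤ // k ∈ S ∧ j ≤ k}, a k.1 * tl S a k.1 ^ s :=
    fun j => (tsum_subtype {i : ℤ | i ∈ S ∧ j ≤ i} f).symm
  have hGt : (∑' k : S, a k.1 * tl S a k.1 ^ s) =
      ∑' k : ℤ, Set.indicator S f k := tsum_subtype S f
  -- subtype-to-indicator conversions
  have hLz : L = ∑' k : ℤ, Set.indicator S (fun k => a k * tl S a k ^ s * b k) k :=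
    tsum_subtype S (fun k => a k * tl S a k ^ s * b k)
  have hR1z : R1 = ∑' j : ℤ,
      Set.indicator {j : ℤ | j ∈ S ∧ j - 1 ∈ S} (fun j => (b j - b (j - 1)) * tl S a j ^ (s + 1)) j :=
    tsum_subtype {j : ℤ | j ∈ S ∧ j - 1 ∈ S} (fun j => (b j - b (j - 1)) * tl S a j ^ (s + 1))
  have hR1δ : R1 = ∑' j : ℤ, δ j * tl S a j ^ (s + 1) := by
    rw [hR1z]
    refine tsum_congr fun j => ?_
    simp only [hδ, Set.indicator_apply]
    split_ifs
    · rfl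
    · rw [zero_mul]
  have hswap : (∑' k : ℤ, Set.indicator S f k * D k) = ∑' j : ℤ, δ j * Gz j :=
    swap_core S a b s
  -- Direction 1
  have dir1 : L ≤ R1 + A ^ (s + 1) * β := by
    have hptw : ∀ k : ℤ, Set.indicator S (fun k => a k * tl S a k ^ s * b k) k ≤
        Set.indicator S f k * D k + Set.indicator S f k * β := by
      intro k
      by_cases hk : k ∈ S
      · rw [Set.indicator_of_mem hk, Set.indicator_of_mem hk]
        calc a k * tl S a k ^ s * b k ≤ a k * tl S a k ^ s * (D k + β) :=
              mul_le_mul_right (b_le S b hconv hb hmono hk) _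
          _ = f k * D k + f k * β := by rw [hf]; ring
      · rw [Set.indicator_of_notMem hk, Set.indicator_of_notMem hk, zero_mul, zero_mul, add_zero]
    calc L ≤ ∑' k : ℤ, (Set.indicator S f k * D k + Set.indicator S f k * β) := by
          rw [hLz]; exact ENNReal.tsum_le_tsum hptw
      _ = (∑' k : ℤ, Set.indicator S f k * D k) + (∑' k : ℤ, Set.indicator S f k) * β := by
          rw [ENNReal.tsum_add, ENNReal.tsum_mul_right]
      _ ≤ R1 + A ^ (s + 1) * β := by
          refine add_le_add ?_ (mul_le_mul_left ?_ β)
          · rw [hswap, hR1δ]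
            refine ENNReal.tsum_le_tsum fun j => mul_le_mul_right ?_ _
            rw [hGzeq j]
            exact upper_power S a hs j
          · rw [← hGt]
            exact upper_total S a hs
  -- Direction 2 part B
  have dir2B : R1 ≤ c * L := by
    have hptw : ∀ j : ℤ, δ j * tl S a j ^ (s + 1) ≤ c * (δ j * Gz j) := by
      intro j
      by_cases hj : j ∈ {j : ℤ | j ∈ S ∧ j - 1 ∈ S}
      · have hlp := lower_power S a hs hconv ha hj.1
        rw [← hGzeq j] at hlp
        calc δ j * tl S a j ^ (s + 1) ≤ δ j * (c * Gz j) := mul_le_mul_right hlp _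
          _ = c * (δ j * Gz j) := by ring
      · simp [hδ, Set.indicator_of_notMem hj]
    calc R1 = ∑' j : ℤ, δ j * tl S a j ^ (s + 1) := hR1δ
      _ ≤ ∑' j : ℤ, c * (δ j * Gz j) := ENNReal.tsum_le_tsum hptw
      _ = c * ∑' j : ℤ, δ j * Gz j := ENNReal.tsum_mul_left
      _ = c * ∑' k : ℤ, Set.indicator S f k * D k := by rw [hswap]
      _ ≤ c * L := by
          refine mul_le_mul_right ?_ c
          rw [hLz]
          refine ENNReal.tsum_le_tsum fun k => ?_
          by_cases hk : k ∈ S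
          · rw [Set.indicator_of_mem hk, Set.indicator_of_mem hk]
            exact mul_le_mul_right (D_le S b hconv hmono hk) _
          · rw [Set.indicator_of_notMem hk, Set.indicator_of_notMem hk, zero_mul]
  -- Direction 2 part A
  have dir2A : A ^ (s + 1) * β ≤ c * L := by
    have h1 : A ^ (s + 1) ≤ c * ∑' k : S, a k.1 * tl S a k.1 ^ s :=
      lower_total S a hs hconv ha
    calc A ^ (s + 1) * β ≤ (c * ∑' k : S, a k.1 * tl S a k.1 ^ s) * β :=
          mul_le_mul_left h1 β
      _ = c * ∑' k : S, (a k.1 * tl S a k.1 ^ s) * β := by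
          rw [ENNReal.tsum_mul_right, mul_assoc]
      _ ≤ c * L := by
          refine mul_le_mul_right ?_ c
          rw [hL]
          exact ENNReal.tsum_le_tsum fun k => mul_le_mul_right (iInf_le _ k) _
  refine ⟨?_, ?_⟩
  · calc L ≤ R1 + A ^ (s + 1) * β := dir1
      _ ≤ 2 * c * (R1 + A ^ (s + 1) * β) := by
          refine le_mul_of_one_le_left zero_le ?_
          calc (1:ℝ≥0∞) ≤ 2 := one_le_two
            _ ≤ 2 * c := le_mul_of_one_le_right zero_le hc1
  · calc R1 + A ^ (s + 1) * β ≤ c * L + c * L := add_le_add dir2B dir2A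
      _ = 2 * c * L := by ring
end

section
/- Discrete Hardy inequality, case p ≤ 1, p ≤ q: let 0 < p ≤ 1, p ≤ q < ∞, and let {a_k}, {b_k} be non-negative sequences indexed by N ≤ k ≤ M. The inequality (∑_{k=N}^{M} (∑_{i=N}^{k} x_i b_i)^q a_k)^{1/q} ≤ C (∑_{k=N}^{M} x_k^p)^{1/p} holds for every non-negative sequence {x_k} if and only if H₁ := sup_{N ≤ k ≤ M} (∑_{i=k}^{M} a_i)^{1/q} b_k < ∞; moreover the best constant C is comparable to H₁ with constants depending only on p, q. -/
open scoped ENNReal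

namespace Hardy8aux

lemma tsum_rpow_le {ι : Type*} (f : ι → ℝ≥0∞) {p : ℝ} (hp0 : 0 < p) (hp1 : p ≤ 1) :
    (∑' i, f i) ^ p ≤ ∑' i, f i ^ p := by
  have hfin : ∀ s : Finset ι, (∑ i ∈ s, f i) ^ p ≤ ∑ i ∈ s, f i ^ p := by
    intro s
    induction s using Finset.cons_induction with
    | empty => simp [ENNReal.zero_rpow_of_pos hp0]
    | cons a s ha ih =>
        rw [Finset.sum_cons, Finset.sum_cons]
        exact le_trans (ENNReal.rpow_add_le_add_rpow _ _ hp0.le hp1) (add_le_add le_rfl ih)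
  have key : ∀ s : Finset ι, ∑ i ∈ s, f i ≤ (∑' i, f i ^ p) ^ (1 / p) := by
    intro s
    have h := ENNReal.rpow_le_rpow (le_trans (hfin s) (ENNReal.sum_le_tsum s))
      (by positivity : (0:ℝ) ≤ 1 / p)
    rwa [← ENNReal.rpow_mul, mul_one_div, div_self hp0.ne', ENNReal.rpow_one] at h
  have h2 : ∑' i, f i ≤ (∑' i, f i ^ p) ^ (1 / p) := by
    rw [ENNReal.tsum_eq_iSup_sum]; exact iSup_le key
  have h3 := ENNReal.rpow_le_rpow h2 hp0.le
  rwa [← ENNReal.rpow_mul, one_div_mul_cancel hp0.ne', ENNReal.rpow_one] at h3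

lemma tsum_inner_le {ι : Type*} {r : ℝ} (hr : 1 ≤ r) (w f : ι → ℝ≥0∞) :
    ∑' i, w i * f i ≤ (∑' i, w i) ^ (1 - r⁻¹) * (∑' i, w i * f i ^ r) ^ r⁻¹ := by
  have hr0 : (0:ℝ) < r := lt_of_lt_of_le one_pos hr
  have h1 : (0:ℝ) ≤ 1 - r⁻¹ := by
    have : r⁻¹ ≤ 1 := by
      rw [inv_le_one_iff₀]; right; exact hr
    linarith
  have h2 : (0:ℝ) ≤ r⁻¹ := by positivity
  rw [ENNReal.tsum_eq_iSup_sum]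
  refine iSup_le fun s => ?_
  refine le_trans (ENNReal.inner_le_weight_mul_Lp_of_nonneg s hr w f) ?_
  exact mul_le_mul' (ENNReal.rpow_le_rpow (ENNReal.sum_le_tsum s) h1)
    (ENNReal.rpow_le_rpow (ENNReal.sum_le_tsum s) h2)

lemma tsum_swap (S : Set ℤ) (g : ℤ → ℤ → ℝ≥0∞) :
    ∑' k : S, ∑' i : {i : ℤ // i ∈ S ∧ i ≤ k.1}, g k.1 i.1
      = ∑' i : S, ∑' k : {k : ℤ // k ∈ S ∧ i.1 ≤ k}, g k.1 i.1 := by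
  classical
  have hL : ∀ (T : Set ℤ) (h : ℤ → ℝ≥0∞),
      ∑' k : T, h k.1 = ∑' k : ℤ, if k ∈ T then h k else 0 := by
    intro T h
    rw [tsum_subtype]
    exact tsum_congr fun k => by simp [Set.indicator_apply]
  calc ∑' k : S, ∑' i : {i : ℤ // i ∈ S ∧ i ≤ k.1}, g k.1 i.1
      = ∑' k : ℤ, ∑' i : ℤ, (if k ∈ S ∧ i ∈ S ∧ i ≤ k then g k i else 0) := by
        rw [hL S fun k => ∑' i : {i : ℤ // i ∈ S ∧ i ≤ k}, g k i.1]
        refine tsum_congr fun k => ?_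
        by_cases hk : k ∈ S
        · simp only [hk, if_true, true_and]
          refine Eq.trans (hL {i | i ∈ S ∧ i ≤ k} fun i => g k i) ?_
          exact tsum_congr fun i => by by_cases hi : i ∈ S ∧ i ≤ k <;> simp [hi, Set.mem_setOf_eq]
        · simp [hk]
    _ = ∑' i : ℤ, ∑' k : ℤ, (if k ∈ S ∧ i ∈ S ∧ i ≤ k then g k i else 0) := ENNReal.tsum_comm
    _ = ∑' i : S, ∑' k : {k : ℤ // k ∈ S ∧ i.1 ≤ k}, g k.1 i.1 := by
        rw [hL S fun i => ∑' k : {k : ℤ // k ∈ S ∧ i ≤ k}, g k.1 i]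
        refine (tsum_congr fun i => ?_).symm
        by_cases hi : i ∈ S
        · simp only [hi, if_true]
          refine Eq.trans (hL {k | k ∈ S ∧ i ≤ k} fun k => g k i) ?_
          refine tsum_congr fun k => ?_
          by_cases hk : k ∈ S ∧ i ≤ k
          · simp [hk, hi, Set.mem_setOf_eq]
          · simp only [Set.mem_setOf_eq, hk, if_false]
            rw [if_neg]; tauto
        · rw [if_neg hi]
          refine (ENNReal.tsum_eq_zero.mpr fun k => ?_).symm
          rw [if_neg]; tauto

end Hardy8aux

/-- Discrete Hardy inequality, case `p ≤ 1`, `p ≤ q`: the Hardy-type inequality holds for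
all non-negative sequences `x` iff `H₁ = sup_k (∑_{i≥k} aᵢ)^{1/q} bₖ < ∞`, and the best
constant is comparable to `H₁` with constants depending only on `p, q`. -/
theorem stmt8 (p q : ℝ) (hp0 : 0 < p) (hp1 : p ≤ 1) (hpq : p ≤ q) :
    ∃ C : ℝ≥0∞, 0 < C ∧ C ≠ ⊤ ∧
      ∀ (S : Set ℤ) (a b : ℤ → ℝ≥0∞),
        (∀ ⦃j k l : ℤ⦄, j ∈ S → l ∈ S → j ≤ k → k ≤ l → k ∈ S) →
        (∀ k ∈ S, a k ≠ ⊤) →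
        (∀ k ∈ S, b k ≠ ⊤) →
        (∀ x : ℤ → ℝ≥0∞,
          (∑' k : S, (∑' i : {i : ℤ // i ∈ S ∧ i ≤ k.1}, x i.1 * b i.1) ^ q * a k.1) ^ (1 / q)
            ≤ C * (⨆ k : S, (∑' i : {i : ℤ // i ∈ S ∧ k.1 ≤ i}, a i.1) ^ (1 / q) * b k.1)
                * (∑' k : S, x k.1 ^ p) ^ (1 / p)) ∧
        (∀ C' : ℝ≥0∞,
          (∀ x : ℤ → ℝ≥0∞,
            (∑' k : S, (∑' i : {i : ℤ // i ∈ S ∧ i ≤ k.1}, x i.1 * b i.1) ^ q * a k.1) ^ (1 / q)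
              ≤ C' * (∑' k : S, x k.1 ^ p) ^ (1 / p)) →
          (⨆ k : S, (∑' i : {i : ℤ // i ∈ S ∧ k.1 ≤ i}, a i.1) ^ (1 / q) * b k.1) ≤ C * C') := by
  classical
  have hq0 : (0:ℝ) < q := lt_of_lt_of_le hp0 hpq
  have hp_ne : p ≠ 0 := hp0.ne'
  have hq_ne : q ≠ 0 := hq0.ne'
  refine ⟨1, zero_lt_one, ENNReal.one_ne_top, ?_⟩
  intro S a b _hconv _ha _hb
  constructor
  · -- upper bound
    intro x
    rw [one_mul]
    by_cases hx0 : (∑' k : S, x k.1 ^ p) = 0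
    · have hx' : ∀ k ∈ S, x k = 0 := by
        intro k hk
        have h := ENNReal.tsum_eq_zero.mp hx0 ⟨k, hk⟩
        exact (ENNReal.rpow_eq_zero_iff_of_pos hp0).mp h
      have hz : (∑' k : S, (∑' i : {i : ℤ // i ∈ S ∧ i ≤ k.1}, x i.1 * b i.1) ^ q * a k.1)
          = 0 := by
        refine ENNReal.tsum_eq_zero.mpr fun k => ?_
        have hin : (∑' i : {i : ℤ // i ∈ S ∧ i ≤ k.1}, x i.1 * b i.1) = 0 :=
          ENNReal.tsum_eq_zero.mpr fun i => by rw [hx' i.1 i.2.1, zero_mul]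
        rw [hin, ENNReal.zero_rpow_of_pos hq0, zero_mul]
      rw [hz, ENNReal.zero_rpow_of_pos (by positivity)]
      exact zero_le
    · set H := ⨆ k : S, (∑' i : {i : ℤ // i ∈ S ∧ k.1 ≤ i}, a i.1) ^ (1 / q) * b k.1
        with hHdef
      by_cases hH : H = ⊤
      · have hne : (∑' k : S, x k.1 ^ p) ^ (1 / p) ≠ 0 := by
          rw [ne_eq, ENNReal.rpow_eq_zero_iff_of_pos (by positivity : (0:ℝ) < 1 / p)]
          exact hx0
        rw [hH, ENNReal.top_mul hne]
        exact le_top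
      · -- main case: H ≠ ⊤
        set r : ℝ := q / p with hrdef
        have hr1 : 1 ≤ r := by rw [hrdef, le_div_iff₀ hp0]; linarith
        have hr0 : (0:ℝ) < r := lt_of_lt_of_le one_pos hr1
        have hpr : p * r = q := by rw [hrdef]; field_simp
        set A : ℤ → ℝ≥0∞ := fun j => ∑' i : {i : ℤ // i ∈ S ∧ j ≤ i}, a i.1 with hAdef
        set Y := ∑' k : S, x k.1 ^ p with hYdef
        have hbH : ∀ i : ℤ, i ∈ S → A i ^ (1 / q) * b i ≤ H := by
          intro i hi
          rw [hHdef]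
          simp only [hAdef]
          exact le_iSup
            (fun k : S => (∑' j : {j : ℤ // j ∈ S ∧ k.1 ≤ j}, a j.1) ^ (1 / q) * b k.1)
            (⟨i, hi⟩ : S)
        have hb' : ∀ i : ℤ, i ∈ S → A i ≠ 0 →
            b i ^ p ≤ H ^ p * ((A i)⁻¹) ^ (1 / r) := by
          intro i hi hA0
          by_cases hAtop : A i = ⊤
          · have hbi : b i = 0 := by
              by_contra hbi
              have htop : (⊤:ℝ≥0∞) ≤ H := by
                have := hbH i hi
                rwa [hAtop, ENNReal.top_rpow_of_pos (by positivity : (0:ℝ) < 1 / q),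
                  ENNReal.top_mul hbi] at this
              exact hH (top_le_iff.mp htop)
            rw [hbi, ENNReal.zero_rpow_of_pos hp0]
            exact zero_le
          · have h1 : b i ^ q * A i ≤ H ^ q := by
              have h := ENNReal.rpow_le_rpow (hbH i hi) hq0.le
              rwa [ENNReal.mul_rpow_of_nonneg _ _ hq0.le, ← ENNReal.rpow_mul,
                one_div_mul_cancel hq_ne, ENNReal.rpow_one, mul_comm] at h
            have h2 : b i ^ q ≤ H ^ q * (A i)⁻¹ := by
              have h3 := mul_le_mul_left h1 (A i)⁻¹
              rwa [mul_assoc, ENNReal.mul_inv_cancel hA0 hAtop, mul_one] at h3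
            have hq1r : q * (1 / r) = p := by rw [hrdef]; field_simp
            have h4 := ENNReal.rpow_le_rpow h2 (by positivity : (0:ℝ) ≤ 1 / r)
            rwa [ENNReal.mul_rpow_of_nonneg _ _ (by positivity : (0:ℝ) ≤ 1 / r),
              ← ENNReal.rpow_mul, ← ENNReal.rpow_mul, hq1r] at h4
        -- Step A: pointwise bound for each k
        have stepA : ∀ k : S,
            (∑' i : {i : ℤ // i ∈ S ∧ i ≤ k.1}, x i.1 * b i.1) ^ q * a k.1
              ≤ H ^ q * Y ^ (r - 1) *
                ∑' i : {i : ℤ // i ∈ S ∧ i ≤ k.1}, x i.1 ^ p * (A i.1)⁻¹ * a k.1 := by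
          intro k
          by_cases hak : a k.1 = 0
          · simp [hak]
          have hA0 : ∀ i : {i : ℤ // i ∈ S ∧ i ≤ k.1}, A i.1 ≠ 0 := by
            intro i h0
            apply hak
            have hle : a k.1 ≤ A i.1 := by
              simp only [hAdef]
              exact ENNReal.le_tsum (⟨k.1, k.2, i.2.2⟩ : {j : ℤ // j ∈ S ∧ i.1 ≤ j})
            exact le_antisymm (h0 ▸ hle) (zero_le)
          have h1 : (∑' i : {i : ℤ // i ∈ S ∧ i ≤ k.1}, x i.1 * b i.1) ^ p
              ≤ ∑' i : {i : ℤ // i ∈ S ∧ i ≤ k.1}, (x i.1 * b i.1) ^ p :=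
            Hardy8aux.tsum_rpow_le _ hp0 hp1
          have h2 : ∀ i : {i : ℤ // i ∈ S ∧ i ≤ k.1},
              (x i.1 * b i.1) ^ p ≤ H ^ p * (x i.1 ^ p * ((A i.1)⁻¹) ^ (1 / r)) := by
            intro i
            rw [ENNReal.mul_rpow_of_nonneg _ _ hp0.le]
            calc x i.1 ^ p * b i.1 ^ p
                ≤ x i.1 ^ p * (H ^ p * ((A i.1)⁻¹) ^ (1 / r)) :=
                  mul_le_mul_right (hb' i.1 i.2.1 (hA0 i)) _
              _ = H ^ p * (x i.1 ^ p * ((A i.1)⁻¹) ^ (1 / r)) := by ring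
          have h3 : (∑' i : {i : ℤ // i ∈ S ∧ i ≤ k.1}, x i.1 * b i.1) ^ p
              ≤ H ^ p * ∑' i : {i : ℤ // i ∈ S ∧ i ≤ k.1},
                  x i.1 ^ p * ((A i.1)⁻¹) ^ (1 / r) := by
            refine h1.trans ?_
            rw [← ENNReal.tsum_mul_left]
            exact ENNReal.tsum_le_tsum h2
          have h4 := ENNReal.rpow_le_rpow h3 hr0.le
          rw [← ENNReal.rpow_mul, hpr, ENNReal.mul_rpow_of_nonneg _ _ hr0.le,
            ← ENNReal.rpow_mul, hpr] at h4
          -- Hölder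
          have h5 : (∑' i : {i : ℤ // i ∈ S ∧ i ≤ k.1}, x i.1 ^ p * ((A i.1)⁻¹) ^ (1 / r)) ^ r
              ≤ Y ^ (r - 1) * ∑' i : {i : ℤ // i ∈ S ∧ i ≤ k.1}, x i.1 ^ p * (A i.1)⁻¹ := by
            have hH2 := Hardy8aux.tsum_inner_le hr1
              (fun i : {i : ℤ // i ∈ S ∧ i ≤ k.1} => x i.1 ^ p)
              (fun i : {i : ℤ // i ∈ S ∧ i ≤ k.1} => ((A i.1)⁻¹) ^ (1 / r))
            have e1 : (∑' i : {i : ℤ // i ∈ S ∧ i ≤ k.1},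
                x i.1 ^ p * (((A i.1)⁻¹) ^ (1 / r)) ^ r)
                = ∑' i : {i : ℤ // i ∈ S ∧ i ≤ k.1}, x i.1 ^ p * (A i.1)⁻¹ := by
              refine tsum_congr fun i => ?_
              rw [← ENNReal.rpow_mul, one_div_mul_cancel hr0.ne', ENNReal.rpow_one]
            rw [e1] at hH2
            have h6 := ENNReal.rpow_le_rpow hH2 hr0.le
            rw [ENNReal.mul_rpow_of_nonneg _ _ hr0.le, ← ENNReal.rpow_mul,
              ← ENNReal.rpow_mul] at h6
            have e2 : (1 - r⁻¹) * r = r - 1 := by field_simp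
            have e3 : r⁻¹ * r = 1 := inv_mul_cancel₀ hr0.ne'
            rw [e2, e3, ENNReal.rpow_one] at h6
            refine h6.trans ?_
            have hYsub : (∑' i : {i : ℤ // i ∈ S ∧ i ≤ k.1}, x i.1 ^ p) ≤ Y := by
              rw [hYdef]
              exact Summable.tsum_le_tsum_of_inj (fun i => (⟨i.1, i.2.1⟩ : S))
                (fun i j hij => Subtype.ext (congrArg (Subtype.val : S → ℤ) hij))
                (fun c _ => zero_le) (fun i => le_rfl) ENNReal.summable ENNReal.summable
            exact mul_le_mul_left
              (ENNReal.rpow_le_rpow hYsub (by linarith : (0:ℝ) ≤ r - 1)) _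
          calc (∑' i : {i : ℤ // i ∈ S ∧ i ≤ k.1}, x i.1 * b i.1) ^ q * a k.1
              ≤ H ^ q * (Y ^ (r - 1) *
                  ∑' i : {i : ℤ // i ∈ S ∧ i ≤ k.1}, x i.1 ^ p * (A i.1)⁻¹) * a k.1 :=
                mul_le_mul_left (h4.trans (mul_le_mul_right h5 _)) _
            _ = H ^ q * Y ^ (r - 1) *
                ((∑' i : {i : ℤ // i ∈ S ∧ i ≤ k.1}, x i.1 ^ p * (A i.1)⁻¹) * a k.1) := by
                ring
            _ = H ^ q * Y ^ (r - 1) *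
                ∑' i : {i : ℤ // i ∈ S ∧ i ≤ k.1}, x i.1 ^ p * (A i.1)⁻¹ * a k.1 := by
                rw [ENNReal.tsum_mul_right]
        -- sum over k and swap
        have hT : (∑' k : S, (∑' i : {i : ℤ // i ∈ S ∧ i ≤ k.1}, x i.1 * b i.1) ^ q * a k.1)
            ≤ H ^ q * Y ^ r := by
          calc (∑' k : S, (∑' i : {i : ℤ // i ∈ S ∧ i ≤ k.1}, x i.1 * b i.1) ^ q * a k.1)
              ≤ ∑' k : S, H ^ q * Y ^ (r - 1) *
                  ∑' i : {i : ℤ // i ∈ S ∧ i ≤ k.1}, x i.1 ^ p * (A i.1)⁻¹ * a k.1 :=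
                ENNReal.tsum_le_tsum stepA
            _ = H ^ q * Y ^ (r - 1) *
                ∑' k : S, ∑' i : {i : ℤ // i ∈ S ∧ i ≤ k.1},
                  x i.1 ^ p * (A i.1)⁻¹ * a k.1 := ENNReal.tsum_mul_left
            _ = H ^ q * Y ^ (r - 1) *
                ∑' i : S, ∑' k : {k : ℤ // k ∈ S ∧ i.1 ≤ k},
                  x i.1 ^ p * (A i.1)⁻¹ * a k.1 := by
                rw [Hardy8aux.tsum_swap S (fun k i => x i ^ p * (A i)⁻¹ * a k)]
            _ = H ^ q * Y ^ (r - 1) * ∑' i : S, x i.1 ^ p * (A i.1)⁻¹ * A i.1 := by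
                congr 1
                refine tsum_congr fun i => ?_
                rw [ENNReal.tsum_mul_left]
            _ ≤ H ^ q * Y ^ (r - 1) * ∑' i : S, x i.1 ^ p := by
                refine mul_le_mul_right (ENNReal.tsum_le_tsum fun i => ?_) _
                have hone : (A i.1)⁻¹ * A i.1 ≤ 1 := by
                  rcases eq_or_ne (A i.1) 0 with h | h
                  · simp [h]
                  · rcases eq_or_ne (A i.1) ⊤ with h' | h'
                    · simp [h']
                    · rw [ENNReal.inv_mul_cancel h h']
                calc x i.1 ^ p * (A i.1)⁻¹ * A i.1 = x i.1 ^ p * ((A i.1)⁻¹ * A i.1) := by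
                      rw [mul_assoc]
                  _ ≤ x i.1 ^ p * 1 := mul_le_mul_right hone _
                  _ = x i.1 ^ p := mul_one _
            _ = H ^ q * (Y ^ (r - 1) * Y ^ (1:ℝ)) := by
                rw [← hYdef, ENNReal.rpow_one, mul_assoc]
            _ = H ^ q * Y ^ r := by
                rw [← ENNReal.rpow_add_of_nonneg _ _ (by linarith : (0:ℝ) ≤ r - 1) zero_le_one]
                norm_num
        have hfinal := ENNReal.rpow_le_rpow hT (by positivity : (0:ℝ) ≤ 1 / q)
        have hrq : r * (1 / q) = 1 / p := by rw [hrdef]; field_simp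
        rwa [ENNReal.mul_rpow_of_nonneg _ _ (by positivity : (0:ℝ) ≤ 1 / q),
          ← ENNReal.rpow_mul, ← ENNReal.rpow_mul, mul_one_div, div_self hq_ne,
          ENNReal.rpow_one, hrq] at hfinal
  · -- lower bound: necessity
    intro C' hC'
    rw [one_mul]
    refine iSup_le fun k₀ => ?_
    set x : ℤ → ℝ≥0∞ := fun i => if i = (k₀ : ℤ) then 1 else 0 with hxdef
    have hxsum : (∑' k : S, x k.1 ^ p) = 1 := by
      have e : ∀ k : S, x k.1 ^ p = if k = k₀ then 1 else 0 := by
        intro k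
        by_cases h : (k : ℤ) = (k₀ : ℤ)
        · rw [if_pos (Subtype.ext h)]
          simp [hxdef, h]
        · rw [if_neg fun hh => h (congrArg Subtype.val hh)]
          simp [hxdef, h, ENNReal.zero_rpow_of_pos hp0]
      rw [tsum_congr e, tsum_ite_eq]
    have hmain : b (k₀ : ℤ) ^ q * (∑' i : {i : ℤ // i ∈ S ∧ (k₀:ℤ) ≤ i}, a i.1)
        ≤ ∑' k : S, (∑' i : {i : ℤ // i ∈ S ∧ i ≤ k.1}, x i.1 * b i.1) ^ q * a k.1 := by
      rw [← ENNReal.tsum_mul_left]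
      refine Summable.tsum_le_tsum_of_inj (fun i => (⟨i.1, i.2.1⟩ : S))
        (fun i j hij => Subtype.ext (congrArg (Subtype.val : S → ℤ) hij))
        (fun c _ => zero_le) (fun i => ?_) ENNReal.summable ENNReal.summable
      have h1 : b (k₀ : ℤ) ≤ ∑' j : {j : ℤ // j ∈ S ∧ j ≤ i.1}, x j.1 * b j.1 := by
        have h := ENNReal.le_tsum (f := fun j : {j : ℤ // j ∈ S ∧ j ≤ i.1} => x j.1 * b j.1)
          (⟨(k₀ : ℤ), k₀.2, i.2.2⟩ : {j : ℤ // j ∈ S ∧ j ≤ i.1})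
        simpa [hxdef] using h
      exact mul_le_mul_left (ENNReal.rpow_le_rpow h1 hq0.le) _
    have hle := hC' x
    rw [hxsum, ENNReal.one_rpow, mul_one] at hle
    calc (∑' i : {i : ℤ // i ∈ S ∧ (k₀:ℤ) ≤ i}, a i.1) ^ (1 / q) * b (k₀ : ℤ)
        = (b (k₀ : ℤ) ^ q * (∑' i : {i : ℤ // i ∈ S ∧ (k₀:ℤ) ≤ i}, a i.1)) ^ (1 / q) := by
          rw [ENNReal.mul_rpow_of_nonneg _ _ (by positivity : (0:ℝ) ≤ 1 / q),
            ← ENNReal.rpow_mul, mul_one_div, div_self hq_ne, ENNReal.rpow_one, mul_comm]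
      _ ≤ (∑' k : S, (∑' i : {i : ℤ // i ∈ S ∧ i ≤ k.1}, x i.1 * b i.1) ^ q * a k.1) ^ (1 / q) :=
          ENNReal.rpow_le_rpow hmain (by positivity)
      _ ≤ C' := hle
end

section
/- If {x_k}_{k=−∞}^{M} is a discretizing sequence of W (i.e. W(x_k) ≈ 2^k for k ≤ M, where W(t) = ∫_0^t w) and h is a non-negative non-increasing function on (0,∞), then for any α ≥ 0, ∫_0^∞ W(x)^α w(x) h(x) dx is comparable to ∑_{k=−∞}^{M−1} 2^{k(α+1)} h(x_k), with constants depending only on α and the discretizing constants. -/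
open MeasureTheory Set Filter
open scoped ENNReal

/-- If `{x_k}_{k=−∞}^{M}` is a discretizing sequence of `W` (a strictly increasing
covering sequence with `W(x_k) ≈ 2^k`, `W(t) = ∫_0^t w`) and `h` is non-negative and
non-increasing on `(0,∞)`, then for `α ≥ 0`,
`∫_0^∞ W^α w h ≈ ∑_{k ≤ M−1} 2^{k(α+1)} h(x_k)`, with constants depending only on `α`
and the discretizing constant `D`. -/
theorem stmt13 (α : ℝ) (hα : 0 ≤ α) (D : ℝ≥0∞) (hD1 : 1 ≤ D) (hD : D ≠ ⊤) :
    ∃ C : ℝ≥0∞, 0 < C ∧ C ≠ ⊤ ∧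
      ∀ (M : WithTop ℤ) (w : ℝ → ℝ≥0∞) (x : ℤ → ℝ≥0∞) (h : ℝ → ℝ≥0∞),
        Measurable w →
        (∀ᵐ t ∂(volume.restrict (Ioi (0:ℝ))), 0 < w t ∧ w t ≠ ⊤) →
        (∀ j k : ℤ, (j : WithTop ℤ) ≤ M → (k : WithTop ℤ) ≤ M → j < k → x j < x k) →
        Tendsto x atBot (nhds 0) →
        (⨆ k : {k : ℤ // (k : WithTop ℤ) ≤ M}, x k.1) = ⊤ →
        (∀ k : ℤ, (k : WithTop ℤ) ≤ M →
          (∫⁻ s in {t : ℝ | 0 < t ∧ ENNReal.ofReal t < x k}, w s) ≤ D * (2 : ℝ≥0∞) ^ (k : ℝ) ∧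
          (2 : ℝ≥0∞) ^ (k : ℝ) ≤ D * ∫⁻ s in {t : ℝ | 0 < t ∧ ENNReal.ofReal t < x k}, w s) →
        AntitoneOn h (Ioi (0:ℝ)) →
        (∫⁻ t in Ioi (0:ℝ), (∫⁻ s in Ioo (0:ℝ) t, w s) ^ α * w t * h t)
            ≤ C * ∑' k : {k : ℤ // ((k + 1 : ℤ) : WithTop ℤ) ≤ M},
                (2 : ℝ≥0∞) ^ ((k.1 : ℝ) * (α + 1)) * h ((x k.1).toReal) ∧
        (∑' k : {k : ℤ // ((k + 1 : ℤ) : WithTop ℤ) ≤ M},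
            (2 : ℝ≥0∞) ^ ((k.1 : ℝ) * (α + 1)) * h ((x k.1).toReal))
            ≤ C * ∫⁻ t in Ioi (0:ℝ), (∫⁻ s in Ioo (0:ℝ) t, w s) ^ α * w t * h t := by
  have hD0 : D ≠ 0 := by
    intro h0; rw [h0] at hD1; exact (by simp at hD1)
  have h2top : (2:ℝ≥0∞) ≠ ⊤ := by norm_num
  have h20 : (2:ℝ≥0∞) ≠ 0 := by norm_num
  have h2rpow : ∀ a b : ℝ, (2:ℝ≥0∞) ^ (a + b) = 2 ^ a * 2 ^ b := fun a b =>
    ENNReal.rpow_add a b h20 h2top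
  have h2ne : ∀ a : ℝ, (2:ℝ≥0∞) ^ a ≠ ⊤ := fun a => by
    simp [ENNReal.rpow_eq_top_iff]
  -- choose m with D*D*2 ≤ 2^m
  obtain ⟨n, hn⟩ := ENNReal.exists_nat_gt (show D * D * 2 ≠ ⊤ from
    ENNReal.mul_ne_top (ENNReal.mul_ne_top hD hD) h2top)
  set m : ℕ := n + 1 with hmdef
  have hmD : D * D * 2 ≤ 2 ^ ((m:ℕ):ℝ) := by
    calc D * D * 2 ≤ (n:ℝ≥0∞) := hn.le
      _ ≤ 2 ^ (n:ℕ) := by exact_mod_cast Nat.cast_le.2 (Nat.lt_two_pow_self (n := n)).le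
      _ ≤ 2 ^ (m:ℕ) := by exact pow_le_pow_right₀ (by norm_num) (by omega)
      _ = 2 ^ ((m:ℕ):ℝ) := (ENNReal.rpow_natCast 2 m).symm
  have hDα : D ^ (α+1) ≠ ⊤ := ENNReal.rpow_ne_top_of_nonneg (by linarith) hD
  set C₁ : ℝ≥0∞ := D ^ (α+1) * 2 ^ (α+1) with hC₁def
  set C₂ : ℝ≥0∞ := 2 ^ ((m:ℝ)*α + 1) * D ^ (α+1) * (2*m) with hC₂def
  have hC₁pos : 0 < C₁ := by
    apply ENNReal.mul_pos
    · exact (ENNReal.rpow_pos (lt_of_lt_of_le one_pos hD1) hD).ne'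
    · exact (ENNReal.rpow_pos (by norm_num) h2top).ne'
  have hC₁top : C₁ ≠ ⊤ := ENNReal.mul_ne_top hDα (h2ne _)
  have hC₂top : C₂ ≠ ⊤ := by
    apply ENNReal.mul_ne_top (ENNReal.mul_ne_top (h2ne _) hDα)
    simp [ENNReal.mul_ne_top]
  refine ⟨C₁ + C₂, lt_of_lt_of_le hC₁pos le_self_add, ENNReal.add_ne_top.2 ⟨hC₁top, hC₂top⟩, ?_⟩
  intro M w x h hw hwpos hxmono hx0 hxsup hdisc hh
  clear hwpos
  set W : ℝ → ℝ≥0∞ := fun t => ∫⁻ s in Ioo (0:ℝ) t, w s with hWdef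
  set f : ℝ → ℝ≥0∞ := fun t => W t ^ α * w t * h t with hfdef
  set S : ℤ → Set ℝ := fun k => {t : ℝ | 0 < t ∧ ENNReal.ofReal t < x k} with hSdef
  have hSmeas : ∀ k, MeasurableSet (S k) := by
    intro k
    exact (measurableSet_Ioi).inter ((ENNReal.measurable_ofReal.comp measurable_id) measurableSet_Iio)
  -- basic facts about x
  have hcoe_le : ∀ {j k : ℤ}, j ≤ k → ((j:WithTop ℤ) ≤ (k:WithTop ℤ)) := by
    intro j k hjk; exact_mod_cast hjk
  have hxle : ∀ j k : ℤ, (j:WithTop ℤ) ≤ M → (k:WithTop ℤ) ≤ M → j ≤ k → x j ≤ x k := by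
    intro j k hj hk hjk
    rcases eq_or_lt_of_le hjk with rfl | hlt
    · exact le_rfl
    · exact (hxmono j k hj hk hlt).le
  have hxpos : ∀ k : ℤ, (k:WithTop ℤ) ≤ M → 0 < x k := by
    intro k hk
    have hk1 : ((k-1:ℤ):WithTop ℤ) ≤ M := le_trans (hcoe_le (by omega)) hk
    exact lt_of_le_of_lt zero_le (hxmono (k-1) k hk1 hk (by omega))
  have hxnetop : ∀ k : ℤ, ((k+1:ℤ):WithTop ℤ) ≤ M → x k ≠ ⊤ := by
    intro k hk
    have hkM : ((k:ℤ):WithTop ℤ) ≤ M := le_trans (hcoe_le (by omega)) hk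
    exact (hxmono k (k+1) hkM hk (by omega)).ne_top
  -- comparison of W with ∫_{S k} w
  have hW_le : ∀ (k:ℤ) (t:ℝ), ENNReal.ofReal t ≤ x k → W t ≤ ∫⁻ s in S k, w s := by
    intro k t hle
    apply lintegral_mono_set
    intro s hs
    refine ⟨hs.1, lt_of_lt_of_le ?_ hle⟩
    exact (ENNReal.ofReal_lt_ofReal_iff_of_nonneg hs.1.le).2 hs.2
  have hW_ge : ∀ (k:ℤ) (t:ℝ), x k ≤ ENNReal.ofReal t → (∫⁻ s in S k, w s) ≤ W t := by
    intro k t hge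
    apply lintegral_mono_set
    rintro s ⟨hs0, hslt⟩
    refine ⟨hs0, ?_⟩
    have : ENNReal.ofReal s < ENNReal.ofReal t := lt_of_lt_of_le hslt hge
    exact (ENNReal.ofReal_lt_ofReal_iff_of_nonneg hs0.le).1 this
  -- UPPER BOUND -------------------------------------------------------------
  set B : ℤ → Set ℝ := fun k =>
    {t : ℝ | 0 < t ∧ x (k-1) ≤ ENNReal.ofReal t ∧ ENNReal.ofReal t < x k} with hBdef
  have hBmeas : ∀ k, MeasurableSet (B k) := by
    intro k
    have : B k = (Ioi (0:ℝ)) ∩ (ENNReal.ofReal ⁻¹' Ici (x (k-1))) ∩ (ENNReal.ofReal ⁻¹' Iio (x k)) := by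
      ext t; simp [hBdef, and_assoc, mem_Ioi]
    rw [this]
    exact ((measurableSet_Ioi.inter (ENNReal.measurable_ofReal measurableSet_Ici)).inter
      (ENNReal.measurable_ofReal measurableSet_Iio))
  have hcover : Ioi (0:ℝ) ⊆ ⋃ k : {k : ℤ // (k:WithTop ℤ) ≤ M}, B k.1 := by
    intro t ht
    have htpos : (0:ℝ) < t := ht
    have h1 : ENNReal.ofReal t < ⨆ k : {k : ℤ // (k:WithTop ℤ) ≤ M}, x k.1 := by
      rw [hxsup]; exact ENNReal.ofReal_lt_top
    obtain ⟨k₁, hk₁⟩ := lt_iSup_iff.1 h1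
    have h2 : ∀ᶠ j in atBot, x j < ENNReal.ofReal t :=
      hx0.eventually_lt_const (ENNReal.ofReal_pos.2 htpos)
    obtain ⟨j₀, hj₀⟩ := eventually_atBot.1 h2
    obtain ⟨k₀, ⟨hk₀M, hk₀lt⟩, hleast⟩ := Int.exists_least_of_bdd
      (P := fun z : ℤ => (z:WithTop ℤ) ≤ M ∧ ENNReal.ofReal t < x z)
      ⟨j₀, fun z hz => by
        by_contra hc; push_neg at hc
        exact absurd hz.2 (not_lt.2 (hj₀ z hc.le).le)⟩
      ⟨k₁.1, k₁.2, hk₁⟩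
    have hk₀1M : ((k₀-1:ℤ):WithTop ℤ) ≤ M := le_trans (hcoe_le (by omega)) hk₀M
    have hnot : ¬ (ENNReal.ofReal t < x (k₀-1)) := fun hcon => by
      have := hleast (k₀-1) ⟨hk₀1M, hcon⟩; omega
    exact mem_iUnion.2 ⟨⟨k₀, hk₀M⟩, htpos, not_lt.1 hnot, hk₀lt⟩
  have hBbound : ∀ k : ℤ, (k:WithTop ℤ) ≤ M →
      (∫⁻ t in B k, f t) ≤ C₁ * ((2:ℝ≥0∞) ^ (((k-1:ℤ):ℝ) * (α+1)) * h ((x (k-1)).toReal)) := by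
    intro k hkM
    have hk1M : ((k-1:ℤ):WithTop ℤ) ≤ M := le_trans (hcoe_le (by omega)) hkM
    have hxk1top : x (k-1) ≠ ⊤ := by
      have h' : ((k-1+1:ℤ):WithTop ℤ) ≤ M := by rw [show (k-1+1:ℤ) = k by ring]; exact hkM
      exact hxnetop _ h'
    have hxk1pos : 0 < x (k-1) := hxpos _ hk1M
    have htR : (x (k-1)).toReal ∈ Ioi (0:ℝ) := ENNReal.toReal_pos hxk1pos.ne' hxk1top
    have hpt : ∀ t ∈ B k, f t ≤ ((D * 2 ^ (k:ℝ)) ^ α * h ((x (k-1)).toReal)) * w t := by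
      rintro t ⟨ht0, hge, hlt⟩
      have hWb : W t ^ α ≤ (D * 2 ^ (k:ℝ)) ^ α :=
        ENNReal.rpow_le_rpow (le_trans (hW_le k t hlt.le) (hdisc k hkM).1) hα
      have hhb : h t ≤ h ((x (k-1)).toReal) := by
        refine hh htR ht0 ?_
        exact ENNReal.toReal_le_of_le_ofReal ht0.le hge
      calc f t = W t ^ α * w t * h t := rfl
        _ ≤ (D * 2 ^ (k:ℝ)) ^ α * w t * h ((x (k-1)).toReal) :=
            mul_le_mul' (mul_le_mul' hWb le_rfl) hhb
        _ = ((D * 2 ^ (k:ℝ)) ^ α * h ((x (k-1)).toReal)) * w t := by ring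
    calc (∫⁻ t in B k, f t)
        ≤ ∫⁻ t in B k, ((D * 2 ^ (k:ℝ)) ^ α * h ((x (k-1)).toReal)) * w t :=
          setLIntegral_mono' (hBmeas k) hpt
      _ = ((D * 2 ^ (k:ℝ)) ^ α * h ((x (k-1)).toReal)) * ∫⁻ t in B k, w t :=
          lintegral_const_mul _ hw
      _ ≤ ((D * 2 ^ (k:ℝ)) ^ α * h ((x (k-1)).toReal)) * (D * 2 ^ (k:ℝ)) := by
          refine mul_le_mul_right ?_ _
          refine le_trans (lintegral_mono_set ?_) (hdisc k hkM).1
          exact fun t ht => ⟨ht.1, ht.2.2⟩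
      _ = C₁ * ((2:ℝ≥0∞) ^ (((k-1:ℤ):ℝ) * (α+1)) * h ((x (k-1)).toReal)) := by
          have e1 : D ^ (α+1) = D ^ α * D := by
            rw [ENNReal.rpow_add _ _ hD0 hD, ENNReal.rpow_one]
          have e2 : (2:ℝ≥0∞) ^ (α+1) * (2:ℝ≥0∞) ^ (((k-1:ℤ):ℝ) * (α+1))
              = 2 ^ ((k:ℝ) * α) * 2 ^ (k:ℝ) := by
            rw [← h2rpow, ← h2rpow]; congr 1; push_cast; ring
          have e3 : ((D * 2 ^ (k:ℝ)) ^ α) = D ^ α * 2 ^ ((k:ℝ)*α) := by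
            rw [ENNReal.mul_rpow_of_nonneg _ _ hα, ← ENNReal.rpow_mul]
          rw [e3, hC₁def, e1]
          calc D ^ α * 2 ^ ((k:ℝ)*α) * h ((x (k-1)).toReal) * (D * 2 ^ (k:ℝ))
              = (D ^ α * D) * (2 ^ ((k:ℝ)*α) * 2 ^ (k:ℝ)) * h ((x (k-1)).toReal) := by ring
            _ = (D ^ α * D) * ((2:ℝ≥0∞) ^ (α+1) * (2:ℝ≥0∞) ^ (((k-1:ℤ):ℝ) * (α+1)))
                  * h ((x (k-1)).toReal) := by rw [e2]
            _ = D ^ α * D * 2 ^ (α+1) * (2 ^ (((k-1:ℤ):ℝ) * (α+1)) * h ((x (k-1)).toReal)) := by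
                ring
  have upper : (∫⁻ t in Ioi (0:ℝ), f t) ≤ C₁ * ∑' k : {k : ℤ // ((k+1:ℤ):WithTop ℤ) ≤ M},
      (2:ℝ≥0∞) ^ ((k.1:ℝ) * (α+1)) * h ((x k.1).toReal) := by
    let e : {k : ℤ // ((k+1:ℤ):WithTop ℤ) ≤ M} ≃ {k : ℤ // (k:WithTop ℤ) ≤ M} :=
      ⟨fun k => ⟨k.1+1, k.2⟩, fun k => ⟨k.1-1, by simpa using k.2⟩,
        fun k => by ext; simp, fun k => by ext; simp⟩
    calc (∫⁻ t in Ioi (0:ℝ), f t)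
        ≤ ∫⁻ t in ⋃ k : {k : ℤ // (k:WithTop ℤ) ≤ M}, B k.1, f t := lintegral_mono_set hcover
      _ ≤ ∑' k : {k : ℤ // (k:WithTop ℤ) ≤ M}, ∫⁻ t in B k.1, f t := lintegral_iUnion_le _ _
      _ ≤ ∑' k : {k : ℤ // (k:WithTop ℤ) ≤ M},
            C₁ * ((2:ℝ≥0∞) ^ (((k.1-1:ℤ):ℝ) * (α+1)) * h ((x (k.1-1)).toReal)) :=
          ENNReal.tsum_le_tsum (fun k => hBbound k.1 k.2)
      _ = C₁ * ∑' k : {k : ℤ // (k:WithTop ℤ) ≤ M},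
            ((2:ℝ≥0∞) ^ (((k.1-1:ℤ):ℝ) * (α+1)) * h ((x (k.1-1)).toReal)) :=
          ENNReal.tsum_mul_left
      _ = C₁ * ∑' k : {k : ℤ // ((k+1:ℤ):WithTop ℤ) ≤ M},
            (2:ℝ≥0∞) ^ ((k.1:ℝ) * (α+1)) * h ((x k.1).toReal) := by
          congr 1
          rw [← Equiv.tsum_eq e (fun k => (2:ℝ≥0∞) ^ (((k.1-1:ℤ):ℝ) * (α+1))
              * h ((x (k.1-1)).toReal))]
          refine tsum_congr fun j => ?_
          show (2:ℝ≥0∞) ^ (((j.1+1-1:ℤ):ℝ) * (α+1)) * h ((x (j.1+1-1)).toReal)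
              = (2:ℝ≥0∞) ^ ((j.1:ℝ) * (α+1)) * h ((x j.1).toReal)
          norm_num
  -- LOWER BOUND -------------------------------------------------------------
  set A : ℤ → Set ℝ := fun k =>
    {t : ℝ | 0 < t ∧ x (k - m) ≤ ENNReal.ofReal t ∧ ENNReal.ofReal t < x k} with hAdef
  have hAmeas : ∀ k, MeasurableSet (A k) := by
    intro k
    have : A k = (Ioi (0:ℝ)) ∩ (ENNReal.ofReal ⁻¹' Ici (x (k-m))) ∩ (ENNReal.ofReal ⁻¹' Iio (x k)) := by
      ext t; simp [hAdef, and_assoc, mem_Ioi]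
    rw [this]
    exact ((measurableSet_Ioi.inter (ENNReal.measurable_ofReal measurableSet_Ici)).inter
      (ENNReal.measurable_ofReal measurableSet_Iio))
  have hAsub : ∀ k, A k ⊆ Ioi (0:ℝ) := fun k t ht => ht.1
  have hkey : ∀ k : ℤ, ((k+1:ℤ):WithTop ℤ) ≤ M →
      (2:ℝ≥0∞) ^ ((k:ℝ) * (α+1)) * h ((x k).toReal)
        ≤ (2 ^ ((m:ℝ)*α + 1) * D ^ (α+1)) * ∫⁻ t in A k, f t := by
    intro k hk1M
    have hkM : (k:WithTop ℤ) ≤ M := le_trans (hcoe_le (by omega)) hk1M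
    have hkmM : ((k-m:ℤ):WithTop ℤ) ≤ M := le_trans (hcoe_le (by omega)) hkM
    have hxkpos := hxpos k hkM
    have hxktop := hxnetop k hk1M
    have hxkR : (x k).toReal ∈ Ioi (0:ℝ) := ENNReal.toReal_pos hxkpos.ne' hxktop
    -- step 1 : 2^(k-1) ≤ D * ∫_{A k} w
    have hsplit : (∫⁻ s in S k, w s) ≤ (∫⁻ s in S (k-m), w s) + ∫⁻ s in A k, w s := by
      refine le_trans (lintegral_mono_set ?_) (lintegral_union_le _ _ _)
      intro t ht
      rcases lt_or_ge (ENNReal.ofReal t) (x (k-m)) with hc | hc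
      · exact Or.inl ⟨ht.1, hc⟩
      · exact Or.inr ⟨ht.1, hc, ht.2⟩
    have hstep1 : (2:ℝ≥0∞) ^ ((k:ℝ) - 1) ≤ D * ∫⁻ t in A k, w t := by
      have h1 : (2:ℝ≥0∞) ^ (k:ℝ) ≤ D * (∫⁻ s in S (k-m), w s) + D * ∫⁻ t in A k, w t := by
        refine le_trans (hdisc k hkM).2 ?_
        rw [← mul_add]; exact mul_le_mul_right hsplit D
      have h2 : D * (∫⁻ s in S (k-m), w s) ≤ 2 ^ ((k:ℝ) - 1) := by
        calc D * (∫⁻ s in S (k-m), w s) ≤ D * (D * 2 ^ (((k-m:ℤ)):ℝ)) :=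
              mul_le_mul_right (hdisc (k-m) hkmM).1 D
          _ = (D * D * 2) * 2 ^ (((k:ℝ) - m) - 1) := by
              rw [show (((k-m:ℤ)):ℝ) = 1 + (((k:ℝ) - m) - 1) by push_cast; ring, h2rpow,
                ENNReal.rpow_one]
              ring
          _ ≤ 2 ^ ((m:ℕ):ℝ) * 2 ^ (((k:ℝ) - m) - 1) := mul_le_mul_left hmD _
          _ = 2 ^ ((k:ℝ) - 1) := by rw [← h2rpow]; congr 1; push_cast; ring
      have h3 : (2:ℝ≥0∞)^((k:ℝ)-1) + 2^((k:ℝ)-1) ≤ 2^((k:ℝ)-1) + D * ∫⁻ t in A k, w t := by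
        calc (2:ℝ≥0∞)^((k:ℝ)-1) + 2^((k:ℝ)-1) = 2^(k:ℝ) := by
              have e : (2:ℝ≥0∞)^(k:ℝ) = 2^((k:ℝ)-1) * 2^(1:ℝ) := by
                rw [← h2rpow]; congr 1; ring
              rw [e, ENNReal.rpow_one, mul_two]
          _ ≤ D * (∫⁻ s in S (k-m), w s) + D * ∫⁻ t in A k, w t := h1
          _ ≤ 2^((k:ℝ)-1) + D * ∫⁻ t in A k, w t := add_le_add_left h2 _
      exact (ENNReal.add_le_add_iff_left (h2ne _)).1 h3
    -- step 2 : pointwise bound on A k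
    have hstep2 : ∀ t ∈ A k,
        (2:ℝ≥0∞) ^ (((k:ℝ) - m) * α) * h ((x k).toReal) * w t ≤ D ^ α * f t := by
      rintro t ⟨ht0, hge, hlt⟩
      have hWt : (2:ℝ≥0∞) ^ ((k:ℝ) - m) ≤ D * W t := by
        refine le_trans ?_ (mul_le_mul_right (hW_ge (k-m) t hge) D)
        rw [show ((k:ℝ) - m) = (((k-m:ℤ)):ℝ) by push_cast; ring]
        exact (hdisc (k-m) hkmM).2
      have hWα : (2:ℝ≥0∞) ^ (((k:ℝ) - m) * α) ≤ D ^ α * W t ^ α := by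
        calc (2:ℝ≥0∞) ^ (((k:ℝ) - m) * α) = ((2:ℝ≥0∞) ^ ((k:ℝ) - m)) ^ α := by
              rw [← ENNReal.rpow_mul]
          _ ≤ (D * W t) ^ α := ENNReal.rpow_le_rpow hWt hα
          _ = D ^ α * W t ^ α := ENNReal.mul_rpow_of_nonneg _ _ hα
      have hht : h ((x k).toReal) ≤ h t := by
        refine hh ht0 hxkR ?_
        have := ENNReal.toReal_mono hxktop hlt.le
        rwa [ENNReal.toReal_ofReal ht0.le] at this
      calc (2:ℝ≥0∞) ^ (((k:ℝ) - m) * α) * h ((x k).toReal) * w t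
          ≤ (D ^ α * W t ^ α) * h t * w t :=
            mul_le_mul' (mul_le_mul' hWα hht) le_rfl
        _ = D ^ α * f t := by simp only [hfdef]; ring
    -- combine
    have hconst_ne : (2:ℝ≥0∞) ^ (((k:ℝ) - m) * α) * h ((x k).toReal) * D ≠ 0 ∨ True := Or.inr trivial
    calc (2:ℝ≥0∞) ^ ((k:ℝ) * (α+1)) * h ((x k).toReal)
        = (2 ^ ((m:ℝ)*α + 1)) * ((2 ^ (((k:ℝ) - m) * α) * h ((x k).toReal)) * 2 ^ ((k:ℝ) - 1)) := by
          have e : (2:ℝ≥0∞) ^ ((k:ℝ)*(α+1))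
              = 2 ^ ((m:ℝ)*α + 1) * (2 ^ (((k:ℝ) - m) * α) * 2 ^ ((k:ℝ) - 1)) := by
            rw [← h2rpow, ← h2rpow]; congr 1; ring
          rw [e]; ring
      _ ≤ (2 ^ ((m:ℝ)*α + 1)) * ((2 ^ (((k:ℝ) - m) * α) * h ((x k).toReal))
            * (D * ∫⁻ t in A k, w t)) := by
          exact mul_le_mul_right (mul_le_mul_right hstep1 _) _
      _ = (2 ^ ((m:ℝ)*α + 1) * D) * ∫⁻ t in A k,
            2 ^ (((k:ℝ) - m) * α) * h ((x k).toReal) * w t := by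
          rw [lintegral_const_mul _ hw]
          ring
      _ ≤ (2 ^ ((m:ℝ)*α + 1) * D) * ∫⁻ t in A k, D ^ α * f t :=
          mul_le_mul_right (setLIntegral_mono' (hAmeas k) hstep2) _
      _ = (2 ^ ((m:ℝ)*α + 1) * D ^ (α+1)) * ∫⁻ t in A k, f t := by
          rw [lintegral_const_mul' _ _ (ENNReal.rpow_ne_top_of_nonneg hα hD),
            show D ^ (α+1) = D ^ α * D by rw [ENNReal.rpow_add _ _ hD0 hD, ENNReal.rpow_one]]
          ring
  -- bounded overlap
  have hcard : ∀ (F : Finset {k : ℤ // ((k+1:ℤ):WithTop ℤ) ≤ M}) (t : ℝ),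
      (F.filter (fun k => t ∈ A k.1)).card ≤ 2 * m := by
    intro F t
    classical
    set G := F.filter (fun k => t ∈ A k.1) with hG
    rcases G.eq_empty_or_nonempty with hGe | ⟨k₀, hk₀⟩
    · rw [hGe, Finset.card_empty]; exact Nat.zero_le _
    · have hmem : ∀ k ∈ G, t ∈ A k.1 := fun k hk => (Finset.mem_filter.1 hk).2
      have hnot : ∀ k ∈ G, ∀ k' ∈ G, ¬ (k.1 + (m:ℤ) ≤ k'.1) := by
        intro k hk k' hk' hle
        have h1 := hmem k hk
        have h2 := hmem k' hk'
        have hkM : (k.1:WithTop ℤ) ≤ M := le_trans (hcoe_le (by omega)) k.2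
        have hk'mM : ((k'.1-m:ℤ):WithTop ℤ) ≤ M := le_trans (hcoe_le (by omega)) k'.2
        have hxle' : x k.1 ≤ x (k'.1 - m) := hxle _ _ hkM hk'mM (by omega)
        exact absurd (lt_of_lt_of_le h1.2.2 (le_trans hxle' h2.2.1)) (lt_irrefl _)
      have hsub : ∀ k ∈ G, k.1 ∈ Finset.Ioo (k₀.1 - (m:ℤ)) (k₀.1 + m) := by
        intro k hk
        rw [Finset.mem_Ioo]
        constructor
        · by_contra hc; push_neg at hc; exact hnot k hk k₀ hk₀ (by omega)
        · by_contra hc; push_neg at hc; exact hnot k₀ hk₀ k hk (by omega)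
      calc G.card ≤ (Finset.Ioo (k₀.1 - (m:ℤ)) (k₀.1 + m)).card :=
            Finset.card_le_card_of_injOn (fun k => k.1) hsub
              (fun a _ b _ hab => Subtype.ext hab)
        _ ≤ 2 * m := by rw [Int.card_Ioo]; omega
  -- sum of integrals over A k is at most (2m) times the full integral
  have hsum : (∑' k : {k : ℤ // ((k+1:ℤ):WithTop ℤ) ≤ M}, ∫⁻ t in A k.1, f t)
      ≤ (2 * (m:ℝ≥0∞)) * ∫⁻ t in Ioi (0:ℝ), f t := by
    rw [ENNReal.tsum_eq_iSup_sum]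
    refine iSup_le fun F => ?_
    have hind : ∀ k : {k : ℤ // ((k+1:ℤ):WithTop ℤ) ≤ M},
        (∫⁻ t in A k.1, f t) = ∫⁻ t in Ioi (0:ℝ), (A k.1).indicator f t := by
      intro k
      rw [lintegral_indicator (hAmeas k.1), Measure.restrict_restrict (hAmeas k.1),
        inter_eq_left.2 (hAsub k.1)]
    calc ∑ k ∈ F, ∫⁻ t in A k.1, f t
        = ∑ k ∈ F, ∫⁻ t in Ioi (0:ℝ), (A k.1).indicator f t :=
          Finset.sum_congr rfl (fun k _ => hind k)
      _ ≤ ∫⁻ t in Ioi (0:ℝ), ∑ k ∈ F, (A k.1).indicator f t := by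
          induction F using Finset.cons_induction with
          | empty => rw [Finset.sum_empty]; exact zero_le
          | cons a F ha ih =>
            simp only [Finset.sum_cons]
            refine le_trans (add_le_add_right ih _) (le_lintegral_add _ _)
      _ ≤ ∫⁻ t in Ioi (0:ℝ), (2 * (m:ℝ≥0∞)) * f t := by
          refine lintegral_mono fun t => ?_
          classical
          have heq : ∑ k ∈ F, (A k.1).indicator f t
              = ((F.filter (fun k => t ∈ A k.1)).card : ℝ≥0∞) * f t := by
            rw [Finset.sum_indicator_eq_sum_filter]
            simp [Finset.sum_const, nsmul_eq_mul]
          rw [heq]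
          refine mul_le_mul_left ?_ _
          calc ((F.filter (fun k => t ∈ A k.1)).card : ℝ≥0∞) ≤ ((2 * m : ℕ) : ℝ≥0∞) := by
                exact_mod_cast Nat.cast_le.2 (hcard F t)
            _ = 2 * (m:ℝ≥0∞) := by push_cast; ring
      _ = (2 * (m:ℝ≥0∞)) * ∫⁻ t in Ioi (0:ℝ), f t :=
          lintegral_const_mul' _ _ (by simp [ENNReal.mul_ne_top])
  have lower : (∑' k : {k : ℤ // ((k+1:ℤ):WithTop ℤ) ≤ M},
      (2:ℝ≥0∞) ^ ((k.1:ℝ) * (α+1)) * h ((x k.1).toReal)) ≤ C₂ * ∫⁻ t in Ioi (0:ℝ), f t := by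
    calc (∑' k : {k : ℤ // ((k+1:ℤ):WithTop ℤ) ≤ M},
        (2:ℝ≥0∞) ^ ((k.1:ℝ) * (α+1)) * h ((x k.1).toReal))
        ≤ ∑' k : {k : ℤ // ((k+1:ℤ):WithTop ℤ) ≤ M},
            (2 ^ ((m:ℝ)*α + 1) * D ^ (α+1)) * ∫⁻ t in A k.1, f t :=
          ENNReal.tsum_le_tsum (fun k => hkey k.1 k.2)
      _ = (2 ^ ((m:ℝ)*α + 1) * D ^ (α+1)) * ∑' k : {k : ℤ // ((k+1:ℤ):WithTop ℤ) ≤ M},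
            ∫⁻ t in A k.1, f t := ENNReal.tsum_mul_left
      _ ≤ (2 ^ ((m:ℝ)*α + 1) * D ^ (α+1)) * ((2 * (m:ℝ≥0∞)) * ∫⁻ t in Ioi (0:ℝ), f t) :=
          mul_le_mul_right hsum _
      _ = C₂ * ∫⁻ t in Ioi (0:ℝ), f t := by rw [hC₂def]; push_cast; ring
  exact ⟨le_trans upper (mul_le_mul_left le_self_add _),
    le_trans lower (mul_le_mul_left le_add_self _)⟩
end

section
/- For 0 < r < 1, any q, and any non-negative exponent configuration, if V_r(x_k, t) is non-decreasing in t and (p−q)/(p(1−q)) < 1 with 0 < q < p and q < 1, then ∫_{x_k}^{x_{k+1}} (∫_t^{x_{k+1}} u)^{q/(p−q)} u(t) V_r(x_k,t)^{pq/(p−q)} dt ≲ (∫_{x_k}^{x_{k+1}} (∫_t^{x_{k+1}} u)^{q/(1−q)} u(t) V_r(x_k,t)^{q/(1−q)} dt)^{p(1−q)/(p−q)}, with implicit constant depending only on p, q. -/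
open MeasureTheory Set
open scoped ENNReal

/-- Measure of `Ioo x b` as a sup from the right. -/
lemma measure_Ioo_le_of_forall (ν : Measure ℝ) (b x : ℝ) (c : ℝ≥0∞)
    (h : ∀ s, x < s → ν (Ioo s b) ≤ c) : ν (Ioo x b) ≤ c := by
  rcases le_or_gt b x with hbx | hxb
  · simp [Ioo_eq_empty_of_le hbx]
  have hU : Ioo x b = ⋃ n : ℕ, Ioo (x + (b - x) / (n + 2)) b := by
    ext s
    simp only [mem_iUnion, mem_Ioo]
    constructor
    · rintro ⟨hxs, hsb⟩
      obtain ⟨n, hn⟩ := exists_nat_gt ((b - x) / (s - x))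
      refine ⟨n, ?_, hsb⟩
      have hsx : 0 < s - x := by linarith
      have hbx' : 0 < b - x := by linarith
      have h2 : (b - x) / (s - x) < (n : ℝ) + 2 := by linarith
      have := (div_lt_iff₀ hsx).mp h2
      have hpos : (0:ℝ) < (n:ℝ) + 2 := by positivity
      have : (b - x) / ((n:ℝ) + 2) < s - x := by
        rw [div_lt_iff₀ hpos]; linarith [this]
      linarith
    · rintro ⟨n, hn, hsb⟩
      have hpos : (0:ℝ) < (n:ℝ) + 2 := by positivity
      have hbx' : 0 < b - x := by linarith
      have : 0 < (b - x) / ((n:ℝ) + 2) := by positivity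
      exact ⟨by linarith, hsb⟩
  have hdir : Directed (· ⊆ ·) (fun n : ℕ => Ioo (x + (b - x) / (n + 2)) b) := by
    have hm : Monotone (fun n : ℕ => Ioo (x + (b - x) / (n + 2)) b) := by
      intro m n hmn
      apply Ioo_subset_Ioo _ le_rfl
      have hbx' : 0 ≤ b - x := by linarith
      have h1 : (0:ℝ) < (m:ℝ) + 2 := by positivity
      have h2 : ((m:ℝ) + 2) ≤ (n:ℝ) + 2 := by
        have : ((m:ℝ)) ≤ (n:ℝ) := Nat.cast_le.mpr hmn; linarith
      have := div_le_div_of_nonneg_left hbx' h1 h2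
      linarith
    exact hm.directed_le
  rw [hU, Directed.measure_iUnion hdir]
  refine iSup_le fun n => ?_
  apply h
  have hbx' : 0 < b - x := by linarith
  have : 0 < (b - x) / ((n:ℝ) + 2) := by positivity
  linarith

/-- Key tail lower bound: `(∫_t^b u)^{α+1} ≤ 2^{α+1} ∫_t^b (∫_s^b u)^α u(s) ds`. -/
lemma tail_rpow_le (u : ℝ → ℝ≥0∞) (hu : Measurable u) {α : ℝ} (hα : 0 ≤ α) (b t : ℝ) :
    (volume.withDensity u) (Ioo t b) ^ (α + 1)
      ≤ 2 ^ (α + 1) *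
        ∫⁻ s in Ioo t b, ((volume.withDensity u) (Ioo s b)) ^ α * u s := by
  set ν := volume.withDensity u with hν
  set W : ℝ → ℝ≥0∞ := fun s => ν (Ioo s b) with hW
  have hWanti : Antitone W := fun s s' hss' => measure_mono (Ioo_subset_Ioo hss' le_rfl)
  have hWmeas : Measurable W := hWanti.measurable
  set I := ∫⁻ s in Ioo t b, (W s) ^ α * u s with hI
  set M := ν (Ioo t b) with hM
  -- main claim
  have claim : ∀ c : ℝ≥0∞, c ≠ 0 → c ≠ ∞ → c ^ α * (M - c) ≤ I := by
    intro c hc0 hctop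
    set S : Set ℝ := Ioo t b ∩ {s | c ≤ W s} with hS
    have hSord : OrdConnected {s : ℝ | c ≤ W s} := by
      constructor
      intro s hs s' hs' r hr
      exact le_trans hs' (hWanti hr.2)
    have hSm : MeasurableSet S := measurableSet_Ioo.inter hSord.measurableSet
    -- measure of complement part
    have hC : ν (Ioo t b \ {s | c ≤ W s}) ≤ c := by
      set C := Ioo t b \ {s : ℝ | c ≤ W s} with hCdef
      rcases eq_empty_or_nonempty C with hCe | hCne
      · simp [hCe]
      have hbdd : BddBelow C := ⟨t, fun s hs => (hs.1.1.le)⟩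
      set x := sInf C with hx
      have hsub : C ⊆ insert x (Ioo x b) := by
        intro s hs
        rcases eq_or_lt_of_le (csInf_le hbdd hs) with h | h
        · exact Or.inl h.symm
        · exact Or.inr ⟨h, hs.1.2⟩
      calc ν C ≤ ν (insert x (Ioo x b)) := measure_mono hsub
        _ ≤ ν {x} + ν (Ioo x b) := by
            rw [insert_eq]; exact measure_union_le _ _
        _ ≤ 0 + c := by
            gcongr
            · exact le_of_eq ((withDensity_absolutelyContinuous volume u) (measure_singleton x))
            · apply measure_Ioo_le_of_forall
              intro s hs
              obtain ⟨s', hs'C, hs's⟩ := exists_lt_of_csInf_lt hCne hs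
              have h1 : W s ≤ W s' := hWanti hs's.le
              have h2 : W s' < c := not_le.mp hs'C.2
              exact (h1.trans h2.le)
        _ = c := zero_add c
    -- measure of S
    have hSmeas : M - c ≤ ν S := by
      have h1 : M ≤ ν S + ν (Ioo t b \ {s | c ≤ W s}) :=
        measure_le_inter_add_diff ν (Ioo t b) {s | c ≤ W s}
      have h2 : M ≤ ν S + c := h1.trans (by gcongr)
      exact tsub_le_iff_right.mpr h2
    calc c ^ α * (M - c) ≤ c ^ α * ν S := by gcongr
      _ = ∫⁻ s in S, c ^ α * u s := by
          rw [lintegral_const_mul _ hu, ← withDensity_apply u hSm]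
      _ ≤ ∫⁻ s in S, (W s) ^ α * u s := by
          apply setLIntegral_mono' hSm
          intro s hs
          exact mul_le_mul_left (ENNReal.rpow_le_rpow hs.2 hα) _
      _ ≤ I := lintegral_mono_set inter_subset_left
  -- conclude
  rcases eq_or_ne M ∞ with hMtop | hMtop
  · have : (⊤ : ℝ≥0∞) ≤ I := by
      have := claim 1 one_ne_zero ENNReal.one_ne_top
      simpa [hMtop] using this
    have hI' : I = ∞ := top_le_iff.mp this
    rw [hI']
    simp [ENNReal.mul_top, (by positivity : (0:ℝ) < α + 1)]
  rcases eq_or_ne M 0 with hM0 | hM0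
  · rw [hM0, ENNReal.zero_rpow_of_pos (by positivity)]
    exact zero_le
  · have hc0 : M / 2 ≠ 0 := by
      simp [ENNReal.div_eq_zero_iff, hM0]
    have hctop : M / 2 ≠ ∞ := by
      simp [ENNReal.div_eq_top, hMtop]
    have h := claim (M / 2) hc0 hctop
    rw [ENNReal.sub_half hMtop] at h
    have hMsplit : M = 2 * (M / 2) := by
      rw [ENNReal.mul_div_cancel two_ne_zero ENNReal.ofNat_ne_top]
    calc M ^ (α + 1) = (2 * (M / 2)) ^ (α + 1) := by rw [← hMsplit]
      _ = 2 ^ (α + 1) * (M / 2) ^ (α + 1) :=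
          ENNReal.mul_rpow_of_nonneg _ _ (by positivity)
      _ = 2 ^ (α + 1) * ((M / 2) ^ α * (M / 2)) := by
          congr 1
          rw [ENNReal.rpow_add_of_nonneg α 1 hα zero_le_one, ENNReal.rpow_one]
      _ ≤ 2 ^ (α + 1) * I := by gcongr

lemma aux14 (p q : ℝ) (hq0 : 0 < q) (hqp : q < p) (hq1 : q < 1)
    (hcond : (p - q) / (p * (1 - q)) < 1) (a b : ℝ) (u V : ℝ → ℝ≥0∞)
    (hu : Measurable u) (hV : MonotoneOn V (Ioo a b)) :
    (∫⁻ t in Ioo a b,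
        (∫⁻ s in Ioo t b, u s) ^ (q / (p - q)) * u t * V t ^ (p * q / (p - q)))
      ≤ (2 : ℝ≥0∞) ^ ((q / (1 - q) + 1) * (p * (1 - q) / (p - q) - 1)) *
        (∫⁻ t in Ioo a b,
            (∫⁻ s in Ioo t b, u s) ^ (q / (1 - q)) * u t
              * V t ^ (q / (1 - q))) ^ (p * (1 - q) / (p - q)) := by
  have hp : 0 < p := hq0.trans hqp
  have h1q : (0:ℝ) < 1 - q := by linarith
  have hpq : (0:ℝ) < p - q := by linarith
  set lam := p * (1 - q) / (p - q) with hlam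
  set α := q / (1 - q) with hαdef
  have hα0 : 0 ≤ α := by positivity
  have hlam1 : 1 < lam := by
    rw [hlam, lt_div_iff₀ hpq]
    have := (div_lt_one (by positivity : (0:ℝ) < p * (1 - q))).mp hcond
    linarith
  have hlam1' : (0:ℝ) < lam - 1 := by linarith
  have hθ0 : 0 ≤ (α + 1) * (lam - 1) := by positivity
  have e1 : q / (p - q) = α + (α + 1) * (lam - 1) := by
    rw [hαdef, hlam]; field_simp; ring
  have e2 : p * q / (p - q) = α + α * (lam - 1) := by
    rw [hαdef, hlam]; field_simp; ring
  set ν := volume.withDensity u with hν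
  have hWrw : ∀ s : ℝ, (∫⁻ x in Ioo s b, u x) = ν (Ioo s b) := fun s =>
    (withDensity_apply u measurableSet_Ioo).symm
  simp only [hWrw]
  have hWanti : Antitone (fun s => ν (Ioo s b)) := fun s s' h =>
    measure_mono (Ioo_subset_Ioo h le_rfl)
  have hWmeas : Measurable (fun s => ν (Ioo s b)) := hWanti.measurable
  set Φ := ∫⁻ t in Ioo a b, (ν (Ioo t b)) ^ α * u t * V t ^ α with hΦ
  rcases eq_or_ne Φ ∞ with hΦtop | hΦtop
  · rw [hΦtop, ENNReal.top_rpow_of_pos (by linarith : (0:ℝ) < lam),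
      ENNReal.mul_top (ENNReal.rpow_pos two_pos ENNReal.ofNat_ne_top).ne']
    exact le_top
  have key : ∀ t ∈ Ioo a b,
      (ν (Ioo t b)) ^ (α + 1) * (V t) ^ α ≤ 2 ^ (α + 1) * Φ := by
    intro t ht
    have h1 := tail_rpow_le u hu hα0 b t
    calc (ν (Ioo t b)) ^ (α + 1) * (V t) ^ α
        ≤ (2 ^ (α + 1) * ∫⁻ s in Ioo t b, (ν (Ioo s b)) ^ α * u s) * (V t) ^ α := by
          gcongr
      _ = 2 ^ (α + 1) * ∫⁻ s in Ioo t b, (ν (Ioo s b)) ^ α * u s * (V t) ^ α := by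
          rw [mul_assoc, lintegral_mul_const (f := fun s => ν (Ioo s b) ^ α * u s) _ (hWmeas.pow_const α |>.mul hu)]
      _ ≤ 2 ^ (α + 1) * ∫⁻ s in Ioo t b, (ν (Ioo s b)) ^ α * u s * (V s) ^ α := by
          apply mul_le_mul_right
          apply setLIntegral_mono' measurableSet_Ioo
          intro s hs
          have : V t ≤ V s := hV ht ⟨ht.1.trans hs.1, hs.2⟩ hs.1.le
          exact mul_le_mul_right (ENNReal.rpow_le_rpow this hα0) _
      _ ≤ 2 ^ (α + 1) * Φ := by
          apply mul_le_mul_right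
          exact lintegral_mono_set (Ioo_subset_Ioo ht.1.le le_rfl)
  have pointwise : ∀ t ∈ Ioo a b,
      (ν (Ioo t b)) ^ (q / (p - q)) * u t * (V t) ^ (p * q / (p - q))
        ≤ (2 ^ (α + 1) * Φ) ^ (lam - 1) * ((ν (Ioo t b)) ^ α * u t * (V t) ^ α) := by
    intro t ht
    set w := ν (Ioo t b) with hw
    rw [e1, e2, ENNReal.rpow_add_of_nonneg _ _ hα0 hθ0,
      ENNReal.rpow_add_of_nonneg _ _ hα0 (mul_nonneg hα0 hlam1'.le)]
    have hfactor : w ^ ((α + 1) * (lam - 1)) * (V t) ^ (α * (lam - 1))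
        = (w ^ (α + 1) * (V t) ^ α) ^ (lam - 1) := by
      rw [ENNReal.mul_rpow_of_nonneg _ _ hlam1'.le, ← ENNReal.rpow_mul, ← ENNReal.rpow_mul]
    calc w ^ α * w ^ ((α + 1) * (lam - 1)) * u t * ((V t) ^ α * (V t) ^ (α * (lam - 1)))
        = (w ^ α * u t * (V t) ^ α) * (w ^ ((α + 1) * (lam - 1)) * (V t) ^ (α * (lam - 1))) := by
          ring
      _ = (w ^ α * u t * (V t) ^ α) * ((w ^ (α + 1) * (V t) ^ α) ^ (lam - 1)) := by
          rw [hfactor]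
      _ ≤ (w ^ α * u t * (V t) ^ α) * ((2 ^ (α + 1) * Φ) ^ (lam - 1)) := by
          exact mul_le_mul_right (ENNReal.rpow_le_rpow (key t ht) hlam1'.le) _
      _ = (2 ^ (α + 1) * Φ) ^ (lam - 1) * (w ^ α * u t * (V t) ^ α) := mul_comm _ _
  have hK : (2 ^ (α + 1) * Φ) ^ (lam - 1) ≠ ∞ :=
    ENNReal.rpow_ne_top_of_nonneg hlam1'.le
      (ENNReal.mul_ne_top
        (ENNReal.rpow_ne_top_of_nonneg (by positivity) ENNReal.ofNat_ne_top) hΦtop)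
  calc (∫⁻ t in Ioo a b,
        (ν (Ioo t b)) ^ (q / (p - q)) * u t * V t ^ (p * q / (p - q)))
      ≤ ∫⁻ t in Ioo a b,
          (2 ^ (α + 1) * Φ) ^ (lam - 1) * ((ν (Ioo t b)) ^ α * u t * (V t) ^ α) :=
        setLIntegral_mono' measurableSet_Ioo pointwise
    _ = (2 ^ (α + 1) * Φ) ^ (lam - 1) * Φ := lintegral_const_mul' _ _ hK
    _ = 2 ^ ((α + 1) * (lam - 1)) * (Φ ^ (lam - 1) * Φ) := by
        rw [ENNReal.mul_rpow_of_nonneg _ _ hlam1'.le, ← ENNReal.rpow_mul]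
        ring
    _ ≤ 2 ^ ((α + 1) * (lam - 1)) * Φ ^ lam := by
        apply mul_le_mul_right
        rcases eq_or_ne Φ 0 with h0 | h0
        · simp [h0]
        · calc Φ ^ (lam - 1) * Φ
              = Φ ^ (lam - 1 + 1) := by
                rw [ENNReal.rpow_add _ _ h0 hΦtop, ENNReal.rpow_one]
            _ ≤ Φ ^ lam := by norm_num

/-- Heinig–Stepanov-type comparison on an interval `(a,b)`: for `0 < q < p`, `q < 1` and
`(p−q)/(p(1−q)) < 1`, for any weight `u` and any non-negative non-decreasing `V`,
`∫_a^b (∫_t^b u)^{q/(p−q)} u(t) V(t)^{pq/(p−q)} dt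
  ≲ (∫_a^b (∫_t^b u)^{q/(1−q)} u(t) V(t)^{q/(1−q)} dt)^{p(1−q)/(p−q)}`,
with implicit constant depending only on `p, q`. -/
theorem stmt14 (p q : ℝ) (hq0 : 0 < q) (hqp : q < p) (hq1 : q < 1)
    (hcond : (p - q) / (p * (1 - q)) < 1) :
    ∃ C : ℝ≥0∞, 0 < C ∧ C ≠ ⊤ ∧
      ∀ (a b : ℝ) (_ : a < b) (u V : ℝ → ℝ≥0∞),
        Measurable u →
        (∀ᵐ t ∂(volume.restrict (Ioo a b)), 0 < u t ∧ u t ≠ ⊤) →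
        MonotoneOn V (Ioo a b) →
        (∫⁻ t in Ioo a b,
            (∫⁻ s in Ioo t b, u s) ^ (q / (p - q)) * u t * V t ^ (p * q / (p - q)))
          ≤ C * (∫⁻ t in Ioo a b,
              (∫⁻ s in Ioo t b, u s) ^ (q / (1 - q)) * u t
                * V t ^ (q / (1 - q))) ^ (p * (1 - q) / (p - q)) := by
  refine ⟨(2 : ℝ≥0∞) ^ ((q / (1 - q) + 1) * (p * (1 - q) / (p - q) - 1)),
    ENNReal.rpow_pos two_pos ENNReal.ofNat_ne_top, ?_, ?_⟩
  · have h1q : (0:ℝ) < 1 - q := by linarith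
    have hpq : (0:ℝ) < p - q := by linarith
    have hp : 0 < p := hq0.trans hqp
    have hlam1 : 1 < p * (1 - q) / (p - q) := by
      rw [lt_div_iff₀ hpq]
      have := (div_lt_one (by positivity : (0:ℝ) < p * (1 - q))).mp hcond
      linarith
    exact ENNReal.rpow_ne_top_of_nonneg
      (mul_nonneg (by positivity) (by linarith)) ENNReal.ofNat_ne_top
  · intro a b _ u V hu _ hV
    exact aux14 p q hq0 hqp hq1 hcond a b u V hu hV
end

section
/- For 0 < q < 1 and any x < y in [0,∞] and weight u on (x,y), ess sup_{t ∈ (x,y)} (∫_t^y u)^{1/q} V(t) ≤ C (∫_x^y (∫_s^y u)^{q/(1−q)} u(s) V(s)^{q/(1−q)} ds)^{(1−q)/q} for every non-negative non-decreasing function V on (x,y), where C depends only on q. -/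
open MeasureTheory Set
open scoped ENNReal

/-- The interval `(x,y) ⊆ (0,∞)` for extended-real endpoints, as a set of reals. -/
noncomputable def ooE (a b : ℝ≥0∞) : Set ℝ :=
  {t : ℝ | a < ENNReal.ofReal t ∧ ENNReal.ofReal t < b}

lemma ooE_measurableSet (a b : ℝ≥0∞) : MeasurableSet (ooE a b) := by
  have : ooE a b = ENNReal.ofReal ⁻¹' (Ioo a b) := rfl
  rw [this]
  exact ENNReal.measurable_ofReal measurableSet_Ioo

/-- Right continuity (from above) of `s ↦ ν (A ∩ Ioi s)`. -/
lemma right_cont (ν : Measure ℝ) (A : Set ℝ) (r : ℝ) (c : ℝ≥0∞)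
    (h : ∀ s, r < s → ν (A ∩ Ioi s) ≤ c) : ν (A ∩ Ioi r) ≤ c := by
  have hU : (⋃ n : ℕ, A ∩ Ioi (r + 1 / (n + 1))) = A ∩ Ioi r := by
    ext z
    simp only [mem_iUnion, mem_inter_iff, mem_Ioi]
    constructor
    · rintro ⟨n, hz, hz'⟩
      exact ⟨hz, lt_trans (lt_add_of_pos_right r (by positivity)) hz'⟩
    · rintro ⟨hz, hz'⟩
      obtain ⟨n, hn⟩ := exists_nat_one_div_lt (sub_pos.mpr hz')
      exact ⟨n, hz, by linarith⟩
  have hmono : Monotone (fun n : ℕ => A ∩ Ioi (r + 1 / (n + 1))) := by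
    intro m n hmn
    apply inter_subset_inter_right
    apply Ioi_subset_Ioi
    have : (1 : ℝ) / (n + 1) ≤ 1 / (m + 1) := by
      apply one_div_le_one_div_of_le (by positivity)
      exact_mod_cast Nat.add_le_add_right hmn 1
    linarith
  have := tendsto_measure_iUnion_atTop (μ := ν) hmono
  rw [hU] at this
  refine le_of_tendsto this (Filter.Eventually.of_forall fun n => ?_)
  exact h _ (lt_add_of_pos_right r (by positivity))

/-- The key lower bound `c^α (W(t) - c) ≤ ∫_{B∩(t,∞)} W^α u`. -/
lemma lower_bound (B : Set ℝ) (hB : MeasurableSet B) (u : ℝ → ℝ≥0∞) (hu : Measurable u)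
    (α : ℝ) (hα : 0 < α) (t : ℝ) (c : ℝ≥0∞)
    (hcW : c < ∫⁻ σ in B ∩ Ioi t, u σ) :
    c ^ α * ((∫⁻ σ in B ∩ Ioi t, u σ) - c)
      ≤ ∫⁻ s in B ∩ Ioi t, (∫⁻ σ in B ∩ Ioi s, u σ) ^ α * u s := by
  set W : ℝ → ℝ≥0∞ := fun s => ∫⁻ σ in B ∩ Ioi s, u σ with hWdef
  set ν : Measure ℝ := volume.withDensity u with hνdef
  have hWν : ∀ s, W s = ν (B ∩ Ioi s) := fun s => by
    rw [hνdef, withDensity_apply u (hB.inter measurableSet_Ioi)]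
  have hWanti : Antitone W := by
    intro a b hab
    exact lintegral_mono_set (inter_subset_inter_right _ (Ioi_subset_Ioi hab))
  by_cases hF : ∃ s, W s ≤ c
  · obtain ⟨s₀, hs₀⟩ := hF
    set F : Set ℝ := {s | W s ≤ c} with hFdef
    have hFsub : F ⊆ Ioi t := by
      intro s hs
      simp only [mem_Ioi]
      by_contra h
      push_neg at h
      exact absurd hcW (not_lt.mpr ((hWanti h).trans hs))
    have hbdd : BddBelow F := ⟨t, fun s hs => (hFsub hs).le⟩
    set m : ℝ := sInf F with hmdef
    have hmF : ∀ s, m < s → W s ≤ c := by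
      intro s hms
      obtain ⟨σ, hσF, hσs⟩ := (csInf_lt_iff hbdd ⟨s₀, hs₀⟩).mp hms
      exact le_trans (hWanti hσs.le) hσF
    have hWm : W m ≤ c := by
      rw [hWν]
      exact right_cont ν B m c (fun s hs => by rw [← hWν]; exact hmF s hs)
    have htm : t < m := by
      by_contra h
      push_neg at h
      exact absurd (hWanti h) (not_le.mpr (lt_of_le_of_lt hWm hcW))
    have hsplit : W t ≤ ν (B ∩ Ioo t m) + c := by
      have hsub : B ∩ Ioi t ⊆ (B ∩ Ioo t m) ∪ (B ∩ Ici m) := by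
        rw [← inter_union_distrib_left, Ioo_union_Ici_eq_Ioi htm]
      calc W t = ν (B ∩ Ioi t) := hWν t
        _ ≤ ν ((B ∩ Ioo t m) ∪ (B ∩ Ici m)) := measure_mono hsub
        _ ≤ ν (B ∩ Ioo t m) + ν (B ∩ Ici m) := measure_union_le _ _
        _ ≤ ν (B ∩ Ioo t m) + c := by
            gcongr
            have hsub2 : B ∩ Ici m ⊆ {m} ∪ (B ∩ Ioi m) := by
              intro z ⟨hz1, hz2⟩
              rcases eq_or_lt_of_le (mem_Ici.mp hz2) with h | h
              · exact Or.inl (by simp [← h])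
              · exact Or.inr ⟨hz1, h⟩
            calc ν (B ∩ Ici m) ≤ ν ({m} ∪ (B ∩ Ioi m)) := measure_mono hsub2
              _ ≤ ν {m} + ν (B ∩ Ioi m) := measure_union_le _ _
              _ ≤ 0 + c := by
                  gcongr
                  · exact le_of_eq
                      ((withDensity_absolutelyContinuous volume u) (measure_singleton m))
                  · rw [← hWν]; exact hWm
              _ = c := by rw [zero_add]
    have hE : W t - c ≤ ν (B ∩ Ioo t m) := tsub_le_iff_right.mpr hsplit
    calc c ^ α * (W t - c) ≤ c ^ α * ν (B ∩ Ioo t m) := by gcongr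
      _ = c ^ α * ∫⁻ s in B ∩ Ioo t m, u s := by
          rw [hνdef, withDensity_apply u (hB.inter measurableSet_Ioo)]
      _ = ∫⁻ s in B ∩ Ioo t m, c ^ α * u s := (lintegral_const_mul _ hu).symm
      _ ≤ ∫⁻ s in B ∩ Ioo t m, (W s) ^ α * u s := by
          apply setLIntegral_mono' (hB.inter measurableSet_Ioo)
          intro z hz
          gcongr
          have hzF : z ∉ F := fun h => absurd (csInf_le hbdd h) (not_le.mpr hz.2.2)
          exact (not_le.mp hzF).le
      _ ≤ ∫⁻ s in B ∩ Ioi t, (W s) ^ α * u s := by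
          apply lintegral_mono_set
          exact inter_subset_inter_right _ (fun z hz => hz.1)
  · push_neg at hF
    calc c ^ α * (W t - c) ≤ c ^ α * W t := by gcongr; exact tsub_le_self
      _ = c ^ α * ∫⁻ s in B ∩ Ioi t, u s := rfl
      _ = ∫⁻ s in B ∩ Ioi t, c ^ α * u s := (lintegral_const_mul _ hu).symm
      _ ≤ ∫⁻ s in B ∩ Ioi t, (W s) ^ α * u s := by
          apply setLIntegral_mono' (hB.inter measurableSet_Ioi)
          intro z _
          gcongr
          exact (hF z).le

/-- For `0 < q < 1`, any `x < y` in `[0,∞]`, a weight `u` on `(x,y)` and any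
non-negative non-decreasing `V`,
`ess sup_{t∈(x,y)} (∫_t^y u)^{1/q} V(t)
  ≤ C (∫_x^y (∫_s^y u)^{q/(1−q)} u(s) V(s)^{q/(1−q)} ds)^{(1−q)/q}`,
with `C` depending only on `q`. -/
theorem stmt15 (q : ℝ) (hq0 : 0 < q) (hq1 : q < 1) :
    ∃ C : ℝ≥0∞, 0 < C ∧ C ≠ ⊤ ∧
      ∀ (x y : ℝ≥0∞), x < y →
      ∀ (u V : ℝ → ℝ≥0∞), Measurable u →
        (∀ᵐ t ∂(volume.restrict (ooE x y)), 0 < u t ∧ u t ≠ ⊤) →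
        MonotoneOn V (ooE x y) →
        essSup (fun t => (∫⁻ s in ooE x y ∩ Ioi t, u s) ^ (1 / q) * V t)
            (volume.restrict (ooE x y))
          ≤ C * (∫⁻ s in ooE x y,
              (∫⁻ σ in ooE x y ∩ Ioi s, u σ) ^ (q / (1 - q)) * u s
                * V s ^ (q / (1 - q))) ^ ((1 - q) / q) := by
  have h1q : 0 < 1 - q := by linarith
  set α : ℝ := q / (1 - q) with hαdef
  set β : ℝ := (1 - q) / q with hβdef
  have hαpos : 0 < α := div_pos hq0 h1q
  have hβpos : 0 < β := div_pos h1q hq0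
  have hmul : α * β = 1 := by
    rw [hαdef, hβdef, div_mul_div_comm, mul_comm]
    exact div_self (by nlinarith)
  have hmul2 : (α + 1) * β = 1 / q := by
    rw [hαdef, hβdef]
    have h1qne : (1 : ℝ) - q ≠ 0 := by intro h; linarith
    field_simp
    ring
  refine ⟨(2 : ℝ≥0∞) ^ (1 / q),
    ENNReal.rpow_pos (by norm_num) ENNReal.ofNat_ne_top,
    ENNReal.rpow_ne_top_of_nonneg (by positivity) ENNReal.ofNat_ne_top, ?_⟩
  intro x y hxy u V hu hu' hV
  set B : Set ℝ := ooE x y with hBdef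
  have hBm : MeasurableSet B := ooE_measurableSet x y
  set W : ℝ → ℝ≥0∞ := fun s => ∫⁻ σ in B ∩ Ioi s, u σ with hWdef
  have hWanti : Antitone W := by
    intro a b hab
    exact lintegral_mono_set (inter_subset_inter_right _ (Ioi_subset_Ioi hab))
  have hWmeas : Measurable W := hWanti.measurable
  have hfmeas : Measurable fun s => W s ^ α * u s := (hWmeas.pow measurable_const).mul hu
  set I : ℝ≥0∞ := ∫⁻ s in B, W s ^ α * u s * V s ^ α with hIdef
  -- pointwise bound
  have key : ∀ t ∈ B, W t ^ (1 / q) * V t ≤ (2 : ℝ≥0∞) ^ (1 / q) * I ^ β := by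
    intro t ht
    rcases eq_or_ne (W t) 0 with hT0 | hT0
    · rw [hT0, ENNReal.zero_rpow_of_pos (by positivity), zero_mul]
      exact zero_le
    rcases eq_or_ne (V t) 0 with hV0 | hV0
    · rw [hV0, mul_zero]
      exact zero_le
    have hJle : (∫⁻ s in B ∩ Ioi t, W s ^ α * u s) * V t ^ α ≤ I := by
      calc (∫⁻ s in B ∩ Ioi t, W s ^ α * u s) * V t ^ α
          = ∫⁻ s in B ∩ Ioi t, W s ^ α * u s * V t ^ α :=
            (lintegral_mul_const _ hfmeas).symm
        _ ≤ ∫⁻ s in B ∩ Ioi t, W s ^ α * u s * V s ^ α := by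
            apply setLIntegral_mono' (hBm.inter measurableSet_Ioi)
            intro z hz
            gcongr
            exact hV ht hz.1 hz.2.le
        _ ≤ I := lintegral_mono_set inter_subset_left
    rcases eq_or_ne (W t) ⊤ with hTtop | hTtop
    · -- infinite case
      have h1 : (1 : ℝ≥0∞) < W t := by rw [hTtop]; exact ENNReal.one_lt_top
      have hlow := lower_bound B hBm u hu α hαpos t 1 h1
      have hJ : (∫⁻ s in B ∩ Ioi t, W s ^ α * u s) = ⊤ := by
        refine top_le_iff.mp ?_
        calc (⊤ : ℝ≥0∞) = 1 ^ α * (W t - 1) := by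
              rw [ENNReal.one_rpow, one_mul, hTtop]
              simp
          _ ≤ _ := hlow
      have hVα : V t ^ α ≠ 0 := by
        simp only [ne_eq, ENNReal.rpow_eq_zero_iff, not_or]
        exact ⟨fun h => hV0 h.1, fun h => absurd h.2 (not_lt.mpr hαpos.le)⟩
      have hI : I = ⊤ := by
        refine top_le_iff.mp ?_
        calc (⊤ : ℝ≥0∞) = ⊤ * V t ^ α := (ENNReal.top_mul hVα).symm
          _ = (∫⁻ s in B ∩ Ioi t, W s ^ α * u s) * V t ^ α := by rw [hJ]
          _ ≤ I := hJle
      rw [hI, ENNReal.top_rpow_of_pos hβpos, ENNReal.mul_top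
        (by simp [ENNReal.rpow_eq_zero_iff])]
      exact le_top
    · -- finite case
      have h2 : W t / 2 < W t := ENNReal.half_lt_self hT0 hTtop
      have hlow := lower_bound B hBm u hu α hαpos t (W t / 2) h2
      rw [ENNReal.sub_half hTtop] at hlow
      have h2ne0 : W t / 2 ≠ 0 := (ENNReal.div_pos hT0 ENNReal.ofNat_ne_top).ne'
      have h2netop : W t / 2 ≠ ⊤ := (h2.trans (lt_top_iff_ne_top.mpr hTtop)).ne
      have hI1 : (W t / 2) ^ α * (W t / 2) * V t ^ α ≤ I :=
        le_trans (mul_le_mul_left hlow _) hJle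
      have hcomb : (W t / 2) ^ α * (W t / 2) = (W t / 2) ^ (α + 1) := by
        rw [ENNReal.rpow_add _ _ h2ne0 h2netop, ENNReal.rpow_one]
      have keyfin : (W t / 2) ^ (1 / q) * V t ≤ I ^ β := by
        calc (W t / 2) ^ (1 / q) * V t
            = ((W t / 2) ^ α * (W t / 2) * V t ^ α) ^ β := by
              rw [hcomb, ENNReal.mul_rpow_of_nonneg _ _ hβpos.le,
                ← ENNReal.rpow_mul, ← ENNReal.rpow_mul, hmul2, hmul, ENNReal.rpow_one]
          _ ≤ I ^ β := ENNReal.rpow_le_rpow hI1 hβpos.le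
      have hfin : W t ^ (1 / q) = (2 : ℝ≥0∞) ^ (1 / q) * (W t / 2) ^ (1 / q) := by
        rw [← ENNReal.mul_rpow_of_nonneg _ _ (by positivity),
          ENNReal.mul_div_cancel two_ne_zero ENNReal.ofNat_ne_top]
      calc W t ^ (1 / q) * V t
          = (2 : ℝ≥0∞) ^ (1 / q) * ((W t / 2) ^ (1 / q) * V t) := by rw [hfin]; ring
        _ ≤ (2 : ℝ≥0∞) ^ (1 / q) * I ^ β := mul_le_mul_right keyfin _
  exact essSup_le_of_ae_le _ (ae_restrict_of_forall_mem hBm key)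
end
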